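/- arXiv:1304.0237 — 9 statements merged into one kernel-verified Lean document; each statement's English description precedes it below -/
import Mathlib

section
/- The Macaulay operator is strictly monotone: if b and c are positive integers with b < c, and m is a positive integer, then b^{<m>} < c^{<m>}. -/
/-- `MacaulayRep m c J k` says that `c = C(k m, m) + C(k (m-1), m-1) + ⋯ + C(k J, J)`
is the `m`-th Macaulay representation of `c` (top entries `k m > ⋯ > k J ≥ J > 0`). -/
def MacaulayRep (m c J : ℕ) (k : ℕ → ℕ) : Prop :=
  0 < J ∧ J ≤ m ∧ StrictMonoOn k (Set.Icc J m) ∧ J ≤ k J ∧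
    c = ∑ j ∈ Finset.Icc J m, (k j).choose j

private lemma mac_le_k {J m : ℕ} {k : ℕ → ℕ}
    (hmono : StrictMonoOn k (Set.Icc J m)) (hkJ : J ≤ k J) :
    ∀ j, J ≤ j → j ≤ m → j ≤ k j := by
  intro j
  induction j with
  | zero => intro _ _; exact Nat.zero_le _
  | succ j ih =>
    intro hJj hjm
    rcases Nat.lt_or_ge j J with h | h
    · have : J = j + 1 := by omega
      subst this; exact hkJ
    · have hlt : k j < k (j + 1) :=
        hmono ⟨h, by omega⟩ ⟨by omega, hjm⟩ (Nat.lt_succ_self j)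
      have := ih h (by omega)
      omega

/-- A Macaulay-type sum is bounded by `C(k m + 1, m)`. -/
private lemma mac_sum_lt {J m : ℕ} {k : ℕ → ℕ} (hJ : 0 < J) (hJm : J ≤ m)
    (hmono : StrictMonoOn k (Set.Icc J m)) (hkJ : J ≤ k J) :
    ∑ j ∈ Finset.Icc J m, (k j).choose j < (k m + 1).choose m := by
  induction m with
  | zero => omega
  | succ n ih =>
    have hkm : n + 1 ≤ k (n + 1) := mac_le_k hmono hkJ (n+1) hJm le_rfl
    rcases Nat.eq_or_lt_of_le hJm with hJeq | hJlt
    · subst hJeq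
      rw [Finset.Icc_self, Finset.sum_singleton]
      have hid : (k (n+1) + 1).choose (n+1) = (k (n+1)).choose n + (k (n+1)).choose (n+1) := by
        rw [Nat.choose_succ_succ]
      have : 0 < (k (n+1)).choose n := Nat.choose_pos (by omega)
      omega
    · have hJn : J ≤ n := by omega
      have hmono' : StrictMonoOn k (Set.Icc J n) :=
        hmono.mono (Set.Icc_subset_Icc le_rfl (by omega))
      have htail := ih hJn hmono'
      rw [Finset.sum_Icc_succ_top (by omega : J ≤ n + 1)]
      have h1 : k n + 1 ≤ k (n + 1) := by
        have := hmono ⟨hJn, by omega⟩ ⟨by omega, le_rfl⟩ (Nat.lt_succ_self n)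
        omega
      have h2 : (k n + 1).choose n ≤ (k (n+1)).choose n :=
        Nat.choose_le_choose n h1
      have hid : (k (n+1) + 1).choose (n+1) = (k (n+1)).choose n + (k (n+1)).choose (n+1) := by
        rw [Nat.choose_succ_succ]
      omega

/-- The shifted Macaulay-type sum is bounded by `C(k m + 2, m + 1)`. -/
private lemma mac_shift_sum_lt {J m : ℕ} {k : ℕ → ℕ} (hJ : 0 < J) (hJm : J ≤ m)
    (hmono : StrictMonoOn k (Set.Icc J m)) (hkJ : J ≤ k J) :
    ∑ j ∈ Finset.Icc J m, (k j + 1).choose (j + 1) < (k m + 2).choose (m + 1) := by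
  induction m with
  | zero => omega
  | succ n ih =>
    have hkm : n + 1 ≤ k (n + 1) := mac_le_k hmono hkJ (n+1) hJm le_rfl
    rcases Nat.eq_or_lt_of_le hJm with hJeq | hJlt
    · subst hJeq
      rw [Finset.Icc_self, Finset.sum_singleton]
      have hid : (k (n+1) + 2).choose (n+1+1) = (k (n+1) + 1).choose (n+1) + (k (n+1) + 1).choose (n+1+1) := by
        rw [Nat.choose_succ_succ]
      have : 0 < (k (n+1) + 1).choose (n+1) := Nat.choose_pos (by omega)
      omega
    · have hJn : J ≤ n := by omega
      have hmono' : StrictMonoOn k (Set.Icc J n) :=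
        hmono.mono (Set.Icc_subset_Icc le_rfl (by omega))
      have htail := ih hJn hmono'
      rw [Finset.sum_Icc_succ_top (by omega : J ≤ n + 1)]
      have h1 : k n + 2 ≤ k (n + 1) + 1 := by
        have := hmono ⟨hJn, by omega⟩ ⟨by omega, le_rfl⟩ (Nat.lt_succ_self n)
        omega
      have h2 : (k n + 2).choose (n + 1) ≤ (k (n+1) + 1).choose (n + 1) :=
        Nat.choose_le_choose (n + 1) h1
      have hid : (k (n+1) + 2).choose (n+1+1) = (k (n+1) + 1).choose (n+1) + (k (n+1) + 1).choose (n+1+1) := by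
        rw [Nat.choose_succ_succ]
      omega

private lemma mac_main : ∀ m b c Jb Jc : ℕ, ∀ kb kc : ℕ → ℕ,
    MacaulayRep m b Jb kb → MacaulayRep m c Jc kc → b < c →
    ∑ j ∈ Finset.Icc Jb m, (kb j + 1).choose (j + 1) <
      ∑ j ∈ Finset.Icc Jc m, (kc j + 1).choose (j + 1) := by
  intro m
  induction m with
  | zero =>
    intro b c Jb Jc kb kc hrb _ _
    obtain ⟨h1, h2, _⟩ := hrb; omega
  | succ n ih =>
    intro b c Jb Jc kb kc hrb hrc hbc
    obtain ⟨hJb0, hJbm, hmb, hkb, hbeq⟩ := hrb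
    obtain ⟨hJc0, hJcm, hmc, hkc, hceq⟩ := hrc
    have hkbm : n + 1 ≤ kb (n + 1) := mac_le_k hmb hkb (n+1) hJbm le_rfl
    have hkcm : n + 1 ≤ kc (n + 1) := mac_le_k hmc hkc (n+1) hJcm le_rfl
    rcases lt_trichotomy (kb (n+1)) (kc (n+1)) with h | h | h
    · -- top of b smaller: bound whole shifted b sum by c's top shifted term
      have hb1 : ∑ j ∈ Finset.Icc Jb (n+1), (kb j + 1).choose (j + 1) <
          (kb (n+1) + 2).choose (n + 2) := mac_shift_sum_lt hJb0 hJbm hmb hkb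
      have hb2 : (kb (n+1) + 2).choose (n + 2) ≤ (kc (n+1) + 1).choose (n + 2) :=
        Nat.choose_le_choose _ (by omega)
      have hc1 : (kc (n+1) + 1).choose (n + 2) ≤
          ∑ j ∈ Finset.Icc Jc (n+1), (kc j + 1).choose (j + 1) :=
        Finset.single_le_sum (f := fun j => (kc j + 1).choose (j + 1)) (fun i _ => Nat.zero_le _)
          (Finset.mem_Icc.mpr ⟨hJcm, le_rfl⟩)
      omega
    · -- equal tops
      rcases Nat.eq_or_lt_of_le hJbm with hJbeq | hJblt
      · rcases Nat.eq_or_lt_of_le hJcm with hJceq | hJclt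
        · -- both singletons: b = c, contradiction
          exfalso
          rw [hJbeq, Finset.Icc_self, Finset.sum_singleton] at hbeq
          rw [hJceq, Finset.Icc_self, Finset.sum_singleton] at hceq
          rw [hbeq, hceq, h] at hbc
          exact lt_irrefl _ hbc
        · -- b singleton, c has a tail: shifted c exceeds shifted b
          have hJcn : Jc ≤ n := by omega
          rw [hJbeq, Finset.Icc_self, Finset.sum_singleton]
          rw [Finset.sum_Icc_succ_top (by omega : Jc ≤ n + 1)]
          have hpos : 0 < (kc Jc + 1).choose (Jc + 1) := Nat.choose_pos (by omega)
          have htail : (kc Jc + 1).choose (Jc + 1) ≤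
              ∑ j ∈ Finset.Icc Jc n, (kc j + 1).choose (j + 1) :=
            Finset.single_le_sum (f := fun j => (kc j + 1).choose (j + 1)) (fun i _ => Nat.zero_le _)
              (Finset.mem_Icc.mpr ⟨le_rfl, hJcn⟩)
          rw [h]
          omega
      · rcases Nat.eq_or_lt_of_le hJcm with hJceq | hJclt
        · -- c singleton, b has a tail: b > c, contradiction
          exfalso
          have hJbn : Jb ≤ n := by omega
          rw [Finset.sum_Icc_succ_top (by omega : Jb ≤ n + 1)] at hbeq
          rw [hJceq, Finset.Icc_self, Finset.sum_singleton] at hceq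
          have hpos : 0 < (kb Jb).choose Jb := Nat.choose_pos hkb
          have htail : (kb Jb).choose Jb ≤
              ∑ j ∈ Finset.Icc Jb n, (kb j).choose j :=
            Finset.single_le_sum (f := fun j => (kb j).choose j) (fun i _ => Nat.zero_le _)
              (Finset.mem_Icc.mpr ⟨le_rfl, hJbn⟩)
          rw [h] at hbeq
          omega
        · -- both have tails: peel off equal top terms, apply IH
          have hJbn : Jb ≤ n := by omega
          have hJcn : Jc ≤ n := by omega
          rw [Finset.sum_Icc_succ_top (by omega : Jb ≤ n + 1)] at hbeq
          rw [Finset.sum_Icc_succ_top (by omega : Jc ≤ n + 1)] at hceq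
          have hlt : ∑ j ∈ Finset.Icc Jb n, (kb j).choose j <
              ∑ j ∈ Finset.Icc Jc n, (kc j).choose j := by
            rw [h] at hbeq; omega
          have hrb' : MacaulayRep n (∑ j ∈ Finset.Icc Jb n, (kb j).choose j) Jb kb :=
            ⟨hJb0, hJbn, hmb.mono (Set.Icc_subset_Icc le_rfl (by omega)), hkb, rfl⟩
          have hrc' : MacaulayRep n (∑ j ∈ Finset.Icc Jc n, (kc j).choose j) Jc kc :=
            ⟨hJc0, hJcn, hmc.mono (Set.Icc_subset_Icc le_rfl (by omega)), hkc, rfl⟩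
          have := ih _ _ _ _ _ _ hrb' hrc' hlt
          rw [Finset.sum_Icc_succ_top (by omega : Jb ≤ n + 1),
            Finset.sum_Icc_succ_top (by omega : Jc ≤ n + 1), h]
          omega
    · -- top of b bigger: b ≥ C(kb m, m) > c, contradiction
      exfalso
      have hc1 : c < (kc (n+1) + 1).choose (n + 1) := by
        rw [hceq]; exact mac_sum_lt hJc0 hJcm hmc hkc
      have hc2 : (kc (n+1) + 1).choose (n + 1) ≤ (kb (n+1)).choose (n + 1) :=
        Nat.choose_le_choose _ (by omega)
      have hb1 : (kb (n+1)).choose (n + 1) ≤ b := by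
        rw [hbeq]
        exact Finset.single_le_sum (f := fun j => (kb j).choose j) (fun i _ => Nat.zero_le _)
          (Finset.mem_Icc.mpr ⟨hJbm, le_rfl⟩)
      omega

/-- The Macaulay operator `c ↦ c^{<m>}` is strictly monotone: if `b < c` then
`b^{<m>} < c^{<m>}`, where `c^{<m>} = ∑_j C(k_j + 1, j + 1)` is computed from the
`m`-th Macaulay representation of `c`. -/
theorem macaulay_op_strictMono (m b c : ℕ) (hb : 0 < b) (hm : 0 < m)
    (Jb Jc : ℕ) (kb kc : ℕ → ℕ)
    (hrepb : MacaulayRep m b Jb kb) (hrepc : MacaulayRep m c Jc kc)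
    (hbc : b < c) :
    ∑ j ∈ Finset.Icc Jb m, (kb j + 1).choose (j + 1) <
      ∑ j ∈ Finset.Icc Jc m, (kc j + 1).choose (j + 1) := by
  exact mac_main m b c Jb Jc kb kc hrepb hrepc hbc
end

section
/- For positive integers c, m and any natural number k with k < c, the inequality (c-k)^{<m>} ≤ c^{<m>} - k holds. -/
open Finset

lemma rep_le_k {m c J : ℕ} {k : ℕ → ℕ} (h : MacaulayRep m c J k) :
    ∀ j, J ≤ j → j ≤ m → j ≤ k j := by
  obtain ⟨hJ, hJm, hmono, hkJ, -⟩ := h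
  intro j hJj
  induction j, hJj using Nat.le_induction with
  | base => intro _; exact hkJ
  | succ j hj ih =>
    intro hjm
    have h1 : j ≤ k j := ih (by omega)
    have h2 : k j < k (j + 1) :=
      hmono (Set.mem_Icc.2 ⟨hj, by omega⟩) (Set.mem_Icc.2 ⟨by omega, hjm⟩) (by omega)
    omega

lemma rep_restrict {m c J : ℕ} {k : ℕ → ℕ} (h : MacaulayRep (m + 1) c J k) (hJ : J ≤ m) :
    MacaulayRep m (∑ j ∈ Finset.Icc J m, (k j).choose j) J k := by
  obtain ⟨h0, -, hmono, hkJ, -⟩ := h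
  exact ⟨h0, hJ, hmono.mono (Set.Icc_subset_Icc le_rfl (by omega)), hkJ, rfl⟩

lemma rep_sum_lt (d : ℕ) (hd : d ≤ 1) :
    ∀ m c J (k : ℕ → ℕ), MacaulayRep m c J k →
      ∑ j ∈ Finset.Icc J m, (k j).choose (j + d) < (k m + 1).choose (m + d) := by
  intro m
  induction m with
  | zero =>
    intro c J k h
    exact absurd h.2.1 (by have := h.1; omega)
  | succ n ih =>
    intro c J k h
    have hkm : n + 1 ≤ k (n + 1) := rep_le_k h (n + 1) h.2.1 le_rfl
    have hsplit : ∑ j ∈ Finset.Icc J (n + 1), (k j).choose (j + d)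
        = (∑ j ∈ Finset.Icc J n, (k j).choose (j + d)) + (k (n + 1)).choose (n + 1 + d) := by
      rw [Finset.sum_Icc_succ_top h.2.1]
    have hpascal : (k (n + 1) + 1).choose (n + 1 + d)
        = (k (n + 1)).choose (n + d) + (k (n + 1)).choose (n + 1 + d) := by
      have := Nat.choose_succ_succ' (k (n + 1)) (n + d)
      simpa [Nat.add_assoc, Nat.add_comm, Nat.add_left_comm] using this
    rcases Nat.lt_or_ge n J with hnJ | hnJ
    · -- J = n + 1
      have hIcc : Finset.Icc J n = ∅ := by
        rw [Finset.Icc_eq_empty]; omega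
      have hpos : 0 < (k (n + 1)).choose (n + d) :=
        Nat.choose_pos (by omega)
      rw [hsplit, hIcc]
      simp only [Finset.sum_empty, Nat.zero_add]
      omega
    · have hrep' := rep_restrict h hnJ
      have h1 := ih _ J k hrep'
      have hmono := h.2.2.1
      have h2 : k n + 1 ≤ k (n + 1) := by
        have := hmono (Set.mem_Icc.2 ⟨hnJ, by omega⟩) (Set.mem_Icc.2 ⟨by omega, le_rfl⟩) (by omega)
        omega
      have h3 : (k n + 1).choose (n + d) ≤ (k (n + 1)).choose (n + d) :=
        Nat.choose_le_choose _ h2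
      omega

lemma g_mono :
    ∀ m c₁ c₂ J₁ J₂ (k₁ k₂ : ℕ → ℕ), MacaulayRep m c₁ J₁ k₁ → MacaulayRep m c₂ J₂ k₂ →
      c₁ ≤ c₂ →
      ∑ j ∈ Finset.Icc J₁ m, (k₁ j).choose (j + 1) ≤
        ∑ j ∈ Finset.Icc J₂ m, (k₂ j).choose (j + 1) := by
  intro m
  induction m with
  | zero =>
    intro c₁ c₂ J₁ J₂ k₁ k₂ h₁ h₂ _
    exact absurd h₁.2.1 (by have := h₁.1; omega)
  | succ n ih =>
    intro c₁ c₂ J₁ J₂ k₁ k₂ h₁ h₂ hle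
    have hk₁ : n + 1 ≤ k₁ (n + 1) := rep_le_k h₁ (n + 1) h₁.2.1 le_rfl
    have hk₂ : n + 1 ≤ k₂ (n + 1) := rep_le_k h₂ (n + 1) h₂.2.1 le_rfl
    rcases lt_trichotomy (k₁ (n + 1)) (k₂ (n + 1)) with hlt | heq | hgt
    · have hA : ∑ j ∈ Finset.Icc J₁ (n + 1), (k₁ j).choose (j + 1)
          < (k₁ (n + 1) + 1).choose (n + 1 + 1) :=
        rep_sum_lt 1 le_rfl (n + 1) c₁ J₁ k₁ h₁
      have hB : (k₁ (n + 1) + 1).choose (n + 1 + 1) ≤ (k₂ (n + 1)).choose (n + 1 + 1) :=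
        Nat.choose_le_choose _ (by omega)
      have hC : (k₂ (n + 1)).choose (n + 1 + 1)
          ≤ ∑ j ∈ Finset.Icc J₂ (n + 1), (k₂ j).choose (j + 1) :=
        Finset.single_le_sum (f := fun j => (k₂ j).choose (j + 1))
          (fun i _ => Nat.zero_le _) (Finset.mem_Icc.2 ⟨h₂.2.1, le_rfl⟩)
      omega
    · -- equal top entries
      rcases Nat.lt_or_ge n J₁ with hJ₁ | hJ₁
      · have hJ₁e : J₁ = n + 1 := le_antisymm h₁.2.1 hJ₁
        have hL : ∑ j ∈ Finset.Icc J₁ (n + 1), (k₁ j).choose (j + 1)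
            = (k₁ (n + 1)).choose (n + 1 + 1) := by
          rw [hJ₁e, Finset.Icc_self, Finset.sum_singleton]
        have hC : (k₂ (n + 1)).choose (n + 1 + 1)
            ≤ ∑ j ∈ Finset.Icc J₂ (n + 1), (k₂ j).choose (j + 1) :=
          Finset.single_le_sum (f := fun j => (k₂ j).choose (j + 1))
            (fun i _ => Nat.zero_le _) (Finset.mem_Icc.2 ⟨h₂.2.1, le_rfl⟩)
        rw [hL, heq]; exact hC
      rcases Nat.lt_or_ge n J₂ with hJ₂ | hJ₂
      · -- J₂ = n+1, J₁ ≤ n : contradiction with c₁ ≤ c₂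
        exfalso
        have hJ₂e : J₂ = n + 1 := le_antisymm h₂.2.1 hJ₂
        have hc₂ : c₂ = (k₂ (n + 1)).choose (n + 1) := by
          rw [h₂.2.2.2.2, hJ₂e, Finset.Icc_self, Finset.sum_singleton]
        have hc₁ : c₁ = (∑ j ∈ Finset.Icc J₁ n, (k₁ j).choose j)
            + (k₁ (n + 1)).choose (n + 1) := by
          rw [h₁.2.2.2.2, Finset.sum_Icc_succ_top h₁.2.1]
        have hpos : 0 < ∑ j ∈ Finset.Icc J₁ n, (k₁ j).choose j := by
          have hmem : J₁ ∈ Finset.Icc J₁ n := Finset.mem_Icc.2 ⟨le_rfl, hJ₁⟩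
          have h0 : 0 < (k₁ J₁).choose J₁ := Nat.choose_pos h₁.2.2.2.1
          exact lt_of_lt_of_le h0 (Finset.single_le_sum (f := fun j => (k₁ j).choose j)
            (fun i _ => Nat.zero_le _) hmem)
        rw [heq] at hc₁
        omega
      · -- both continue below
        have hr₁ := rep_restrict h₁ hJ₁
        have hr₂ := rep_restrict h₂ hJ₂
        have hc₁ : c₁ = (∑ j ∈ Finset.Icc J₁ n, (k₁ j).choose j)
            + (k₁ (n + 1)).choose (n + 1) := by
          rw [h₁.2.2.2.2, Finset.sum_Icc_succ_top h₁.2.1]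
        have hc₂ : c₂ = (∑ j ∈ Finset.Icc J₂ n, (k₂ j).choose j)
            + (k₂ (n + 1)).choose (n + 1) := by
          rw [h₂.2.2.2.2, Finset.sum_Icc_succ_top h₂.2.1]
        have hle' : (∑ j ∈ Finset.Icc J₁ n, (k₁ j).choose j)
            ≤ ∑ j ∈ Finset.Icc J₂ n, (k₂ j).choose j := by
          rw [heq] at hc₁; omega
        have hih := ih _ _ J₁ J₂ k₁ k₂ hr₁ hr₂ hle'
        rw [Finset.sum_Icc_succ_top h₁.2.1 (fun j => (k₁ j).choose (j + 1)),
          Finset.sum_Icc_succ_top h₂.2.1 (fun j => (k₂ j).choose (j + 1)), heq]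
        omega
    · exfalso
      have hA : c₂ < (k₂ (n + 1) + 1).choose (n + 1) := by
        have := rep_sum_lt 0 (by omega) (n + 1) c₂ J₂ k₂ h₂
        simpa [h₂.2.2.2.2] using this
      have hB : (k₂ (n + 1) + 1).choose (n + 1) ≤ (k₁ (n + 1)).choose (n + 1) :=
        Nat.choose_le_choose _ (by omega)
      have hC : (k₁ (n + 1)).choose (n + 1) ≤ c₁ := by
        rw [h₁.2.2.2.2]
        exact Finset.single_le_sum (f := fun j => (k₁ j).choose j)
          (fun i _ => Nat.zero_le _) (Finset.mem_Icc.2 ⟨h₁.2.1, le_rfl⟩)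
      omega

lemma val_eq {m c J : ℕ} {k : ℕ → ℕ} (h : MacaulayRep m c J k) :
    ∑ j ∈ Finset.Icc J m, (k j + 1).choose (j + 1)
      = c + ∑ j ∈ Finset.Icc J m, (k j).choose (j + 1) := by
  rw [h.2.2.2.2, ← Finset.sum_add_distrib]
  exact Finset.sum_congr rfl fun j _ => by
    rw [Nat.choose_succ_succ' (k j) j]

/-- For positive integers `c`, `m` and any `k < c`, one has `(c-k)^{<m>} ≤ c^{<m>} - k`,
where `x^{<m>} = ∑_j C(k_j + 1, j + 1)` is computed from the `m`-th Macaulay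
representation of `x`. -/
theorem macaulay_op_sub_le (m c k : ℕ) (hc : 0 < c) (hm : 0 < m) (hk : k < c)
    (Jc J' : ℕ) (kc k' : ℕ → ℕ)
    (hrepc : MacaulayRep m c Jc kc) (hrep' : MacaulayRep m (c - k) J' k') :
    ∑ j ∈ Finset.Icc J' m, (k' j + 1).choose (j + 1) ≤
      (∑ j ∈ Finset.Icc Jc m, (kc j + 1).choose (j + 1)) - k := by
  have h1 := val_eq hrep'
  have h2 := val_eq hrepc
  have h3 := g_mono m (c - k) c J' Jc k' kc hrep' hrepc (by omega)
  omega
end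

section
/- Let f: ℂ^n → ℂ^P and g: ℂ^n → ℂ^N be polynomial maps and h: ℂ^n → ℂ^K a polynomial map such that ‖f(z)‖² = ‖g(z)‖² + ‖h(z)‖² for all z ∈ ℂ^n. Then each component of g lies in the complex linear span of the components of f. -/
open MvPolynomial Complex

/-- A complex mv-polynomial vanishing at all real points is zero. -/
theorem mv_eq_zero_of_real_eval {σ : Type*} (Q : MvPolynomial σ ℂ)
    (hQ : ∀ x : σ → ℝ, eval (fun i => (x i : ℂ)) Q = 0) : Q = 0 := by
  classical
  set Q1 : MvPolynomial σ ℝ := ∑ α ∈ Q.support, monomial α (Q.coeff α).re with hQ1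
  set Q2 : MvPolynomial σ ℝ := ∑ α ∈ Q.support, monomial α (Q.coeff α).im with hQ2
  have c1 : ∀ α, Q1.coeff α = (Q.coeff α).re := by
    intro α
    rw [hQ1, MvPolynomial.coeff_sum]
    simp only [coeff_monomial]
    rw [Finset.sum_ite_eq' Q.support α]
    split_ifs with h
    · rfl
    · rw [MvPolynomial.notMem_support_iff.mp h]; simp
  have c2 : ∀ α, Q2.coeff α = (Q.coeff α).im := by
    intro α
    rw [hQ2, MvPolynomial.coeff_sum]
    simp only [coeff_monomial]
    rw [Finset.sum_ite_eq' Q.support α]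
    split_ifs with h
    · rfl
    · rw [MvPolynomial.notMem_support_iff.mp h]; simp
  have key : ∀ x : σ → ℝ, ((eval x Q1 : ℝ) : ℂ) + Complex.I * (eval x Q2 : ℝ) = 0 := by
    intro x
    have h1 : (eval x Q1 : ℝ) = ∑ α ∈ Q.support, (Q.coeff α).re * ∏ i ∈ α.support, x i ^ α i := by
      rw [hQ1, map_sum]; simp [eval_monomial, Finsupp.prod]
    have h2 : (eval x Q2 : ℝ) = ∑ α ∈ Q.support, (Q.coeff α).im * ∏ i ∈ α.support, x i ^ α i := by
      rw [hQ2, map_sum]; simp [eval_monomial, Finsupp.prod]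
    have h0 := hQ x
    rw [eval_eq] at h0
    rw [h1, h2]
    push_cast
    rw [Finset.mul_sum, ← Finset.sum_add_distrib, ← h0]
    refine Finset.sum_congr rfl fun α hα => ?_
    linear_combination (∏ i ∈ α.support, (x i : ℂ) ^ α i) * (Complex.re_add_im (Q.coeff α))
  have h1z : Q1 = 0 := by
    apply MvPolynomial.funext; intro x
    rw [map_zero]
    have hre := congrArg Complex.re (key x)
    simpa using hre
  have h2z : Q2 = 0 := by
    apply MvPolynomial.funext; intro x
    rw [map_zero]
    have him := congrArg Complex.im (key x)
    simpa using him
  ext α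
  rw [MvPolynomial.coeff_zero]
  apply Complex.ext
  · rw [← c1 α, h1z]; simp
  · rw [← c2 α, h2z]; simp

/-- A complex polynomial in doubled variables vanishing on the "conjugate diagonal" is zero. -/
theorem mv_eq_zero_of_conj_diag {σ : Type*} (Q : MvPolynomial (σ ⊕ σ) ℂ)
    (hQ : ∀ z : σ → ℂ, eval (Sum.elim z (fun i => starRingEnd ℂ (z i))) Q = 0) : Q = 0 := by
  classical
  set Asub : σ ⊕ σ → MvPolynomial (σ ⊕ σ) ℂ :=
    Sum.elim (fun i => X (Sum.inl i) + C Complex.I * X (Sum.inr i))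
             (fun i => X (Sum.inl i) - C Complex.I * X (Sum.inr i)) with hA
  set Bsub : σ ⊕ σ → MvPolynomial (σ ⊕ σ) ℂ :=
    Sum.elim (fun i => C (1/2) * (X (Sum.inl i) + X (Sum.inr i)))
             (fun i => C (-(Complex.I/2)) * (X (Sum.inl i) - X (Sum.inr i))) with hB
  have hAQ : bind₁ Asub Q = 0 := by
    apply mv_eq_zero_of_real_eval
    intro x
    have : eval (fun v => ((x v : ℂ))) ((bind₁ Asub) Q)
        = eval (fun v => eval (fun w => ((x w : ℂ))) (Asub v)) Q := by
      exact eval₂Hom_bind₁ _ _ _ _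
    rw [this]
    have hz := hQ (fun i => (x (Sum.inl i) : ℂ) + Complex.I * (x (Sum.inr i) : ℂ))
    have hpt : (fun v => eval (fun w => ((x w : ℂ))) (Asub v))
        = Sum.elim (fun i => (x (Sum.inl i) : ℂ) + Complex.I * (x (Sum.inr i) : ℂ))
          (fun i => starRingEnd ℂ ((x (Sum.inl i) : ℂ) + Complex.I * (x (Sum.inr i) : ℂ))) := by
      funext v
      cases v with
    | inl i => simp [hA]
    | inr i =>
      simp only [hA, Sum.elim_inr, map_sub, eval_X, Sum.elim_inl, map_add, map_mul, eval_C]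
      simp [Complex.conj_ofReal, Complex.conj_I]
      ring
    rw [hpt]
    exact hz
  have hI : (C Complex.I : MvPolynomial (σ ⊕ σ) ℂ) * C (-(Complex.I/2)) = C (1/2) := by
    rw [← C_mul]
    congr 1
    have h := Complex.I_mul_I
    linear_combination (-1/2 : ℂ) * h
  have hc : (C (1/2 : ℂ) : MvPolynomial (σ ⊕ σ) ℂ) + C (1/2) = 1 := by
    rw [← C_add]; norm_num
  have hBA : ∀ v, bind₁ Bsub (Asub v) = X v := by
    intro v
    cases v with
    | inl i =>
      simp only [hA, Sum.elim_inl, map_add, map_mul, bind₁_X_right, bind₁_C_right, hB,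
        Sum.elim_inr]
      linear_combination (X (Sum.inl i) - X (Sum.inr i) : MvPolynomial (σ ⊕ σ) ℂ) * hI
        + (X (Sum.inl i) : MvPolynomial (σ ⊕ σ) ℂ) * hc
    | inr i =>
      simp only [hA, Sum.elim_inr, map_sub, map_mul, bind₁_X_right, bind₁_C_right, hB,
        Sum.elim_inl]
      linear_combination (-(X (Sum.inl i) - X (Sum.inr i)) : MvPolynomial (σ ⊕ σ) ℂ) * hI
        + (X (Sum.inr i) : MvPolynomial (σ ⊕ σ) ℂ) * hc
  calc Q = bind₁ (X : σ ⊕ σ → MvPolynomial (σ ⊕ σ) ℂ) Q := by rw [bind₁_X_left]; rfl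
    _ = bind₁ Bsub (bind₁ Asub Q) := by
        rw [bind₁_bind₁, show (fun i => bind₁ Bsub (Asub i)) = (X : σ ⊕ σ → MvPolynomial (σ ⊕ σ) ℂ) from funext hBA]
    _ = 0 := by rw [hAQ, map_zero]

theorem eval_map_conj {σ : Type*} (p : MvPolynomial σ ℂ) (z : σ → ℂ) :
    eval (fun i => starRingEnd ℂ (z i)) (map (starRingEnd ℂ) p) = starRingEnd ℂ (eval z p) := by
  rw [eval_map]
  have : eval z p = eval₂ (RingHom.id ℂ) z p := rfl
  rw [this, eval₂_comp_left (starRingEnd ℂ) (RingHom.id ℂ) z p]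
  rfl

/-- evaluation as a linear map -/
noncomputable def evalL (n : ℕ) (z : Fin n → ℂ) : MvPolynomial (Fin n) ℂ →ₗ[ℂ] ℂ where
  toFun := eval z
  map_add' := fun a b => by simp
  map_smul' := fun c p => by simp [MvPolynomial.smul_eq_C_mul]

theorem mixed_identity {n P N K : ℕ}
    (f : Fin P → MvPolynomial (Fin n) ℂ)
    (g : Fin N → MvPolynomial (Fin n) ℂ)
    (h : Fin K → MvPolynomial (Fin n) ℂ)
    (heq : ∀ z : Fin n → ℂ,
      ∑ j, ‖eval z (f j)‖ ^ 2 = (∑ k, ‖eval z (g k)‖ ^ 2) + ∑ k, ‖eval z (h k)‖ ^ 2)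
    (z w : Fin n → ℂ) :
    ∑ j, eval z (f j) * starRingEnd ℂ (eval w (f j))
      = (∑ k, eval z (g k) * starRingEnd ℂ (eval w (g k)))
        + ∑ k, eval z (h k) * starRingEnd ℂ (eval w (h k)) := by
  classical
  -- the complex form of the hypothesis
  have heqC : ∀ z : Fin n → ℂ,
      ∑ j, eval z (f j) * starRingEnd ℂ (eval z (f j))
        = (∑ k, eval z (g k) * starRingEnd ℂ (eval z (g k)))
          + ∑ k, eval z (h k) * starRingEnd ℂ (eval z (h k)) := by
    intro z
    have := heq z
    simp only [Complex.mul_conj]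
    norm_cast
    simpa [Complex.normSq_eq_norm_sq] using this
  set QQ : MvPolynomial (Fin n ⊕ Fin n) ℂ :=
    (∑ j, rename Sum.inl (f j) * rename Sum.inr (map (starRingEnd ℂ) (f j)))
      - (∑ k, rename Sum.inl (g k) * rename Sum.inr (map (starRingEnd ℂ) (g k)))
      - ∑ k, rename Sum.inl (h k) * rename Sum.inr (map (starRingEnd ℂ) (h k)) with hQQ
  have evalQQ : ∀ z w : Fin n → ℂ,
      eval (Sum.elim z (fun i => starRingEnd ℂ (w i))) QQ
        = (∑ j, eval z (f j) * starRingEnd ℂ (eval w (f j)))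
          - (∑ k, eval z (g k) * starRingEnd ℂ (eval w (g k)))
          - ∑ k, eval z (h k) * starRingEnd ℂ (eval w (h k)) := by
    intro z w
    have term : ∀ p : MvPolynomial (Fin n) ℂ,
        eval (Sum.elim z (fun i => starRingEnd ℂ (w i)))
          (rename Sum.inl p * rename Sum.inr (map (starRingEnd ℂ) p))
          = eval z p * starRingEnd ℂ (eval w p) := by
      intro p
      rw [map_mul, eval_rename, eval_rename]
      have e1 : (Sum.elim z (fun i => starRingEnd ℂ (w i))) ∘ Sum.inl = z := rfl
      have e2 : (Sum.elim z (fun i => starRingEnd ℂ (w i))) ∘ Sum.inr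
          = fun i => starRingEnd ℂ (w i) := rfl
      rw [e1, e2, eval_map_conj]
    rw [hQQ, map_sub, map_sub, map_sum, map_sum, map_sum]
    simp only [term]
  have hQQ0 : QQ = 0 := by
    apply mv_eq_zero_of_conj_diag
    intro z
    rw [evalQQ z z]
    rw [heqC z]
    ring
  have := evalQQ z w
  rw [hQQ0, map_zero] at this
  linear_combination -this

theorem comb_expand {n m : ℕ} (c : Fin m → ℂ) (zs : Fin m → Fin n → ℂ)
    {T : ℕ} (p : Fin T → MvPolynomial (Fin n) ℂ) :
    ∑ t, (∑ i, c i * eval (zs i) (p t)) * starRingEnd ℂ (∑ i, c i * eval (zs i) (p t))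
      = ∑ i, ∑ i', (c i * starRingEnd ℂ (c i'))
          * ∑ t, eval (zs i) (p t) * starRingEnd ℂ (eval (zs i') (p t)) := by
  have step : ∀ t, (∑ i, c i * eval (zs i) (p t)) * starRingEnd ℂ (∑ i, c i * eval (zs i) (p t))
      = ∑ i, ∑ i', (c i * starRingEnd ℂ (c i'))
          * (eval (zs i) (p t) * starRingEnd ℂ (eval (zs i') (p t))) := by
    intro t
    rw [map_sum, Finset.sum_mul_sum]
    refine Finset.sum_congr rfl fun i _ => Finset.sum_congr rfl fun i' _ => ?_
    rw [map_mul]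
    ring
  calc ∑ t, (∑ i, c i * eval (zs i) (p t)) * starRingEnd ℂ (∑ i, c i * eval (zs i) (p t))
      = ∑ t, ∑ i, ∑ i', (c i * starRingEnd ℂ (c i'))
          * (eval (zs i) (p t) * starRingEnd ℂ (eval (zs i') (p t))) :=
        Finset.sum_congr rfl fun t _ => step t
    _ = ∑ i, ∑ t, ∑ i', (c i * starRingEnd ℂ (c i'))
          * (eval (zs i) (p t) * starRingEnd ℂ (eval (zs i') (p t))) := Finset.sum_comm
    _ = ∑ i, ∑ i', ∑ t, (c i * starRingEnd ℂ (c i'))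
          * (eval (zs i) (p t) * starRingEnd ℂ (eval (zs i') (p t))) :=
        Finset.sum_congr rfl fun i _ => Finset.sum_comm
    _ = ∑ i, ∑ i', (c i * starRingEnd ℂ (c i'))
          * ∑ t, eval (zs i) (p t) * starRingEnd ℂ (eval (zs i') (p t)) := by
        refine Finset.sum_congr rfl fun i _ => Finset.sum_congr rfl fun i' _ => ?_
        rw [Finset.mul_sum]


/-- If `‖f(z)‖² = ‖g(z)‖² + ‖h(z)‖²` for all `z ∈ ℂⁿ`, where `f, g, h` are
polynomial maps, then each component of `g` lies in the complex linear span of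
the components of `f`. -/
theorem components_in_span (n P N K : ℕ)
    (f : Fin P → MvPolynomial (Fin n) ℂ)
    (g : Fin N → MvPolynomial (Fin n) ℂ)
    (h : Fin K → MvPolynomial (Fin n) ℂ)
    (heq : ∀ z : Fin n → ℂ,
      ∑ j, ‖eval z (f j)‖ ^ 2 = (∑ k, ‖eval z (g k)‖ ^ 2) + ∑ k, ‖eval z (h k)‖ ^ 2) :
    ∀ k, g k ∈ Submodule.span ℂ (Set.range f) := by
  classical
  intro k
  by_contra hk
  -- the finite-dimensional ambient space
  set V : Submodule ℂ (MvPolynomial (Fin n) ℂ) :=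
    Submodule.span ℂ (Set.range f ∪ Set.range g ∪ Set.range h) with hV
  haveI : FiniteDimensional ℂ V := by
    apply FiniteDimensional.span_of_finite
    exact ((Set.finite_range f).union (Set.finite_range g)).union (Set.finite_range h)
  have memf : ∀ j, f j ∈ V := fun j =>
    Submodule.subset_span (Or.inl (Or.inl ⟨j, rfl⟩))
  have memg : ∀ k', g k' ∈ V := fun k' =>
    Submodule.subset_span (Or.inl (Or.inr ⟨k', rfl⟩))
  set fV : Fin P → V := fun j => ⟨f j, memf j⟩ with hfV
  set gV : Fin N → V := fun k' => ⟨g k', memg k'⟩ with hgV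
  -- evaluation functionals on V
  set E : (Fin n → ℂ) → Module.Dual ℂ V := fun z => (evalL n z) ∘ₗ V.subtype with hE
  have hspan : Submodule.span ℂ (Set.range E) = ⊤ := by
    apply Submodule.span_eq_top_of_ne_zero
    intro v hv
    by_contra hcon
    push_neg at hcon
    apply hv
    have : (v : MvPolynomial (Fin n) ℂ) = 0 := by
      apply MvPolynomial.funext
      intro x
      rw [map_zero]
      exact hcon (E x) ⟨x, rfl⟩
    exact Subtype.ext this
  -- separating functional
  have hgW : gV k ∉ Submodule.span ℂ (Set.range fV) := by
    intro hmem
    apply hk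
    have himg : (Submodule.span ℂ (Set.range fV)).map V.subtype
        = Submodule.span ℂ (Set.range f) := by
      rw [Submodule.map_span]
      congr 1
      ext p
      constructor
      · rintro ⟨q, ⟨j, rfl⟩, rfl⟩; exact ⟨j, rfl⟩
      · rintro ⟨j, rfl⟩; exact ⟨fV j, ⟨j, rfl⟩, rfl⟩
    rw [← himg]
    exact ⟨gV k, hmem, rfl⟩
  obtain ⟨φ, hφg, hφW⟩ :=
    Submodule.exists_dual_map_eq_bot_of_notMem hgW inferInstance
  have hφf : ∀ j, φ (fV j) = 0 := by
    intro j
    have : φ (fV j) ∈ (Submodule.span ℂ (Set.range fV)).map φ :=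
      ⟨fV j, Submodule.subset_span ⟨j, rfl⟩, rfl⟩
    rw [hφW] at this
    simpa using this
  -- express φ as a combination of evaluations
  have hφmem : φ ∈ Submodule.span ℂ (Set.range E) := by rw [hspan]; trivial
  obtain ⟨m, c, vs, hsum⟩ := Submodule.mem_span_set'.mp hφmem
  have hzs : ∀ i, ∃ z : Fin n → ℂ, E z = (vs i : Module.Dual ℂ V) := fun i => (vs i).2
  choose zs hzs using hzs
  -- φ on V is given by L
  have hφL : ∀ (p : MvPolynomial (Fin n) ℂ) (hp : p ∈ V),
      φ ⟨p, hp⟩ = ∑ i, c i * eval (zs i) p := by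
    intro p hp
    rw [← hsum]
    rw [LinearMap.sum_apply]
    refine Finset.sum_congr rfl fun i _ => ?_
    rw [LinearMap.smul_apply, ← hzs i]
    rfl
  -- main quantitative identity for L
  have key : ∑ j, (∑ i, c i * eval (zs i) (f j)) * starRingEnd ℂ (∑ i, c i * eval (zs i) (f j))
      = (∑ k', (∑ i, c i * eval (zs i) (g k')) * starRingEnd ℂ (∑ i, c i * eval (zs i) (g k')))
        + ∑ k', (∑ i, c i * eval (zs i) (h k')) * starRingEnd ℂ (∑ i, c i * eval (zs i) (h k')) := by
    rw [comb_expand c zs f, comb_expand c zs g, comb_expand c zs h]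
    rw [← Finset.sum_add_distrib]
    refine Finset.sum_congr rfl fun i _ => ?_
    rw [← Finset.sum_add_distrib]
    refine Finset.sum_congr rfl fun i' _ => ?_
    rw [← mul_add, mixed_identity f g h heq (zs i) (zs i')]
  -- left side vanishes
  have hLf : ∀ j, (∑ i, c i * eval (zs i) (f j)) = 0 := by
    intro j
    rw [← hφL (f j) (memf j)]
    exact hφf j
  rw [Finset.sum_congr rfl (fun j _ => by rw [hLf j, map_zero, mul_zero])] at key
  rw [Finset.sum_const_zero] at key
  -- positivity forces each term on the right to vanish
  have hre := congrArg Complex.re key.symm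
  simp only [Complex.mul_conj] at hre
  rw [← Complex.ofReal_sum, ← Complex.ofReal_sum, ← Complex.ofReal_add] at hre
  rw [Complex.ofReal_re, Complex.zero_re] at hre
  have hterm : Complex.normSq (∑ i, c i * eval (zs i) (g k)) = 0 := by
    have h1 : ∀ k' ∈ Finset.univ, (0:ℝ) ≤ Complex.normSq (∑ i, c i * eval (zs i) (g k')) :=
      fun k' _ => Complex.normSq_nonneg _
    have h2 : (0:ℝ) ≤ ∑ k', Complex.normSq (∑ i, c i * eval (zs i) (h k')) :=
      Finset.sum_nonneg fun k' _ => Complex.normSq_nonneg _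
    have h3 : ∑ k', Complex.normSq (∑ i, c i * eval (zs i) (g k')) = 0 := by
      have := Finset.sum_nonneg h1
      linarith
    exact (Finset.sum_eq_zero_iff_of_nonneg h1).mp h3 k (Finset.mem_univ k)
  have : (∑ i, c i * eval (zs i) (g k)) = 0 := Complex.normSq_eq_zero.mp hterm
  rw [← hφL (g k) (memg k)] at this
  exact hφg this
end

section
/- Let F: ℂ^n → ℂ^L and G: ℂ^n → ℂ^L be holomorphic polynomial maps with ‖F(z)‖² = ‖G(z)‖² for all z ∈ ℂ^n. Then there exists a unitary matrix U ∈ U(L) with G = U∘F. -/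
open MvPolynomial
open scoped InnerProductSpace

/-- A ℂ-polynomial in `m` variables vanishing at all real points is zero. -/
lemma mv_eq_zero_of_eval_real : ∀ (m : ℕ) (p : MvPolynomial (Fin m) ℂ),
    (∀ x : Fin m → ℝ, eval (fun i => (x i : ℂ)) p = 0) → p = 0 := by
  intro m
  induction m with
  | zero =>
    intro p h
    obtain ⟨c, rfl⟩ := C_surjective (Fin 0) p
    have := h (fun i => 0)
    simpa using this
  | succ m ih =>
    intro p h
    have hq : ∀ x : Fin m → ℝ,
        Polynomial.map (eval fun i => (x i : ℂ)) (finSuccEquiv ℂ m p) = 0 := by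
      intro x
      apply Polynomial.eq_zero_of_infinite_isRoot
      apply Set.Infinite.mono (s := Set.range (fun t : ℝ => (t : ℂ)))
      · rintro _ ⟨t, rfl⟩
        have := h (Fin.cons t x)
        rw [show (fun i => ((Fin.cons t x : Fin (m+1) → ℝ) i : ℂ))
            = Fin.cons (t : ℂ) (fun i => (x i : ℂ)) from ?_] at this
        · simpa [Polynomial.IsRoot, eval_eq_eval_mv_eval'] using this
        · funext i
          refine Fin.cases ?_ ?_ i <;> simp
      · exact Set.infinite_range_of_injective (fun a b hab => by exact_mod_cast hab)
    have hc : ∀ k, (finSuccEquiv ℂ m p).coeff k = 0 := by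
      intro k
      apply ih
      intro x
      have := congrArg (fun q => Polynomial.coeff q k) (hq x)
      simpa using this
    have : finSuccEquiv ℂ m p = 0 := Polynomial.ext (by simpa using hc)
    have := congrArg (finSuccEquiv ℂ m).symm this
    simpa using this


lemma mv_eq_zero_of_eval_real_sum (n : ℕ) (p : MvPolynomial (Fin n ⊕ Fin n) ℂ)
    (h : ∀ x : Fin n ⊕ Fin n → ℝ, eval (fun i => (x i : ℂ)) p = 0) : p = 0 := by
  have hren : rename (finSumFinEquiv (m := n) (n := n)) p = 0 := by
    apply mv_eq_zero_of_eval_real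
    intro x
    rw [eval_rename]
    exact h _
  exact (rename_injective _ (finSumFinEquiv (m := n) (n := n)).injective)
    (by simpa using hren)

lemma antidiag_vanish (n : ℕ) (D : MvPolynomial (Fin n ⊕ Fin n) ℂ)
    (h : ∀ z : Fin n → ℂ, eval (Sum.elim z (fun j => starRingEnd ℂ (z j))) D = 0) :
    ∀ z w : Fin n → ℂ, eval (Sum.elim z w) D = 0 := by
  classical
  set sfun : Fin n ⊕ Fin n → MvPolynomial (Fin n ⊕ Fin n) ℂ :=
    Sum.elim (fun j => X (Sum.inl j) + C Complex.I * X (Sum.inr j))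
      (fun j => X (Sum.inl j) - C Complex.I * X (Sum.inr j)) with hsfun
  have heval : ∀ v : Fin n ⊕ Fin n → ℂ,
      eval v (bind₁ sfun D)
        = eval (Sum.elim (fun j => v (Sum.inl j) + Complex.I * v (Sum.inr j))
            (fun j => v (Sum.inl j) - Complex.I * v (Sum.inr j))) D := by
    intro v
    have h1 : eval v (bind₁ sfun D) = eval (fun i => eval v (sfun i)) D :=
      eval₂Hom_bind₁ (RingHom.id ℂ) v sfun D
    rw [h1]
    have hfun : (fun i => eval v (sfun i))
        = (Sum.elim (fun j => v (Sum.inl j) + Complex.I * v (Sum.inr j))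
            (fun j => v (Sum.inl j) - Complex.I * v (Sum.inr j))) := by
      funext i
      rcases i with j | j <;> simp [hsfun]
    rw [hfun]
  have hzero : bind₁ sfun D = 0 := by
    apply mv_eq_zero_of_eval_real_sum
    intro x
    rw [heval]
    have := h (fun j => (x (Sum.inl j) : ℂ) + Complex.I * (x (Sum.inr j) : ℂ))
    have hfun : (Sum.elim (fun j => ((x (Sum.inl j) : ℂ)) + Complex.I * (x (Sum.inr j) : ℂ))
        (fun j => ((x (Sum.inl j) : ℂ)) - Complex.I * (x (Sum.inr j) : ℂ)))
        = (Sum.elim (fun j => ((x (Sum.inl j) : ℂ)) + Complex.I * (x (Sum.inr j) : ℂ))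
            (fun j => starRingEnd ℂ (((x (Sum.inl j) : ℂ)) + Complex.I * (x (Sum.inr j) : ℂ)))) := by
      funext i
      rcases i with j | j
      · simp
      · simp [Complex.ext_iff]
    rw [hfun]
    exact this
  intro z w
  have := heval (Sum.elim (fun j => (z j + w j) / 2) (fun j => (z j - w j) / (2 * Complex.I)))
  rw [hzero, map_zero] at this
  have harg : (Sum.elim
      (fun j => Sum.elim (fun j => (z j + w j) / 2) (fun j => (z j - w j) / (2 * Complex.I)) (Sum.inl j)
        + Complex.I * Sum.elim (fun j => (z j + w j) / 2) (fun j => (z j - w j) / (2 * Complex.I)) (Sum.inr j))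
      (fun j => Sum.elim (fun j => (z j + w j) / 2) (fun j => (z j - w j) / (2 * Complex.I)) (Sum.inl j)
        - Complex.I * Sum.elim (fun j => (z j + w j) / 2) (fun j => (z j - w j) / (2 * Complex.I)) (Sum.inr j)))
      = Sum.elim z w := by
    funext i
    rcases i with j | j <;>
    · simp only [Sum.elim_inl, Sum.elim_inr]
      field_simp
      ring
  rw [harg] at this
  exact this.symm


lemma kernel_eq (n L : ℕ) (F G : Fin L → MvPolynomial (Fin n) ℂ)
    (heq : ∀ z : Fin n → ℂ, ∑ i, ‖eval z (F i)‖ ^ 2 = ∑ i, ‖eval z (G i)‖ ^ 2) :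
    ∀ z w : Fin n → ℂ,
      ∑ i, eval z (F i) * starRingEnd ℂ (eval w (F i))
        = ∑ i, eval z (G i) * starRingEnd ℂ (eval w (G i)) := by
  classical
  set D : MvPolynomial (Fin n ⊕ Fin n) ℂ :=
    (∑ i, rename Sum.inl (F i) * rename Sum.inr (map (starRingEnd ℂ) (F i)))
      - ∑ i, rename Sum.inl (G i) * rename Sum.inr (map (starRingEnd ℂ) (G i)) with hD
  -- evaluation of D at Sum.elim z (conj ∘ w)
  have hevalD : ∀ z w : Fin n → ℂ,
      eval (Sum.elim z (fun j => starRingEnd ℂ (w j))) D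
        = (∑ i, eval z (F i) * starRingEnd ℂ (eval w (F i)))
          - ∑ i, eval z (G i) * starRingEnd ℂ (eval w (G i)) := by
    intro z w
    have hconj : ∀ p : MvPolynomial (Fin n) ℂ,
        eval (fun j => starRingEnd ℂ (w j)) (map (starRingEnd ℂ) p)
          = starRingEnd ℂ (eval w p) := by
      intro p
      rw [eval_map]
      have he : (eval w) p = eval₂ (RingHom.id ℂ) w p := rfl
      rw [he, eval₂_comp_left (starRingEnd ℂ) (RingHom.id ℂ) w p]
      simp [eval₂_eq, Function.comp]
    simp only [hD, map_sub, map_sum, map_mul, eval_rename]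
    have h1 : (Sum.elim z (fun j => starRingEnd ℂ (w j))) ∘ Sum.inl = z := rfl
    have h2 : (Sum.elim z (fun j => starRingEnd ℂ (w j))) ∘ Sum.inr
        = fun j => starRingEnd ℂ (w j) := rfl
    rw [h1, h2]
    simp only [hconj]
  have h0 : ∀ z : Fin n → ℂ, eval (Sum.elim z (fun j => starRingEnd ℂ (z j))) D = 0 := by
    intro z
    rw [hevalD z z, sub_eq_zero]
    have := congrArg (fun t : ℝ => (t : ℂ)) (heq z)
    push_cast at this
    simpa [Complex.mul_conj'] using this.symm ▸ this
  intro z w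
  have := antidiag_vanish n D h0 z (fun j => starRingEnd ℂ (w j))
  rw [hevalD z w, sub_eq_zero] at this
  exact this

lemma build_unitary (L : ℕ) {ι : Type*} (f g : ι → EuclideanSpace ℂ (Fin L))
    (hinner : ∀ z w, ⟪f z, f w⟫_ℂ = ⟪g z, g w⟫_ℂ) :
    ∃ U ∈ Matrix.unitaryGroup (Fin L) ℂ,
      ∀ z, (g z : Fin L → ℂ) = U.mulVec (f z) := by
  classical
  set W : Submodule ℂ ((EuclideanSpace ℂ (Fin L)) × (EuclideanSpace ℂ (Fin L))) := Submodule.span ℂ (Set.range fun z => (f z, g z)) with hW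
  have key : ∀ p ∈ W, ∀ q ∈ W, ⟪(p : (EuclideanSpace ℂ (Fin L)) × (EuclideanSpace ℂ (Fin L))).1, (q : (EuclideanSpace ℂ (Fin L)) × (EuclideanSpace ℂ (Fin L))).1⟫_ℂ = ⟪p.2, q.2⟫_ℂ := by
    intro p hp
    induction hp using Submodule.span_induction with
    | mem x hx =>
      obtain ⟨z, rfl⟩ := hx
      intro q hq
      induction hq using Submodule.span_induction with
      | mem y hy =>
        obtain ⟨w, rfl⟩ := hy
        exact hinner z w
      | zero => simp
      | add a b _ _ iha ihb => simp [inner_add_right, iha, ihb]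
      | smul c a _ iha => simp [inner_smul_right, iha]
    | zero => intro q hq; simp
    | add a b _ _ iha ihb => intro q hq; simp [inner_add_left, iha q hq, ihb q hq]
    | smul c a _ iha => intro q hq; simp [inner_smul_left, iha q hq]
  set π1 : W →ₗ[ℂ] EuclideanSpace ℂ (Fin L) := (LinearMap.fst ℂ (EuclideanSpace ℂ (Fin L)) (EuclideanSpace ℂ (Fin L))).comp W.subtype with hπ1
  set π2 : W →ₗ[ℂ] EuclideanSpace ℂ (Fin L) := (LinearMap.snd ℂ (EuclideanSpace ℂ (Fin L)) (EuclideanSpace ℂ (Fin L))).comp W.subtype with hπ2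
  have keyπ : ∀ p q : W, ⟪π1 p, π1 q⟫_ℂ = ⟪π2 p, π2 q⟫_ℂ := fun p q =>
    key p p.2 q q.2
  have hker : LinearMap.ker π1 ≤ LinearMap.ker π2 := by
    intro p hp
    rw [LinearMap.mem_ker] at hp ⊢
    have := keyπ p p
    rw [hp] at this
    simp only [inner_zero_left] at this
    exact inner_self_eq_zero.mp this.symm
  set E : Submodule ℂ (EuclideanSpace ℂ (Fin L)) := LinearMap.range π1 with hE
  set T : E →ₗ[ℂ] EuclideanSpace ℂ (Fin L) :=
    (Submodule.liftQ (LinearMap.ker π1) π2 hker).comp (π1.quotKerEquivRange).symm.toLinearMap with hT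
  have hTapp : ∀ p : W, T ⟨π1 p, LinearMap.mem_range_self π1 p⟩ = π2 p := by
    intro p
    have h1 : (π1.quotKerEquivRange).symm ⟨π1 p, LinearMap.mem_range_self π1 p⟩
        = Submodule.Quotient.mk p := by
      apply (π1.quotKerEquivRange).injective
      simp [LinearMap.quotKerEquivRange_apply_mk]
    simp only [hT, LinearMap.coe_comp, Function.comp_apply, LinearEquiv.coe_toLinearMap, h1]
    exact Submodule.liftQ_apply _ _ _
  have hTnorm : ∀ x : E, ‖T x‖ = ‖(x : EuclideanSpace ℂ (Fin L))‖ := by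
    rintro ⟨x, hx⟩
    obtain ⟨p, rfl⟩ := hx
    rw [hTapp p]
    have := keyπ p p
    rw [norm_eq_sqrt_re_inner (𝕜 := ℂ) (π2 p), norm_eq_sqrt_re_inner (𝕜 := ℂ) (π1 p), this]
  have hEfin : FiniteDimensional ℂ (EuclideanSpace ℂ (Fin L)) := by infer_instance
  set Tiso : E →ₗᵢ[ℂ] EuclideanSpace ℂ (Fin L) := ⟨T, hTnorm⟩ with hTiso
  set Φ : EuclideanSpace ℂ (Fin L) →ₗᵢ[ℂ] EuclideanSpace ℂ (Fin L) := Tiso.extend with hΦdef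
  have hΦf : ∀ z, Φ (f z) = g z := by
    intro z
    have hmem : (f z, g z) ∈ W := Submodule.subset_span ⟨z, rfl⟩
    set p : W := ⟨(f z, g z), hmem⟩ with hp
    have h1 : π1 p = f z := rfl
    have h2 : π2 p = g z := rfl
    have hmemE : f z ∈ E := ⟨p, h1⟩
    have h3 : Φ (f z) = Tiso ⟨f z, hmemE⟩ := Tiso.extend_apply ⟨f z, hmemE⟩
    rw [h3]
    have h4 : Tiso ⟨f z, hmemE⟩ = T ⟨π1 p, LinearMap.mem_range_self π1 p⟩ := rfl
    rw [h4, hTapp p, h2]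
  set U : Matrix (Fin L) (Fin L) ℂ :=
    Matrix.of fun i j => Φ (EuclideanSpace.single j 1) i with hU
  have hx_sum : ∀ x : EuclideanSpace ℂ (Fin L),
      x = ∑ j, x j • EuclideanSpace.single j (1 : ℂ) := by
    intro x
    refine PiLp.ext fun k => ?_
    rw [show (∑ j, x j • EuclideanSpace.single j (1 : ℂ)) k
        = ∑ j, (x j • EuclideanSpace.single j (1 : ℂ)) k from by
      rw [WithLp.ofLp_sum]; exact Finset.sum_apply k Finset.univ _]
    simp [EuclideanSpace.single_apply]
  have hmul : ∀ x : EuclideanSpace ℂ (Fin L), U.mulVec x = Φ x := by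
    intro x
    funext i
    have h5 : Φ x = ∑ j, x j • Φ (EuclideanSpace.single j (1 : ℂ)) := by
      conv_lhs => rw [hx_sum x]
      rw [map_sum]
      simp
    have h6 : Φ x i = ∑ j, x j * Φ (EuclideanSpace.single j (1 : ℂ)) i := by
      rw [h5]
      rw [show (∑ j, x j • Φ (EuclideanSpace.single j (1 : ℂ))) i
          = ∑ j, (x j • Φ (EuclideanSpace.single j (1 : ℂ))) i from by
        rw [WithLp.ofLp_sum]; exact Finset.sum_apply i Finset.univ _]
      simp
    rw [h6]
    simp only [Matrix.mulVec, dotProduct, hU, Matrix.of_apply]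
    exact Finset.sum_congr rfl fun j _ => mul_comm _ _
  have hUmem : U ∈ Matrix.unitaryGroup (Fin L) ℂ := by
    rw [Matrix.mem_unitaryGroup_iff']
    ext j k
    have hin := Φ.inner_map_map (EuclideanSpace.single j (1 : ℂ))
      (EuclideanSpace.single k (1 : ℂ))
    rw [PiLp.inner_apply, PiLp.inner_apply] at hin
    simp only [RCLike.inner_apply] at hin
    simp only [Matrix.mul_apply, Matrix.star_apply, hU, Matrix.of_apply, Matrix.one_apply,
      Complex.star_def]
    simp only [mul_comm (starRingEnd ℂ _) _]
    rw [hin]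
    by_cases hjk : j = k
    · simp [hjk, EuclideanSpace.single_apply]
    · simp [hjk, EuclideanSpace.single_apply, Ne.symm hjk]
  refine ⟨U, hUmem, fun z => ?_⟩
  rw [hmul (f z), hΦf z]

/-- If two holomorphic polynomial maps `F, G : ℂⁿ → ℂᴸ` satisfy
`‖F(z)‖² = ‖G(z)‖²` for all `z`, then there is a unitary `U ∈ U(L)` with `G = U ∘ F`. -/
theorem unitary_of_eq_squared_norms (n L : ℕ)
    (F G : Fin L → MvPolynomial (Fin n) ℂ)
    (heq : ∀ z : Fin n → ℂ, ∑ i, ‖eval z (F i)‖ ^ 2 = ∑ i, ‖eval z (G i)‖ ^ 2) :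
    ∃ U ∈ Matrix.unitaryGroup (Fin L) ℂ,
      ∀ z : Fin n → ℂ, (fun i => eval z (G i)) = U.mulVec (fun i => eval z (F i)) := by
  classical
  set f : (Fin n → ℂ) → EuclideanSpace ℂ (Fin L) :=
    fun z => WithLp.toLp 2 (fun i => eval z (F i)) with hf
  set g : (Fin n → ℂ) → EuclideanSpace ℂ (Fin L) :=
    fun z => WithLp.toLp 2 (fun i => eval z (G i)) with hg
  have hinner : ∀ z w, ⟪f z, f w⟫_ℂ = ⟪g z, g w⟫_ℂ := by
    intro z w
    rw [PiLp.inner_apply, PiLp.inner_apply]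
    simp only [RCLike.inner_apply, hf, hg, WithLp.ofLp_toLp]
    have hker := kernel_eq n L F G heq w z
    have h1 : ∀ H : Fin L → MvPolynomial (Fin n) ℂ,
        ∑ i, starRingEnd ℂ (eval z (H i)) * eval w (H i)
          = ∑ i, eval w (H i) * starRingEnd ℂ (eval z (H i)) :=
      fun H => Finset.sum_congr rfl fun i _ => mul_comm _ _
    exact hker
  obtain ⟨U, hU, hUe⟩ := build_unitary L f g hinner
  exact ⟨U, hU, fun z => hUe z⟩
end

section
/- Let r be a bihomogeneous polynomial of bidegree (m,m) on ℂ^n with signature pair (P,N) and rank R = P+N = C(m+n-1, m) (full rank). If r(z,z̄)·‖z‖^{2d} is a squared norm, then P ≥ C(m+d+n-1, m+d) / C(d+n-1, d). -/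
open MvPolynomial

open Complex



/-- A complex mv-polynomial vanishing at all real points is zero. -/
lemma aux_real_vanish {τ : Type*} (Q : MvPolynomial τ ℂ)
    (h : ∀ x : τ → ℝ, eval (fun i => (x i : ℂ)) Q = 0) : Q = 0 := by
  classical
  set A : MvPolynomial τ ℝ := ∑ s ∈ Q.support, monomial s ((Q.coeff s).re) with hA
  set B : MvPolynomial τ ℝ := ∑ s ∈ Q.support, monomial s ((Q.coeff s).im) with hB
  have evalA : ∀ x : τ → ℝ, eval x A = 0 ∧ eval x B = 0 := by
    intro x
    have h1 : eval (fun i => (x i : ℂ)) Q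
        = ((eval x A : ℝ) : ℂ) + ((eval x B : ℝ) : ℂ) * Complex.I := by
      conv_lhs => rw [as_sum Q]
      rw [hA, hB]
      simp only [map_sum, eval_monomial]
      push_cast
      rw [Finset.sum_mul, ← Finset.sum_add_distrib]
      apply Finset.sum_congr rfl
      intro s _
      have hp : (s.prod fun n e => ((x n : ℂ)) ^ e) = ((s.prod fun n e => x n ^ e : ℝ) : ℂ) := by
        rw [Finsupp.prod, Finsupp.prod]; push_cast; rfl
      rw [hp]
      conv_lhs => rw [← Complex.re_add_im (coeff s Q)]
      ring
    have h2 := h x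
    rw [h1] at h2
    constructor
    · have := congrArg Complex.re h2; simpa using this
    · have := congrArg Complex.im h2; simpa using this
  have hA0 : A = 0 := MvPolynomial.funext (fun x => by simpa using (evalA x).1)
  have hB0 : B = 0 := MvPolynomial.funext (fun x => by simpa using (evalA x).2)
  have hcoeff : ∀ s, Q.coeff s = 0 := by
    intro s
    by_cases hs : s ∈ Q.support
    · have cA : coeff s A = (Q.coeff s).re := by
        rw [hA, coeff_sum]
        simp only [coeff_monomial]
        rw [Finset.sum_ite_eq' Q.support s (fun t => (Q.coeff t).re)]
        simp [hs]
      have cB : coeff s B = (Q.coeff s).im := by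
        rw [hB, coeff_sum]
        simp only [coeff_monomial]
        rw [Finset.sum_ite_eq' Q.support s (fun t => (Q.coeff t).im)]
        simp [hs]
      rw [hA0] at cA; rw [hB0] at cB
      simp only [coeff_zero] at cA cB
      exact Complex.ext cA.symm cB.symm
    · simpa using hs
  ext s
  simp [hcoeff s]


lemma aux_eval_bind₁ {τ υ : Type*} (pt : υ → ℂ) (s : τ → MvPolynomial υ ℂ)
    (p : MvPolynomial τ ℂ) :
    eval pt (bind₁ s p) = eval (fun v => eval pt (s v)) p := by
  rw [MvPolynomial.hom_bind₁]
  rw [show ((eval pt : MvPolynomial υ ℂ →+* ℂ).comp C) = RingHom.id ℂ by ext c; simp]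
  rfl

/-- A polynomial in doubled variables vanishing on the "conjugate diagonal" is zero. -/
lemma aux_doubling_vanish {τ : Type*} (Q : MvPolynomial (τ ⊕ τ) ℂ)
    (h : ∀ z : τ → ℂ, eval (Sum.elim z (fun i => (starRingEnd ℂ) (z i))) Q = 0) : Q = 0 := by
  classical
  set s : τ ⊕ τ → MvPolynomial (τ ⊕ τ) ℂ :=
    Sum.elim (fun k => X (Sum.inl k) + C Complex.I * X (Sum.inr k))
             (fun k => X (Sum.inl k) - C Complex.I * X (Sum.inr k)) with hs
  set u : τ ⊕ τ → MvPolynomial (τ ⊕ τ) ℂ :=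
    Sum.elim (fun k => C (2⁻¹ : ℂ) * (X (Sum.inl k) + X (Sum.inr k)))
             (fun k => C (-Complex.I/2) * (X (Sum.inl k) - X (Sum.inr k))) with hu
  have hC : (C Complex.I : MvPolynomial (τ ⊕ τ) ℂ) * C (-Complex.I/2) = C 2⁻¹ := by
    rw [← C_mul]
    congr 1
    linear_combination (-2⁻¹ : ℂ) * Complex.I_mul_I
  have h2 : (2 : MvPolynomial (τ ⊕ τ) ℂ) * C (2⁻¹ : ℂ) = 1 := by
    rw [show (2 : MvPolynomial (τ ⊕ τ) ℂ) = C (2 : ℂ) from (map_ofNat C 2).symm, ← C_mul]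
    norm_num
  have hcomp : ∀ (v : τ ⊕ τ), bind₁ u (s v) = X v := by
    rintro (k | k) <;>
      simp only [hs, hu, Sum.elim_inl, Sum.elim_inr, map_add, map_sub, map_mul, bind₁_X_right,
        algHom_C, algebraMap_eq]
    · linear_combination (X (Sum.inl k) - X (Sum.inr k)) * hC + X (Sum.inl k) * h2
    · linear_combination (X (Sum.inr k) - X (Sum.inl k)) * hC + X (Sum.inr k) * h2
  have hTQ : bind₁ s Q = 0 := by
    apply aux_real_vanish
    intro x
    rw [aux_eval_bind₁]
    have : (fun v => eval (fun i => ((x i : ℝ) : ℂ)) (s v)) =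
        Sum.elim (fun k => ((x (Sum.inl k) : ℂ) + Complex.I * (x (Sum.inr k) : ℂ)))
          (fun k => (starRingEnd ℂ) ((x (Sum.inl k) : ℂ) + Complex.I * (x (Sum.inr k) : ℂ))) := by
      funext v
      rcases v with k | k <;>
        simp [hs, map_add, map_mul, Complex.conj_ofReal]
      ring
    rw [this]
    exact h _
  have hUQ : bind₁ u (bind₁ s Q) = Q := by
    rw [bind₁_bind₁]
    have : (fun i => bind₁ u (s i)) = (X : τ ⊕ τ → MvPolynomial (τ ⊕ τ) ℂ) := funext hcomp
    rw [this, bind₁_X_left]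
    rfl
  rw [hTQ, map_zero] at hUQ
  exact hUQ.symm


noncomputable def KK {τ : Type*} (p : MvPolynomial τ ℂ) : MvPolynomial (τ ⊕ τ) ℂ :=
  rename Sum.inl p * rename Sum.inr (MvPolynomial.map (starRingEnd ℂ) p)

lemma KK_mul {τ : Type*} (p q : MvPolynomial τ ℂ) : KK (p * q) = KK p * KK q := by
  simp only [KK, map_mul]
  ring

lemma KK_one {τ : Type*} : KK (1 : MvPolynomial τ ℂ) = 1 := by
  simp [KK]

lemma KK_prod {τ ι : Type*} (s : Finset ι) (F : ι → MvPolynomial τ ℂ) :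
    KK (∏ i ∈ s, F i) = ∏ i ∈ s, KK (F i) := by
  classical
  induction s using Finset.induction_on with
  | empty => simp [KK_one]
  | insert _ _ hx ih => simp [Finset.prod_insert hx, KK_mul, ih]

lemma KK_X {τ : Type*} (i : τ) : KK (X i : MvPolynomial τ ℂ) = X (Sum.inl i) * X (Sum.inr i) := by
  simp [KK]

lemma aux_E_rename_inl {τ : Type*} (p : MvPolynomial τ ℂ) :
    sumAlgEquiv ℂ τ τ (rename Sum.inl p) = MvPolynomial.map C p := by
  have := congrArg (fun F => F p) (sumAlgEquiv_comp_rename_inl ℂ τ τ)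
  simpa [Algebra.ofId, algebraMap_eq] using this

lemma aux_E_rename_inr {τ : Type*} (q : MvPolynomial τ ℂ) :
    sumAlgEquiv ℂ τ τ (rename Sum.inr q) = C q := by
  have := congrArg (fun F => F q) (sumAlgEquiv_comp_rename_inr ℂ τ τ)
  simpa [IsScalarTower.toAlgHom, algebraMap_eq] using this

lemma coeff_mul_C' {τ : Type*} {a : τ →₀ ℕ} {q : MvPolynomial τ ℂ} {c : ℂ} :
    coeff a (q * C c) = coeff a q * c := by rw [mul_comm, coeff_C_mul, mul_comm]


lemma aux_coeff_KK {τ : Type*} (a b : τ →₀ ℕ) (p : MvPolynomial τ ℂ) :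
    coeff b (coeff a (sumAlgEquiv ℂ τ τ (KK p))) =
      coeff a p * (starRingEnd ℂ) (coeff b p) := by
  rw [KK, map_mul, aux_E_rename_inl, aux_E_rename_inr]
  rw [mul_comm (MvPolynomial.map C p), coeff_C_mul, coeff_map, coeff_mul_C', coeff_map]
  ring



lemma aux_sum_expand {τ ι : Type*} [Fintype ι] (lam : Module.Dual ℂ (MvPolynomial τ ℂ))
    (S : Finset (τ →₀ ℕ)) (w : (τ →₀ ℕ) → ℂ)
    (hlam_sum : ∀ p : MvPolynomial τ ℂ, p.support ⊆ S → lam p = ∑ a ∈ S, coeff a p * w a)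
    (A : ι → MvPolynomial τ ℂ) (hA : ∀ i, (A i).support ⊆ S) :
    ∑ i, lam (A i) * (starRingEnd ℂ) (lam (A i)) =
      ∑ a ∈ S, ∑ b ∈ S, (w a * (starRingEnd ℂ) (w b)) *
        ∑ i, coeff a (A i) * (starRingEnd ℂ) (coeff b (A i)) := by
  have hexp : ∀ p : MvPolynomial τ ℂ, p.support ⊆ S →
      lam p * (starRingEnd ℂ) (lam p) =
      ∑ a ∈ S, ∑ b ∈ S, (w a * (starRingEnd ℂ) (w b)) *
        (coeff a p * (starRingEnd ℂ) (coeff b p)) := by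
    intro p hsub
    rw [hlam_sum p hsub, map_sum, Finset.sum_mul_sum]
    apply Finset.sum_congr rfl; intro a _
    apply Finset.sum_congr rfl; intro b _
    rw [map_mul]
    ring
  calc ∑ i, lam (A i) * (starRingEnd ℂ) (lam (A i))
      = ∑ i, ∑ a ∈ S, ∑ b ∈ S, (w a * (starRingEnd ℂ) (w b)) *
          (coeff a (A i) * (starRingEnd ℂ) (coeff b (A i))) :=
        Finset.sum_congr rfl fun i _ => hexp (A i) (hA i)
    _ = ∑ a ∈ S, ∑ i, ∑ b ∈ S, (w a * (starRingEnd ℂ) (w b)) *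
          (coeff a (A i) * (starRingEnd ℂ) (coeff b (A i))) := Finset.sum_comm
    _ = ∑ a ∈ S, ∑ b ∈ S, ∑ i, (w a * (starRingEnd ℂ) (w b)) *
          (coeff a (A i) * (starRingEnd ℂ) (coeff b (A i))) :=
        Finset.sum_congr rfl fun a _ => Finset.sum_comm
    _ = ∑ a ∈ S, ∑ b ∈ S, (w a * (starRingEnd ℂ) (w b)) *
          ∑ i, coeff a (A i) * (starRingEnd ℂ) (coeff b (A i)) := by
        apply Finset.sum_congr rfl; intro a _
        apply Finset.sum_congr rfl; intro b _
        rw [Finset.mul_sum]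

/-- From a sum-of-squares kernel identity, each `G i` lies in the span of the `F` family. -/
lemma gram_mem_span {τ : Type*} {ιF ιG ιH : Type*} [Fintype ιF] [Fintype ιG] [Fintype ιH]
    (F : ιF → MvPolynomial τ ℂ) (G : ιG → MvPolynomial τ ℂ) (H : ιH → MvPolynomial τ ℂ)
    (hid : ∑ i, KK (F i) = ∑ i, KK (G i) + ∑ i, KK (H i)) (i₀ : ιG) :
    G i₀ ∈ Submodule.span ℂ (Set.range F) := by
  classical
  by_contra hq
  obtain ⟨lam, hlam0, hlambot⟩ :=
    Submodule.exists_dual_map_eq_bot_of_notMem hq inferInstance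
  have hlamW : ∀ p ∈ Submodule.span ℂ (Set.range F), lam p = 0 := by
    intro p hp
    have : lam p ∈ Submodule.map lam (Submodule.span ℂ (Set.range F)) :=
      Submodule.mem_map_of_mem hp
    rw [hlambot] at this
    simpa using this
  -- collect supports
  set S : Finset (τ →₀ ℕ) :=
    (Finset.univ.biUnion fun i => (F i).support) ∪
    (Finset.univ.biUnion fun i => (G i).support) ∪
    (Finset.univ.biUnion fun i => (H i).support) with hS
  have hSF : ∀ i, (F i).support ⊆ S := fun i => by
    intro a ha; simp only [hS, Finset.mem_union, Finset.mem_biUnion]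
    exact Or.inl (Or.inl ⟨i, Finset.mem_univ i, ha⟩)
  have hSG : ∀ i, (G i).support ⊆ S := fun i => by
    intro a ha; simp only [hS, Finset.mem_union, Finset.mem_biUnion]
    exact Or.inl (Or.inr ⟨i, Finset.mem_univ i, ha⟩)
  have hSH : ∀ i, (H i).support ⊆ S := fun i => by
    intro a ha; simp only [hS, Finset.mem_union, Finset.mem_biUnion]
    exact Or.inr ⟨i, Finset.mem_univ i, ha⟩
  set w : (τ →₀ ℕ) → ℂ := fun a => lam (monomial a 1) with hw
  -- lam as a finite sum of coefficients
  have hlam_sum : ∀ p : MvPolynomial τ ℂ, p.support ⊆ S →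
      lam p = ∑ a ∈ S, coeff a p * w a := by
    intro p hsub
    have hrep : p = ∑ a ∈ S, monomial a (coeff a p) := by
      conv_lhs => rw [as_sum p]
      exact Finset.sum_subset hsub (fun x _ hx => by
        simp [MvPolynomial.notMem_support_iff.mp hx])
    conv_lhs => rw [hrep]
    rw [map_sum]
    apply Finset.sum_congr rfl
    intro a _
    have : (monomial a (coeff a p) : MvPolynomial τ ℂ) = coeff a p • monomial a 1 := by
      rw [smul_monomial, smul_eq_mul, mul_one]
    rw [this, map_smul, smul_eq_mul, hw]
  -- the starred coefficient identity
  have hstar : ∀ a b : τ →₀ ℕ,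
      ∑ i, coeff a (F i) * (starRingEnd ℂ) (coeff b (F i)) =
      (∑ i, coeff a (G i) * (starRingEnd ℂ) (coeff b (G i))) +
      ∑ i, coeff a (H i) * (starRingEnd ℂ) (coeff b (H i)) := by
    intro a b
    have := congrArg (fun Q => coeff b (coeff a (sumAlgEquiv ℂ τ τ Q))) hid
    simpa only [map_sum, map_add, coeff_sum, coeff_add, aux_coeff_KK] using this
  have hFzero : ∑ i, lam (F i) * (starRingEnd ℂ) (lam (F i)) = 0 := by
    apply Finset.sum_eq_zero
    intro i _
    rw [hlamW (F i) (Submodule.subset_span (Set.mem_range_self i))]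
    simp
  have hkey : (0 : ℂ) = ∑ i, lam (G i) * (starRingEnd ℂ) (lam (G i)) +
      ∑ i, lam (H i) * (starRingEnd ℂ) (lam (H i)) := by
    rw [← hFzero]
    rw [aux_sum_expand lam S w hlam_sum F hSF]
    rw [aux_sum_expand lam S w hlam_sum G hSG]
    rw [aux_sum_expand lam S w hlam_sum H hSH]
    rw [← Finset.sum_add_distrib]
    apply Finset.sum_congr rfl; intro a _
    rw [← Finset.sum_add_distrib]
    apply Finset.sum_congr rfl; intro b _
    rw [← mul_add, hstar a b]
  -- convert to reals
  have hkey' : (0 : ℝ) = ∑ i, Complex.normSq (lam (G i)) + ∑ i, Complex.normSq (lam (H i)) := by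
    have : ((0 : ℝ) : ℂ) = (((∑ i, Complex.normSq (lam (G i)) +
        ∑ i, Complex.normSq (lam (H i))) : ℝ) : ℂ) := by
      push_cast
      rw [hkey]
      simp [Complex.mul_conj]
    exact_mod_cast this
  have hGzero : Complex.normSq (lam (G i₀)) = 0 := by
    have h1 : ∑ i, Complex.normSq (lam (G i)) = 0 := by
      have hnn1 : (0:ℝ) ≤ ∑ i, Complex.normSq (lam (G i)) :=
        Finset.sum_nonneg fun i _ => Complex.normSq_nonneg _
      have hnn2 : (0:ℝ) ≤ ∑ i, Complex.normSq (lam (H i)) :=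
        Finset.sum_nonneg fun i _ => Complex.normSq_nonneg _
      linarith
    exact le_antisymm (by
      have := Finset.sum_eq_zero_iff_of_nonneg
        (fun i _ => Complex.normSq_nonneg (lam (G i))) |>.mp h1 i₀ (Finset.mem_univ i₀)
      exact le_of_eq this) (Complex.normSq_nonneg _)
  exact hlam0 (Complex.normSq_eq_zero.mp hGzero)


lemma aux_prod_X {τ ι : Type*} (s : Finset ι) (t : ι → τ) :
    (∏ i ∈ s, (X (t i) : MvPolynomial τ ℂ)) =
      monomial (∑ i ∈ s, Finsupp.single (t i) 1) 1 := by
  classical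
  induction s using Finset.induction_on with
  | empty => simp [monomial_zero']
  | insert _ _ hx ih =>
      rw [Finset.prod_insert hx, Finset.sum_insert hx, ih, X, monomial_mul, one_mul]

lemma aux_weight_single {τ : Type*} (i : τ) :
    Finsupp.weight (1 : τ → ℕ) (Finsupp.single i 1) = 1 := by
  simp [Finsupp.weight_apply, Finsupp.sum_single_index]

lemma aux_degree_single {τ : Type*} (i : τ) : (Finsupp.single i 1 : τ →₀ ℕ).degree = 1 := by
  simp only [Finsupp.degree_eq_weight_one]
  exact aux_weight_single i

lemma aux_degree_add {τ : Type*} (a b : τ →₀ ℕ) : (a + b).degree = a.degree + b.degree := by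
  simp only [Finsupp.degree_eq_weight_one]
  exact map_add _ a b

lemma aux_degree_sum_single {τ ι : Type*} (s : Finset ι) (t : ι → τ) :
    (∑ i ∈ s, Finsupp.single (t i) 1 : τ →₀ ℕ).degree = s.card := by
  classical
  simp only [Finsupp.degree_eq_weight_one, map_sum, aux_weight_single]
  simp [Finsupp.weight_apply, Finsupp.sum_single_index]

lemma aux_exists_split {τ : Type*} (e : ℕ) :
    ∀ (k : ℕ) (a : τ →₀ ℕ), a.degree = e + k →
      ∃ (b : τ →₀ ℕ) (t : Fin k → τ), b.degree = e ∧
        a = b + ∑ s, Finsupp.single (t s) 1 := by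
  classical
  intro k
  induction k with
  | zero =>
      intro a ha
      exact ⟨a, Fin.elim0, by simpa using ha, by simp⟩
  | succ k ih =>
      intro a ha
      have hne : a ≠ 0 := by
        intro h
        rw [h] at ha
        simp [map_zero] at ha
      obtain ⟨i, hi⟩ : ∃ i, a i ≠ 0 := by
        by_contra hc
        push_neg at hc
        exact hne (Finsupp.ext fun j => hc j)
      set a' : τ →₀ ℕ := a - Finsupp.single i 1 with ha'
      have hsum : a = a' + Finsupp.single i 1 := by
        ext j
        simp only [ha', Finsupp.add_apply, Finsupp.tsub_apply, Finsupp.single_apply]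
        by_cases hji : i = j
        · subst hji
          simp
          omega
        · simp [hji]
      have hdeg : a'.degree = e + k := by
        have h2 := congrArg Finsupp.degree hsum
        rw [aux_degree_add, aux_degree_single] at h2
        omega
      obtain ⟨b, t, hb, hsplit⟩ := ih a' hdeg
      refine ⟨b, Fin.cons i t, hb, ?_⟩
      rw [Fin.sum_univ_succ]
      simp only [Fin.cons_zero, Fin.cons_succ]
      rw [hsum, hsplit]
      abel


lemma aux_finite_degree_eq (n k : ℕ) : {d : Fin n →₀ ℕ | d.degree = k}.Finite :=
  Set.Finite.subset (Finsupp.finite_of_degree_le k) (fun d hd => le_of_eq hd)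

lemma aux_card_degree_eq (n k : ℕ) :
    Nat.card {d : Fin n →₀ ℕ | d.degree = k} = (n + k - 1).choose k := by
  classical
  have e1 : {d : Fin n →₀ ℕ // d.degree = k} ≃ {P : Fin n →₀ ℕ // (P.sum fun _ => id) = k} :=
    Equiv.subtypeEquivRight (fun d => by
      constructor <;> intro h <;> simpa [Finsupp.degree_apply, Finsupp.sum] using h)
  have e2 : Sym (Fin n) k ≃ {P : Fin n →₀ ℕ // (P.sum fun _ => id) = k} :=
    Sym.equivNatSum (Fin n) k
  have : Nat.card {d : Fin n →₀ ℕ | d.degree = k} = Nat.card (Sym (Fin n) k) := by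
    exact Nat.card_congr (e1.trans e2.symm)
  rw [this, Nat.card_eq_fintype_card, Sym.card_sym_eq_multichoose, Fintype.card_fin,
    Nat.multichoose_eq]

noncomputable def homogEquiv (n k : ℕ) :
    (homogeneousSubmodule (Fin n) ℂ k) ≃ₗ[ℂ]
      (↥{d : Fin n →₀ ℕ | d.degree = k} →₀ ℂ) :=
  (LinearEquiv.ofEq _ _ (homogeneousSubmodule_eq_finsupp_supported (Fin n) ℂ k)).trans
    (AddMonoidAlgebra.supportedEquivFinsupp _)

lemma aux_finrank_homog (n k : ℕ) :
    Module.finrank ℂ (homogeneousSubmodule (Fin n) ℂ k) = (n + k - 1).choose k := by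
  classical
  haveI : Fintype ↥{d : Fin n →₀ ℕ | d.degree = k} := (aux_finite_degree_eq n k).fintype
  rw [LinearEquiv.finrank_eq (homogEquiv n k), Module.finrank_finsupp_self]
  rw [← Nat.card_eq_fintype_card]
  exact aux_card_degree_eq n k

lemma aux_homog_findim (n k : ℕ) :
    FiniteDimensional ℂ (homogeneousSubmodule (Fin n) ℂ k) := by
  classical
  haveI : Fintype ↥{d : Fin n →₀ ℕ | d.degree = k} := (aux_finite_degree_eq n k).fintype
  exact Module.Finite.equiv (homogEquiv n k).symm



/-- If `r = ‖f‖² − ‖g‖²` is bihomogeneous of bidegree `(m,m)` on `ℂⁿ` with signature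
pair `(P,N)` of full rank `P + N = C(m+n-1,m)`, and `r(z,z̄)·‖z‖^{2d}` is a squared
norm, then `P ≥ C(m+d+n-1, m+d) / C(d+n-1, d)`. -/
theorem full_rank_bound (n m d P N : ℕ)
    (f : Fin P → MvPolynomial (Fin n) ℂ)
    (g : Fin N → MvPolynomial (Fin n) ℂ)
    (hf : ∀ j, (f j).IsHomogeneous m)
    (hg : ∀ j, (g j).IsHomogeneous m)
    (hind : LinearIndependent ℂ (Sum.elim f g))
    (hrank : P + N = (m + n - 1).choose m)
    (hsq : ∃ (K : ℕ) (h : Fin K → MvPolynomial (Fin n) ℂ),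
      ∀ z : Fin n → ℂ,
        ((∑ j, ‖eval z (f j)‖ ^ 2) - ∑ j, ‖eval z (g j)‖ ^ 2) * (∑ i, ‖z i‖ ^ 2) ^ d =
          ∑ j, ‖eval z (h j)‖ ^ 2) :
    (P : ℚ) ≥ ((m + d + n - 1).choose (m + d) : ℚ) / ((d + n - 1).choose d : ℚ) := by
  classical
  obtain ⟨Kn, hh, hs⟩ := hsq
  -- evaluation of KK on the conjugate diagonal
  have aux_eval_conj : ∀ (z : Fin n → ℂ) (p : MvPolynomial (Fin n) ℂ),
      eval (fun i => (starRingEnd ℂ) (z i)) (MvPolynomial.map (starRingEnd ℂ) p)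
        = (starRingEnd ℂ) (eval z p) := by
    intro z p
    rw [eval_map]
    have : eval z p = eval₂ (RingHom.id ℂ) z p := rfl
    rw [this, eval₂_comp_left (starRingEnd ℂ) (RingHom.id ℂ) z p]
    rfl
  have aux_eval_KK : ∀ (z : Fin n → ℂ) (p : MvPolynomial (Fin n) ℂ),
      eval (Sum.elim z (fun i => (starRingEnd ℂ) (z i))) (KK p)
        = eval z p * (starRingEnd ℂ) (eval z p) := by
    intro z p
    rw [KK, map_mul, eval_rename, eval_rename]
    have h1 : (Sum.elim z (fun i => (starRingEnd ℂ) (z i))) ∘ Sum.inl = z := rfl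
    have h2 : (Sum.elim z (fun i => (starRingEnd ℂ) (z i))) ∘ Sum.inr
        = fun i => (starRingEnd ℂ) (z i) := rfl
    rw [h1, h2, aux_eval_conj]
  set ip : MvPolynomial (Fin n ⊕ Fin n) ℂ := ∑ i, X (Sum.inl i) * X (Sum.inr i) with hip
  set Φ : MvPolynomial (Fin n ⊕ Fin n) ℂ :=
    (∑ j, KK (f j)) * ip ^ d - ((∑ j, KK (g j)) * ip ^ d + ∑ j, KK (hh j)) with hΦ
  have hnorm : ∀ w : ℂ, ((‖w‖ : ℝ) : ℂ)^2 = w * (starRingEnd ℂ) w := by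
    intro w
    rw [Complex.mul_conj, ← Complex.sq_norm]
    norm_num
  have hΦ0 : Φ = 0 := by
    apply aux_doubling_vanish
    intro z
    have hez := congrArg (fun r : ℝ => (r : ℂ)) (hs z)
    push_cast at hez
    simp only [hnorm] at hez
    simp only [hΦ, map_sub, map_add, map_mul, map_pow, map_sum, aux_eval_KK, hip,
      eval_X, Sum.elim_inl, Sum.elim_inr]
    linear_combination hez
  have hKid : (∑ j, KK (f j)) * ip ^ d = (∑ j, KK (g j)) * ip ^ d + ∑ j, KK (hh j) := by
    rw [hΦ] at hΦ0
    exact sub_eq_zero.mp hΦ0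
  set mono : (Fin d → Fin n) → MvPolynomial (Fin n) ℂ := fun t => ∏ s, X (t s) with hmono
  have hipd : ip ^ d = ∑ t : Fin d → Fin n, KK (mono t) := by
    have h1 : ip = ∑ i, KK (X i) := by
      rw [hip]
      exact Finset.sum_congr rfl fun i _ => (KK_X i).symm
    rw [h1]
    rw [show (∑ i, KK (X i : MvPolynomial (Fin n) ℂ)) ^ d
        = ∏ _s : Fin d, (∑ i, KK (X i : MvPolynomial (Fin n) ℂ)) by
      rw [Finset.prod_const, Finset.card_univ, Fintype.card_fin]]
    rw [Finset.prod_univ_sum]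
    rw [Fintype.piFinset_univ]
    exact Finset.sum_congr rfl fun t _ => by rw [hmono, KK_prod]
  have hid : ∑ x : Fin P × (Fin d → Fin n), KK (f x.1 * mono x.2)
      = ∑ x : Fin N × (Fin d → Fin n), KK (g x.1 * mono x.2) + ∑ j, KK (hh j) := by
    have hl : ∀ {Q : ℕ} (u : Fin Q → MvPolynomial (Fin n) ℂ),
        ∑ x : Fin Q × (Fin d → Fin n), KK (u x.1 * mono x.2)
          = (∑ j, KK (u j)) * ip ^ d := by
      intro Q u
      rw [hipd, Finset.sum_mul_sum, Fintype.sum_prod_type]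
      exact Finset.sum_congr rfl fun j _ => Finset.sum_congr rfl fun t _ => KK_mul _ _
    rw [hl f, hl g]
    exact hKid
  -- the span W
  haveI hDfin : Fintype ↥{γ : Fin n →₀ ℕ | γ.degree = d} := (aux_finite_degree_eq n d).fintype
  set W : Submodule ℂ (MvPolynomial (Fin n) ℂ) :=
    Submodule.span ℂ (Set.range
      (fun x : Fin P × ↥{γ : Fin n →₀ ℕ | γ.degree = d} => f x.1 * monomial x.2.1 1)) with hW
  have hFle : Submodule.span ℂ (Set.range
      (fun x : Fin P × (Fin d → Fin n) => f x.1 * mono x.2)) ≤ W := by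
    rw [Submodule.span_le]
    rintro _ ⟨⟨j', t'⟩, rfl⟩
    apply Submodule.subset_span
    refine ⟨(j', ⟨∑ s, Finsupp.single (t' s) 1, ?_⟩), ?_⟩
    · simp only [Set.mem_setOf_eq]
      rw [aux_degree_sum_single]
      simp
    · show f j' * monomial (∑ s, Finsupp.single (t' s) 1) 1 = f j' * mono t'
      simp only [hmono, aux_prod_X]
  have claimA : ∀ (j : Fin N) (γ : Fin n →₀ ℕ), γ.degree = d → g j * monomial γ 1 ∈ W := by
    intro j γ hγ
    obtain ⟨b, t, hb, hsplit⟩ := aux_exists_split 0 d γ (by simpa using hγ)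
    have hb0 : b = 0 := by rwa [Finsupp.degree_eq_zero_iff] at hb
    rw [hb0, zero_add] at hsplit
    have hmono2 : monomial γ 1 = mono t := by
      simp only [hmono, aux_prod_X]
      rw [← hsplit]
    have hgmem := gram_mem_span
        (fun x : Fin P × (Fin d → Fin n) => f x.1 * mono x.2)
        (fun x : Fin N × (Fin d → Fin n) => g x.1 * mono x.2)
        hh hid (j, t)
    rw [hmono2]
    exact hFle hgmem
  -- f,g span the homogeneous degree-m polynomials
  haveI := aux_homog_findim n m
  set Hm := homogeneousSubmodule (Fin n) ℂ m with hHm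
  set FG : Fin P ⊕ Fin N → Hm := fun i =>
    ⟨Sum.elim f g i, by
      cases i with
      | inl j => exact hf j
      | inr j => exact hg j⟩ with hFG
  have hFGcomp : (⇑Hm.subtype) ∘ FG = Sum.elim f g := rfl
  have hFGli : LinearIndependent ℂ FG := by
    apply LinearIndependent.of_comp Hm.subtype
    rw [hFGcomp]
    exact hind
  have hcard : Fintype.card (Fin P ⊕ Fin N) = Module.finrank ℂ Hm := by
    rw [hHm, aux_finrank_homog n m]
    simp only [Fintype.card_sum, Fintype.card_fin]
    rw [hrank, Nat.add_comm n m]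
  have htop := hFGli.span_eq_top_of_card_eq_finrank' hcard
  have hspan : ∀ p, p ∈ Hm → p ∈ Submodule.span ℂ (Set.range (Sum.elim f g)) := by
    intro p hp
    have h1 : (⟨p, hp⟩ : Hm) ∈ Submodule.span ℂ (Set.range FG) := by
      rw [htop]; trivial
    have h2 := Submodule.mem_map_of_mem (f := Hm.subtype) h1
    rw [Submodule.map_span, ← Set.range_comp, hFGcomp] at h2
    simpa using h2
  -- every degree-(m+d) monomial is in W
  have claimB : homogeneousSubmodule (Fin n) ℂ (m + d) ≤ W := by
    intro p hp
    rw [as_sum p]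
    apply Submodule.sum_mem
    intro a ha
    have hdeg : a.degree = m + d := by
      have h1 := ((mem_homogeneousSubmodule _ _).mp hp) (MvPolynomial.mem_support_iff.mp ha)
      rw [Finsupp.degree_eq_weight_one]; exact h1
    have hmon1 : (monomial a (coeff a p) : MvPolynomial (Fin n) ℂ)
        = coeff a p • monomial a 1 := by
      rw [smul_monomial, smul_eq_mul, mul_one]
    rw [hmon1]
    apply Submodule.smul_mem
    obtain ⟨b, t, hbm, hsplit⟩ := aux_exists_split m d a hdeg
    set γ : Fin n →₀ ℕ := ∑ s, Finsupp.single (t s) 1 with hγdef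
    have hγdeg : γ.degree = d := by
      rw [hγdef, aux_degree_sum_single]
      simp
    have hfact : (monomial a 1 : MvPolynomial (Fin n) ℂ)
        = monomial b 1 * monomial γ 1 := by
      rw [monomial_mul, one_mul, ← hsplit]
    rw [hfact]
    have hbmem : (monomial b 1 : MvPolynomial (Fin n) ℂ) ∈ Hm := isHomogeneous_monomial 1 hbm
    have hbspan := hspan _ hbmem
    set L : MvPolynomial (Fin n) ℂ →ₗ[ℂ] MvPolynomial (Fin n) ℂ :=
      LinearMap.mulRight ℂ (monomial γ 1) with hL
    have h3 : L (monomial b 1) ∈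
        Submodule.map L (Submodule.span ℂ (Set.range (Sum.elim f g))) :=
      Submodule.mem_map_of_mem hbspan
    rw [Submodule.map_span] at h3
    have h4 : Submodule.span ℂ (⇑L '' Set.range (Sum.elim f g)) ≤ W := by
      rw [Submodule.span_le]
      rintro _ ⟨_, ⟨i, rfl⟩, rfl⟩
      cases i with
      | inl j =>
          show (Sum.elim f g (Sum.inl j)) * monomial γ 1 ∈ W
          apply Submodule.subset_span
          exact ⟨(j, ⟨γ, hγdeg⟩), rfl⟩
      | inr j =>
          show (Sum.elim f g (Sum.inr j)) * monomial γ 1 ∈ W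
          exact claimA j γ hγdeg
    have h5 := h4 h3
    simpa [hL] using h5
  -- dimension count
  haveI : FiniteDimensional ℂ W := FiniteDimensional.span_of_finite ℂ (Set.finite_range _)
  have hrank1 : Module.finrank ℂ (homogeneousSubmodule (Fin n) ℂ (m + d))
      ≤ Module.finrank ℂ W := Submodule.finrank_mono claimB
  have hrank2 : Module.finrank ℂ W ≤ P * ((n + d - 1).choose d) := by
    have h6 := finrank_range_le_card (R := ℂ)
      (fun x : Fin P × ↥{γ : Fin n →₀ ℕ | γ.degree = d} => f x.1 * monomial x.2.1 1)
    rw [Set.finrank] at h6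
    refine le_trans h6 ?_
    rw [Fintype.card_prod, Fintype.card_fin]
    apply Nat.mul_le_mul_left
    rw [← aux_card_degree_eq n d, Nat.card_eq_fintype_card]
  have hmain : (m + d + n - 1).choose (m + d) ≤ P * ((d + n - 1).choose d) := by
    have h7 := le_trans hrank1 hrank2
    rw [aux_finrank_homog n (m + d)] at h7
    rw [Nat.add_comm n (m + d)] at h7
    rwa [Nat.add_comm n d] at h7
  -- conclude in ℚ
  rw [ge_iff_le]
  rcases Nat.eq_zero_or_pos ((d + n - 1).choose d) with hb | hb
  · rw [hb]
    rw [hb, Nat.mul_zero, Nat.le_zero] at hmain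
    rw [hmain]
    simp
  · rw [div_le_iff₀ (by exact_mod_cast hb : (0:ℚ) < ((d + n - 1).choose d : ℚ))]
    exact_mod_cast hmain
end

section
/- Let I be a homogeneous ideal in ℂ[z_1,…,z_n] generated by P linearly independent homogeneous polynomials of degree m, with P < n. Then dim_ℂ I_{m+1} ≥ nP − P(P−1)/2. -/
open MvPolynomial

namespace IdealPieceAux

open Finset

variable {n : ℕ} (mo : MonomialOrder (Fin n))

/-- The leading "monomial" (in the synonym type) of a multivariate polynomial,
`⊥` for the zero polynomial. -/
noncomputable def mdeg (p : MvPolynomial (Fin n) ℂ) : WithBot mo.syn :=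
  (p.support.image mo.toSyn).max

lemma le_mdeg {p : MvPolynomial (Fin n) ℂ} {μ : Fin n →₀ ℕ} (h : μ ∈ p.support) :
    (mo.toSyn μ : WithBot mo.syn) ≤ mdeg mo p :=
  Finset.le_max (Finset.mem_image_of_mem _ h)

lemma mdeg_zero : mdeg mo (0 : MvPolynomial (Fin n) ℂ) = ⊥ := by
  simp [mdeg]

lemma exists_mdeg {p : MvPolynomial (Fin n) ℂ} (hp : p ≠ 0) :
    ∃ μ, μ ∈ p.support ∧ mdeg mo p = (mo.toSyn μ : WithBot mo.syn) := by
  have hne : (p.support.image mo.toSyn).Nonempty :=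
    (MvPolynomial.support_nonempty.mpr hp).image _
  obtain ⟨b, hb⟩ := Finset.max_of_nonempty hne
  have hbmem : b ∈ p.support.image mo.toSyn := Finset.mem_of_max hb
  obtain ⟨μ, hμ, rfl⟩ := Finset.mem_image.mp hbmem
  exact ⟨μ, hμ, hb⟩

lemma mdeg_X_mul {p : MvPolynomial (Fin n) ℂ} {μ : Fin n →₀ ℕ} (i : Fin n)
    (hμ : μ ∈ p.support) (hp : mdeg mo p = (mo.toSyn μ : WithBot mo.syn)) :
    mdeg mo (X i * p) = (mo.toSyn (Finsupp.single i 1 + μ) : WithBot mo.syn) := by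
  apply le_antisymm
  · apply Finset.max_le
    intro b hb
    obtain ⟨ν, hν, rfl⟩ := Finset.mem_image.mp hb
    rw [support_X_mul] at hν
    obtain ⟨τ, hτ, rfl⟩ := Finset.mem_map.mp hν
    have h1 : (mo.toSyn τ : WithBot mo.syn) ≤ (mo.toSyn μ : WithBot mo.syn) :=
      hp ▸ le_mdeg mo hτ
    have h2 : mo.toSyn τ ≤ mo.toSyn μ := WithBot.coe_le_coe.mp h1
    have h3 : mo.toSyn (Finsupp.single i 1 + τ) ≤ mo.toSyn (Finsupp.single i 1 + μ) := by
      rw [map_add, map_add]; exact add_le_add le_rfl h2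
    simpa [addLeftEmbedding_apply] using WithBot.coe_le_coe.mpr h3
  · apply Finset.le_max
    apply Finset.mem_image_of_mem
    rw [support_X_mul, Finset.mem_map]
    exact ⟨μ, hμ, by simp [addLeftEmbedding_apply]⟩

/-- Polynomials with pairwise-distinct leading monomials are linearly independent. -/
lemma linearIndependent_of_mdeg_inj {ι : Type*} (h : ι → MvPolynomial (Fin n) ℂ)
    (h0 : ∀ i, h i ≠ 0)
    (hinj : Function.Injective fun i => mdeg mo (h i)) :
    LinearIndependent ℂ h := by
  classical
  rw [linearIndependent_iff']
  intro s
  induction s using Finset.strongInductionOn with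
  | _ s ih =>
    intro c hsum i hi
    rcases Finset.eq_empty_or_nonempty s with rfl | hs
    · exact absurd hi (by simp)
    obtain ⟨i0, hi0s, hmax⟩ := Finset.exists_max_image s (fun i => mdeg mo (h i)) hs
    obtain ⟨μ0, hμ0, hd0⟩ := exists_mdeg mo (h0 i0)
    have hc0 : c i0 = 0 := by
      have hco := congrArg (MvPolynomial.coeff μ0) hsum
      rw [MvPolynomial.coeff_sum, MvPolynomial.coeff_zero] at hco
      rw [Finset.sum_eq_single i0 ?_ (fun habs => absurd hi0s habs)] at hco
      · rw [MvPolynomial.coeff_smul, smul_eq_mul] at hco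
        exact (mul_eq_zero.mp hco).resolve_right (MvPolynomial.mem_support_iff.mp hμ0)
      · intro j hjs hji
        rw [MvPolynomial.coeff_smul, smul_eq_mul]
        have hlt : mdeg mo (h j) < mdeg mo (h i0) :=
          lt_of_le_of_ne (hmax j hjs) (fun e => hji (hinj e))
        have : MvPolynomial.coeff μ0 (h j) = 0 := by
          by_contra hne
          have := le_mdeg mo (MvPolynomial.mem_support_iff.mpr hne) (p := h j)
          rw [hd0] at hlt
          exact absurd (lt_of_le_of_lt this hlt) (lt_irrefl _)
        rw [this, mul_zero]
    have hsum' : ∑ j ∈ s.erase i0, c j • h j = 0 := by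
      rw [← Finset.add_sum_erase s _ hi0s, hc0, zero_smul, zero_add] at hsum
      exact hsum
    have ih' := ih (s.erase i0) (Finset.erase_ssubset hi0s) c hsum'
    rcases eq_or_ne i i0 with rfl | hne
    · exact hc0
    · exact ih' i (Finset.mem_erase.mpr ⟨hne, hi⟩)

/-- Each translate family `i ↦ eᵢ + μ` has at most one common value for distinct `μ ν`. -/
lemma inter_card_le_one {μ ν : Fin n →₀ ℕ} (hne : μ ≠ ν) :
    ((Finset.univ.image fun i : Fin n => Finsupp.single i 1 + μ) ∩
      (Finset.univ.image fun k : Fin n => Finsupp.single k 1 + ν)).card ≤ 1 := by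
  rw [Finset.card_le_one]
  intro x hx y hy
  simp only [Finset.mem_inter, Finset.mem_image, Finset.mem_univ, true_and] at hx hy
  obtain ⟨⟨i, hix⟩, ⟨k, hkx⟩⟩ := hx
  obtain ⟨⟨i', hiy⟩, ⟨k', hky⟩⟩ := hy
  have hki' : k' ≠ i' := by
    rintro rfl
    exact hne (add_left_cancel (hiy.trans hky.symm))
  have hx' : Finsupp.single i 1 + μ = Finsupp.single k 1 + ν := hix.trans hkx.symm
  have hy' : Finsupp.single i' 1 + μ = Finsupp.single k' 1 + ν := hiy.trans hky.symm
  have hxi' := DFunLike.congr_fun hx' i'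
  have hyi' := DFunLike.congr_fun hy' i'
  rw [Finsupp.add_apply, Finsupp.add_apply] at hxi' hyi'
  rw [Finsupp.single_eq_of_ne' hki', Finsupp.single_eq_same] at hyi'
  have hii' : i = i' := by
    by_contra hii
    rw [Finsupp.single_eq_of_ne' hii] at hxi'
    have hbk : (Finsupp.single k 1 : Fin n →₀ ℕ) i' ≤ 1 := by
      rw [Finsupp.single_apply]; split <;> omega
    omega
  subst hii'
  rw [← hix, ← hiy]

lemma card_biUnion_ge (s : Finset (Fin n →₀ ℕ)) :
    ∑ j ∈ Finset.range s.card, (n - j) ≤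
      (s.biUnion fun μ => Finset.univ.image fun i : Fin n => Finsupp.single i 1 + μ).card := by
  classical
  induction s using Finset.induction_on with
  | empty => simp
  | @insert a s ha ih =>
    rw [Finset.card_insert_of_notMem ha, Finset.sum_range_succ, Finset.biUnion_insert]
    set A := Finset.univ.image fun i : Fin n => Finsupp.single i 1 + a with hA
    set B := s.biUnion fun μ => Finset.univ.image fun i : Fin n => Finsupp.single i 1 + μ with hB
    have hAcard : A.card = n := by
      rw [hA, Finset.card_image_of_injective _ (fun i j hij => by
        have := add_right_cancel hij
        exact Finsupp.single_left_injective one_ne_zero this), Finset.card_univ, Fintype.card_fin]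
    have hABle : (A ∩ B).card ≤ s.card := by
      have hsub : A ∩ B ⊆ s.biUnion fun μ =>
          A ∩ (Finset.univ.image fun i : Fin n => Finsupp.single i 1 + μ) := by
        intro x hx
        rw [Finset.mem_inter, hB, Finset.mem_biUnion] at hx
        obtain ⟨hxA, μ, hμ, hxμ⟩ := hx
        exact Finset.mem_biUnion.mpr ⟨μ, hμ, Finset.mem_inter.mpr ⟨hxA, hxμ⟩⟩
      calc (A ∩ B).card ≤ _ := Finset.card_le_card hsub
        _ ≤ ∑ μ ∈ s, (A ∩ (Finset.univ.image fun i : Fin n => Finsupp.single i 1 + μ)).card :=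
          Finset.card_biUnion_le
        _ ≤ ∑ _μ ∈ s, 1 := Finset.sum_le_sum (fun μ hμ =>
            inter_card_le_one (fun e => ha (e ▸ hμ)))
        _ = s.card := by simp
    have hsdiff : n - s.card ≤ (A \ B).card := by
      have : A.card ≤ (A \ B).card + (A ∩ B).card := by
        rw [Finset.card_sdiff_add_card_inter]
      omega
    calc ∑ j ∈ Finset.range s.card, (n - j) + (n - s.card)
        ≤ B.card + (A \ B).card := Nat.add_le_add ih hsdiff
      _ = (A ∪ B).card := by
          rw [add_comm, Finset.card_sdiff_add_card]
end IdealPieceAux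

open IdealPieceAux

set_option maxHeartbeats 1000000 in
/-- If `I ⊆ ℂ[z₁,…,zₙ]` is generated by `P` linearly independent homogeneous
polynomials of degree `m`, with `P < n`, then `dim_ℂ I_{m+1} ≥ nP − P(P−1)/2`. -/
theorem ideal_piece_dim_lower_bound (n m P : ℕ) (hPn : P < n)
    (f : Fin P → MvPolynomial (Fin n) ℂ)
    (hf : ∀ j, (f j).IsHomogeneous m)
    (hind : LinearIndependent ℂ f) :
    n * P - P * (P - 1) / 2 ≤
      Module.finrank ℂ
        ((Submodule.restrictScalars ℂ (Ideal.span (Set.range f))) ⊓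
          homogeneousSubmodule (Fin n) ℂ (m + 1) :
          Submodule ℂ (MvPolynomial (Fin n) ℂ)) := by
  classical
  have mo : MonomialOrder (Fin n) := MonomialOrder.lex
  set V : Submodule ℂ (MvPolynomial (Fin n) ℂ) := Submodule.span ℂ (Set.range f) with hV
  set W : Submodule ℂ (MvPolynomial (Fin n) ℂ) :=
    (Submodule.restrictScalars ℂ (Ideal.span (Set.range f))) ⊓
      homogeneousSubmodule (Fin n) ℂ (m + 1) with hW
  -- the finite set of all monomials appearing in elements of V
  set T : Finset (Fin n →₀ ℕ) := Finset.univ.biUnion (fun j => (f j).support) with hT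
  have hTV : ∀ v ∈ V, v.support ⊆ T := by
    intro v hv
    induction hv using Submodule.span_induction with
    | mem x hx =>
      obtain ⟨j, rfl⟩ := hx
      intro μ hμ
      exact Finset.mem_biUnion.mpr ⟨j, Finset.mem_univ j, hμ⟩
    | zero => simp
    | add x y hx hy ihx ihy =>
      exact fun μ hμ => by
        rcases Finset.mem_union.mp (Finsupp.support_add hμ) with h | h
        · exact ihx h
        · exact ihy h
    | smul a x hx ihx =>
      exact fun μ hμ => ihx (Finsupp.support_smul hμ)
  -- the set of leading monomials of V
  set S : Finset (Fin n →₀ ℕ) :=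
    T.filter (fun μ => ∃ v ∈ V, v ≠ 0 ∧ mdeg mo v = (mo.toSyn μ : WithBot mo.syn)) with hS
  -- upper part : P ≤ S.card
  have hPS : P ≤ S.card := by
    have hφinj : Function.Injective
        (LinearMap.pi (fun μ : {x // x ∈ S} =>
          (MvPolynomial.lcoeff ℂ μ.1).comp V.subtype) : V →ₗ[ℂ] ({x // x ∈ S} → ℂ)) := by
      rw [← LinearMap.ker_eq_bot, LinearMap.ker_eq_bot']
      intro v hv
      by_contra hv0
      have hv0' : (v : MvPolynomial (Fin n) ℂ) ≠ 0 := fun e => hv0 (Subtype.ext e)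
      obtain ⟨μ, hμ, hdeg⟩ := exists_mdeg mo hv0'
      have hμS : μ ∈ S := by
        rw [hS, Finset.mem_filter]
        exact ⟨hTV v v.2 hμ, v, v.2, hv0', hdeg⟩
      have := congrFun hv ⟨μ, hμS⟩
      simp only [LinearMap.pi_apply, LinearMap.comp_apply, Submodule.subtype_apply,
        MvPolynomial.lcoeff_apply, Pi.zero_apply] at this
      exact MvPolynomial.mem_support_iff.mp hμ this
    have h1 : Module.finrank ℂ V ≤ Module.finrank ℂ ({x // x ∈ S} → ℂ) :=
      LinearMap.finrank_le_finrank_of_injective hφinj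
    rw [Module.finrank_pi, Fintype.card_coe] at h1
    rw [hV, finrank_span_eq_card hind, Fintype.card_fin] at h1
    exact h1
  -- select P of them
  obtain ⟨S', hS'sub, hS'card⟩ := Finset.exists_subset_card_eq hPS
  -- choose witnesses
  have hwit : ∀ μ ∈ S', ∃ v, v ∈ V ∧ v ≠ 0 ∧ mdeg mo v = (mo.toSyn μ : WithBot mo.syn) := by
    intro μ hμ
    have := Finset.mem_filter.mp (hS'sub hμ)
    obtain ⟨v, hvV, hv0, hvd⟩ := this.2
    exact ⟨v, hvV, hv0, hvd⟩
  choose g hgV hg0 hgdeg using hwit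
  -- V is contained in the ideal and in the homogeneous part of degree m
  have hVI : V ≤ Submodule.restrictScalars ℂ (Ideal.span (Set.range f)) := by
    rw [hV, Submodule.span_le]
    intro x hx
    exact Ideal.subset_span hx
  have hVH : V ≤ homogeneousSubmodule (Fin n) ℂ m := by
    rw [hV, Submodule.span_le]
    rintro x ⟨j, rfl⟩
    exact (mem_homogeneousSubmodule _ _).mpr (hf j)
  -- the big finset of monomials in degree m+1
  set U : Finset (Fin n →₀ ℕ) :=
    S'.biUnion (fun μ => Finset.univ.image fun i : Fin n => Finsupp.single i 1 + μ) with hU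
  -- witnesses for U
  have hUwit : ∀ ν ∈ U, ∃ w, w ∈ W ∧ w ≠ 0 ∧ mdeg mo w = (mo.toSyn ν : WithBot mo.syn) := by
    intro ν hν
    rw [hU, Finset.mem_biUnion] at hν
    obtain ⟨μ, hμ, hν'⟩ := hν
    simp only [Finset.mem_image, Finset.mem_univ, true_and] at hν'
    obtain ⟨i, rfl⟩ := hν'
    refine ⟨X i * g μ hμ, ?_, ?_, ?_⟩
    · refine Submodule.mem_inf.mpr ⟨Ideal.mul_mem_left _ _ (hVI (hgV μ hμ)), ?_⟩
      have hgh : (g μ hμ).IsHomogeneous m :=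
        (mem_homogeneousSubmodule _ _).mp (hVH (hgV μ hμ))
      have hh : (X i * g μ hμ).IsHomogeneous (1 + m) :=
        (isHomogeneous_X ℂ i).mul hgh
      rw [add_comm 1 m] at hh
      exact (mem_homogeneousSubmodule _ _).mpr hh
    · intro habs
      have hd := mdeg_X_mul mo i ?_ (hgdeg μ hμ)
      · rw [habs, mdeg_zero] at hd
        exact absurd hd.symm WithBot.coe_ne_bot
      · obtain ⟨τ, hτ, hdd⟩ := exists_mdeg mo (hg0 μ hμ)
        have : mo.toSyn τ = mo.toSyn μ := WithBot.coe_injective ((hgdeg μ hμ) ▸ hdd).symm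
        have := mo.toSyn.injective this
        exact this ▸ hτ
    · apply mdeg_X_mul mo i ?_ (hgdeg μ hμ)
      obtain ⟨τ, hτ, hdd⟩ := exists_mdeg mo (hg0 μ hμ)
      have : mo.toSyn τ = mo.toSyn μ := WithBot.coe_injective ((hgdeg μ hμ) ▸ hdd).symm
      have := mo.toSyn.injective this
      exact this ▸ hτ
  choose w hwW hw0 hwdeg using hUwit
  -- linear independence of the witnesses
  have hindep : LinearIndependent ℂ (fun ν : {x // x ∈ U} => w ν.1 ν.2) := by
    refine linearIndependent_of_mdeg_inj mo (fun ν : {x // x ∈ U} => w ν.1 ν.2)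
      (fun ν => hw0 ν.1 ν.2) ?_
    intro ν₁ ν₂ he
    simp only at he
    rw [hwdeg ν₁.1 ν₁.2, hwdeg ν₂.1 ν₂.2] at he
    exact Subtype.ext (mo.toSyn.injective (WithBot.coe_injective he))
  -- W is finite dimensional
  have hWle : W ≤ restrictTotalDegree (Fin n) ℂ (m + 1) := by
    intro x hx
    rw [mem_restrictTotalDegree]
    have hxh : x.IsHomogeneous (m + 1) :=
      (mem_homogeneousSubmodule _ _).mp hx.2
    exact hxh.totalDegree_le
  haveI : FiniteDimensional ℂ (restrictTotalDegree (Fin n) ℂ (m + 1)) := by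
    infer_instance
  haveI : FiniteDimensional ℂ W := Submodule.finiteDimensional_of_le hWle
  -- transfer independence into W
  have hindepW : LinearIndependent ℂ
      (fun ν : {x // x ∈ U} => (⟨w ν.1 ν.2, hwW ν.1 ν.2⟩ : W)) := by
    apply LinearIndependent.of_comp W.subtype
    exact hindep
  have hUW : U.card ≤ Module.finrank ℂ W := by
    have := hindepW.fintype_card_le_finrank
    rwa [Fintype.card_coe] at this
  -- lower combinatorial bound
  have hcomb : ∑ j ∈ Finset.range P, (n - j) ≤ U.card := by
    have := card_biUnion_ge S'
    rwa [hS'card] at this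
  -- arithmetic
  have harith : n * P - P * (P - 1) / 2 ≤ ∑ j ∈ Finset.range P, (n - j) := by
    have h1 : ∑ j ∈ Finset.range P, (n - j) + ∑ j ∈ Finset.range P, j = n * P := by
      rw [← Finset.sum_add_distrib]
      have : ∀ j ∈ Finset.range P, (n - j) + j = n := fun j hj => by
        have := Finset.mem_range.mp hj
        omega
      rw [Finset.sum_congr rfl this, Finset.sum_const, Finset.card_range, smul_eq_mul, mul_comm]
    have h2 : (∑ j ∈ Finset.range P, j) * 2 = P * (P - 1) := Finset.sum_range_id_mul_two P
    generalize hq : n * P = q at *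
    generalize hk : P * (P - 1) = k at *
    omega
  exact le_trans harith (le_trans hcomb hUW)
end

section
/- Let I be a homogeneous ideal in ℂ[z_1,…,z_n] generated by at least n linearly independent homogeneous polynomials of degree m. Then dim_ℂ I_{m+1} ≥ n(n+1)/2. -/
open MvPolynomial Finset
open scoped MonomialOrder

section Aux

variable {n : ℕ}

/-- The lexicographic monomial order on `Fin n →₀ ℕ`. -/
noncomputable abbrev ordn (n : ℕ) : MonomialOrder (Fin n) := MonomialOrder.lex

/-- `d` is the leading monomial of `p` (w.r.t. lex). -/
def IsLM (p : MvPolynomial (Fin n) ℂ) (d : Fin n →₀ ℕ) : Prop :=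
  d ∈ p.support ∧ ∀ e ∈ p.support, (ordn n).toSyn e ≤ (ordn n).toSyn d

lemma exists_isLM {p : MvPolynomial (Fin n) ℂ} (hp : p ≠ 0) : ∃ d, IsLM p d := by
  obtain ⟨d, hd, hmax⟩ := Finset.exists_max_image p.support (ordn n).toSyn
    (MvPolynomial.support_nonempty.2 hp)
  exact ⟨d, hd, hmax⟩

lemma isLM_X_mul {p : MvPolynomial (Fin n) ℂ} {d : Fin n →₀ ℕ} (h : IsLM p d) (i : Fin n) :
    IsLM (X i * p) (Finsupp.single i 1 + d) := by
  constructor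
  · rw [support_X_mul, Finset.mem_map]
    exact ⟨d, h.1, rfl⟩
  · intro e he
    rw [support_X_mul, Finset.mem_map] at he
    obtain ⟨e', he', rfl⟩ := he
    simp only [addLeftEmbedding_apply, map_add]
    exact add_le_add le_rfl (h.2 e' he')

/-- Polynomials with distinct leading monomials are linearly independent. -/
lemma linearIndependent_of_isLM {ι : Type*} (v : ι → MvPolynomial (Fin n) ℂ)
    (d : ι → Fin n →₀ ℕ) (hv : ∀ i, IsLM (v i) (d i)) (hd : Function.Injective d) :
    LinearIndependent ℂ v := by
  rw [linearIndependent_iff']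
  intro s g hsum i hi
  by_contra hgi
  classical
  set s' := s.filter (fun j => g j ≠ 0) with hs'
  have hs'ne : s'.Nonempty := ⟨i, Finset.mem_filter.2 ⟨hi, hgi⟩⟩
  obtain ⟨k, hks', hkmax⟩ := Finset.exists_max_image s' (fun j => (ordn n).toSyn (d j)) hs'ne
  have hks : k ∈ s := (Finset.mem_filter.1 hks').1
  have hgk : g k ≠ 0 := (Finset.mem_filter.1 hks').2
  have hco : MvPolynomial.coeff (d k) (∑ j ∈ s, g j • v j) = 0 := by rw [hsum]; simp
  rw [MvPolynomial.coeff_sum] at hco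
  have : ∀ j ∈ s, j ≠ k → MvPolynomial.coeff (d k) (g j • v j) = 0 := by
    intro j hjs hjk
    rcases eq_or_ne (g j) 0 with h0 | h0
    · simp [h0]
    have hjl : (ordn n).toSyn (d j) ≤ (ordn n).toSyn (d k) :=
      hkmax j (Finset.mem_filter.2 ⟨hjs, h0⟩)
    have : MvPolynomial.coeff (d k) (v j) = 0 := by
      by_contra hne
      have hmem : d k ∈ (v j).support := MvPolynomial.mem_support_iff.2 hne
      have := (hv j).2 (d k) hmem
      have heq : (ordn n).toSyn (d j) = (ordn n).toSyn (d k) := le_antisymm hjl this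
      exact hjk (hd ((ordn n).toSyn.injective heq))
    simp [MvPolynomial.coeff_smul, this]
  rw [Finset.sum_eq_single k this (fun h => absurd hks h)] at hco
  rw [MvPolynomial.coeff_smul, smul_eq_mul, mul_eq_zero] at hco
  rcases hco with h | h
  · exact hgk h
  · exact MvPolynomial.mem_support_iff.1 (hv k).1 h

/-- Gaussian elimination: a finite family spans no more than the "one polynomial per
leading monomial" family extracted from its span. -/
lemma gaussian_elim {P : ℕ} (f : Fin P → MvPolynomial (Fin n) ℂ) :
    ∃ (L : Finset (Fin n →₀ ℕ)) (w : L → MvPolynomial (Fin n) ℂ),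
      (∀ d : L, w d ∈ Submodule.span ℂ (Set.range f) ∧ IsLM (w d) (d : Fin n →₀ ℕ)) ∧
      Submodule.span ℂ (Set.range f) ≤ Submodule.span ℂ (Set.range w) := by
  classical
  set V := Submodule.span ℂ (Set.range f) with hV
  set M : Finset (Fin n →₀ ℕ) := Finset.univ.biUnion (fun j => (f j).support) with hM
  have hsupp : ∀ v ∈ V, v.support ⊆ M := by
    intro v hv
    induction hv using Submodule.span_induction with
    | mem x hx =>
      obtain ⟨j, rfl⟩ := hx
      exact fun d hd => Finset.mem_biUnion.2 ⟨j, Finset.mem_univ j, hd⟩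
    | zero => simp
    | add x y _ _ hx hy =>
      exact fun d hd => by
        rcases Finset.mem_union.1 (MvPolynomial.support_add hd) with h | h
        · exact hx h
        · exact hy h
    | smul c x _ hx => exact fun d hd => hx (Finsupp.support_smul hd)
  set L : Finset (Fin n →₀ ℕ) := M.filter (fun d => ∃ v ∈ V, IsLM v d) with hL
  have hwex : ∀ d : L, ∃ v, v ∈ V ∧ IsLM v (d : Fin n →₀ ℕ) := by
    rintro ⟨d, hd⟩
    obtain ⟨v, hv, hlm⟩ := (Finset.mem_filter.1 hd).2
    exact ⟨v, hv, hlm⟩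
  choose w hwV hwLM using hwex
  refine ⟨L, w, fun d => ⟨hwV d, hwLM d⟩, ?_⟩
  have key : ∀ t : (ordn n).syn, ∀ v ∈ V, (∀ e ∈ v.support, (ordn n).toSyn e ≤ t) →
      v ∈ Submodule.span ℂ (Set.range w) := by
    intro t
    induction t using WellFoundedLT.induction with
    | _ t IH =>
      intro v hvV hvt
      by_cases hv0 : v = 0
      · simp [hv0]
      obtain ⟨d, hd⟩ := exists_isLM hv0
      have hdL : d ∈ L := Finset.mem_filter.2 ⟨hsupp v hvV hd.1, v, hvV, hd⟩
      set d' : L := ⟨d, hdL⟩ with hd'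
      have hwd : MvPolynomial.coeff d (w d') ≠ 0 :=
        MvPolynomial.mem_support_iff.1 (hwLM d').1
      set c : ℂ := MvPolynomial.coeff d v / MvPolynomial.coeff d (w d') with hc
      set v' := v - c • w d' with hv'
      have hv'V : v' ∈ V := Submodule.sub_mem _ hvV (Submodule.smul_mem _ _ (hwV d'))
      have hv'supp : ∀ e ∈ v'.support, (ordn n).toSyn e < (ordn n).toSyn d := by
        intro e he
        have hco : MvPolynomial.coeff e v' ≠ 0 := MvPolynomial.mem_support_iff.1 he
        rcases lt_trichotomy ((ordn n).toSyn e) ((ordn n).toSyn d) with h | h | h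
        · exact h
        · exfalso
          have hed : e = d := (ordn n).toSyn.injective h
          apply hco
          rw [hv', hed]
          simp only [MvPolynomial.coeff_sub, MvPolynomial.coeff_smul, smul_eq_mul]
          rw [hc, div_mul_cancel₀ _ hwd, sub_self]
        · exfalso
          apply hco
          have h1 : MvPolynomial.coeff e v = 0 := by
            by_contra hne
            exact absurd (hd.2 e (MvPolynomial.mem_support_iff.2 hne)) (not_le.2 h)
          have h2 : MvPolynomial.coeff e (w d') = 0 := by
            by_contra hne
            exact absurd ((hwLM d').2 e (MvPolynomial.mem_support_iff.2 hne)) (not_le.2 h)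
          rw [hv']
          simp [MvPolynomial.coeff_sub, MvPolynomial.coeff_smul, h1, h2]
      have hvsum : v = v' + c • w d' := by rw [hv']; ring
      by_cases hv'0 : v' = 0
      · rw [hvsum, hv'0, zero_add]
        exact Submodule.smul_mem _ _ (Submodule.subset_span ⟨d', rfl⟩)
      · obtain ⟨e', he'⟩ := exists_isLM hv'0
        have hlt : (ordn n).toSyn e' < t :=
          lt_of_lt_of_le (hv'supp e' he'.1) (hvt d hd.1)
        have hv'W := IH ((ordn n).toSyn e') hlt v' hv'V (fun e he => he'.2 e he)
        rw [hvsum]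
        exact Submodule.add_mem _ hv'W
          (Submodule.smul_mem _ _ (Submodule.subset_span ⟨d', rfl⟩))
  rw [hV, Submodule.span_le]
  rintro _ ⟨j, rfl⟩
  by_cases h0 : f j = 0
  · simp [h0]
  obtain ⟨d, hd⟩ := exists_isLM h0
  exact key ((ordn n).toSyn d) (f j) (Submodule.subset_span ⟨j, rfl⟩) hd.2

/-- The combinatorial lemma: shifting a set of ≤ n exponents by the n unit vectors. -/
lemma shift_card_lower (n : ℕ) : ∀ (T : Finset (Fin n →₀ ℕ)), T.card ≤ n →
    T.card * (2 * n + 1) ≤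
      2 * ((Finset.univ ×ˢ T).image
        (fun p : Fin n × (Fin n →₀ ℕ) => Finsupp.single p.1 1 + p.2)).card
        + T.card * T.card := by
  classical
  intro T
  induction T using Finset.induction_on with
  | empty => simp
  | @insert μ T hμT IH =>
    intro hcard
    set g : Fin n × (Fin n →₀ ℕ) → (Fin n →₀ ℕ) := fun p => Finsupp.single p.1 1 + p.2 with hg
    set S : Finset (Fin n →₀ ℕ) := (Finset.univ ×ˢ T).image g with hS
    set A : Finset (Fin n →₀ ℕ) := Finset.univ.image (fun i : Fin n => Finsupp.single i 1 + μ) with hA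
    have hS' : (Finset.univ ×ˢ insert μ T).image g = S ∪ A := by
      ext s
      simp only [hS, hA, hg, Finset.mem_image, Finset.mem_product, Finset.mem_insert,
        Finset.mem_union, Finset.mem_univ, true_and, Prod.exists]
      constructor
      · rintro ⟨i, t, (rfl | ht), rfl⟩
        · exact Or.inr ⟨i, rfl⟩
        · exact Or.inl ⟨i, t, ht, rfl⟩
      · rintro (⟨i, t, ht, rfl⟩ | ⟨i, rfl⟩)
        · exact ⟨i, t, Or.inr ht, rfl⟩
        · exact ⟨i, μ, Or.inl rfl, rfl⟩
    have hcardA : A.card = n := by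
      rw [hA, Finset.card_image_of_injective _ (fun i j hij => ?_), Finset.card_univ,
        Fintype.card_fin]
      exact Finsupp.single_left_injective one_ne_zero (add_right_cancel hij)
    have hinter : (A ∩ S).card ≤ T.card := by
      have hwit : ∀ b ∈ A ∩ S, ∃ t ∈ T, ∃ j : Fin n, Finsupp.single j 1 + t = b := by
        intro b hb
        simp only [Finset.mem_inter, hS, Finset.mem_image] at hb
        obtain ⟨-, ⟨⟨j, t⟩, hjt, rfl⟩⟩ := hb
        rw [Finset.mem_product] at hjt
        exact ⟨t, hjt.2, j, rfl⟩
      choose F hFT hFeq using hwit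
      apply Finset.card_le_card_of_injOn (fun b => if hb : b ∈ A ∩ S then F b hb else 0)
      · intro b hb; simp only [Finset.mem_coe] at hb ⊢; simp only [hb, dif_pos]; exact hFT b hb
      · intro b hb b' hb' hFbb'
        simp only [Finset.mem_coe] at hb hb'
        simp only [hb, hb', dif_pos] at hFbb'
        obtain ⟨j, hj⟩ := hFeq b hb
        obtain ⟨j', hj'⟩ := hFeq b' hb'
        rw [hFbb'] at hj
        set t := F b' hb' with ht
        have htT : t ∈ T := hFT b' hb'
        have hiA : ∃ i, Finsupp.single i 1 + μ = b := by
          have := (Finset.mem_inter.1 hb).1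
          rw [hA, Finset.mem_image] at this
          obtain ⟨i, -, hi⟩ := this; exact ⟨i, hi⟩
        have hiA' : ∃ i, Finsupp.single i 1 + μ = b' := by
          have := (Finset.mem_inter.1 hb').1
          rw [hA, Finset.mem_image] at this
          obtain ⟨i, -, hi⟩ := this; exact ⟨i, hi⟩
        obtain ⟨i, hi⟩ := hiA
        obtain ⟨i', hi'⟩ := hiA'
        have hμt : μ ≠ t := fun h => hμT (h ▸ htT)
        have eq1 : Finsupp.single i 1 + μ = Finsupp.single j 1 + t := by rw [hi, ← hj]
        have eq2 : Finsupp.single i' 1 + μ = Finsupp.single j' 1 + t := by rw [hi', ← hj']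
        have hij : i ≠ j := by
          rintro rfl; exact hμt (add_left_cancel eq1)
        have hii' : i = i' := by
          by_contra hne
          have e1 := DFunLike.congr_fun eq1 i
          have e2 := DFunLike.congr_fun eq2 i
          simp only [Finsupp.add_apply, Finsupp.single_apply] at e1 e2
          rw [if_neg (Ne.symm hij)] at e1
          rw [if_neg (Ne.symm hne)] at e2
          simp only [if_true] at e1
          split_ifs at e2 <;> omega
        rw [← hi, ← hi', hii']
    have hunion : S.card + n ≤ ((Finset.univ ×ˢ insert μ T).image g).card + T.card := by
      rw [hS']
      have := Finset.card_union_add_card_inter S A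
      have hAS : (A ∩ S).card = (S ∩ A).card := by rw [Finset.inter_comm]
      omega
    have hTn : T.card ≤ n := by
      have := Finset.card_insert_of_notMem hμT
      omega
    have IH' := IH hTn
    rw [Finset.card_insert_of_notMem hμT]
    nlinarith [IH', hunion]

end Aux

/-- If `I ⊆ ℂ[z₁,…,zₙ]` is generated by at least `n` linearly independent homogeneous
polynomials of degree `m`, then `dim_ℂ I_{m+1} ≥ n(n+1)/2`. -/
theorem ideal_piece_dim_lower_bound_many_gens (n m P : ℕ) (hPn : n ≤ P)
    (f : Fin P → MvPolynomial (Fin n) ℂ)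
    (hf : ∀ j, (f j).IsHomogeneous m)
    (hind : LinearIndependent ℂ f) :
    n * (n + 1) / 2 ≤
      Module.finrank ℂ
        ((Submodule.restrictScalars ℂ (Ideal.span (Set.range f))) ⊓
          homogeneousSubmodule (Fin n) ℂ (m + 1) :
          Submodule ℂ (MvPolynomial (Fin n) ℂ)) := by
  classical
  set V := Submodule.span ℂ (Set.range f) with hV
  obtain ⟨L, w, hw, hVle⟩ := gaussian_elim f
  set N : Submodule ℂ (MvPolynomial (Fin n) ℂ) :=
    (Submodule.restrictScalars ℂ (Ideal.span (Set.range f))) ⊓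
      homogeneousSubmodule (Fin n) ℂ (m + 1) with hN
  -- `N` is finite dimensional
  have hNle : N ≤ restrictTotalDegree (Fin n) ℂ (m + 1) := by
    intro p hp
    rw [MvPolynomial.mem_restrictTotalDegree]
    exact ((MvPolynomial.mem_homogeneousSubmodule _ _).1 hp.2).totalDegree_le
  haveI : FiniteDimensional ℂ N := Submodule.finiteDimensional_of_le hNle
  -- step 1 : `n ≤ L.card`
  haveI : FiniteDimensional ℂ (Submodule.span ℂ (Set.range w)) :=
    FiniteDimensional.span_of_finite ℂ (Set.finite_range w)
  have hfW : ∀ j, f j ∈ Submodule.span ℂ (Set.range w) := fun j =>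
    hVle (Submodule.subset_span ⟨j, rfl⟩)
  have hindW : LinearIndependent ℂ
      (fun j => (⟨f j, hfW j⟩ : Submodule.span ℂ (Set.range w))) := by
    apply LinearIndependent.of_comp (Submodule.span ℂ (Set.range w)).subtype
    exact hind
  have hPle : P ≤ Module.finrank ℂ (Submodule.span ℂ (Set.range w)) := by
    simpa using hindW.fintype_card_le_finrank
  have hWle : Module.finrank ℂ (Submodule.span ℂ (Set.range w)) ≤ L.card := by
    have := finrank_range_le_card (R := ℂ) w
    simpa [Set.finrank, Fintype.card_coe] using this
  have hnL : n ≤ L.card := le_trans hPn (le_trans hPle hWle)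
  -- step 2 : choose `T ⊆ L` with `T.card = n`
  obtain ⟨T, hTL, hTcard⟩ := Finset.exists_subset_card_eq hnL
  -- step 3 : the shifted set `S`
  set g : Fin n × (Fin n →₀ ℕ) → (Fin n →₀ ℕ) := fun p => Finsupp.single p.1 1 + p.2 with hg
  set S : Finset (Fin n →₀ ℕ) := (Finset.univ ×ˢ T).image g with hS
  -- step 4 : for each element of S, a polynomial in N with that leading monomial
  have hSmem : ∀ s : S, ∃ (i : Fin n) (t : Fin n →₀ ℕ), t ∈ T ∧
      (s : Fin n →₀ ℕ) = Finsupp.single i 1 + t := by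
    rintro ⟨s, hs⟩
    simp only [hS, Finset.mem_image, Finset.mem_product, Finset.mem_univ, true_and,
      Prod.exists] at hs
    obtain ⟨i, t, ht, rfl⟩ := hs
    exact ⟨i, t, ht, rfl⟩
  choose is ts hts hseq using hSmem
  set u : S → MvPolynomial (Fin n) ℂ := fun s => X (is s) * w ⟨ts s, hTL (hts s)⟩ with hu
  have hVH : V ≤ homogeneousSubmodule (Fin n) ℂ m := by
    rw [hV, Submodule.span_le]
    rintro _ ⟨j, rfl⟩
    exact hf j
  have hVI : V ≤ Submodule.restrictScalars ℂ (Ideal.span (Set.range f)) := by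
    rw [hV, Submodule.span_le]
    exact fun x hx => Ideal.subset_span hx
  have humem : ∀ s : S, u s ∈ N := by
    intro s
    constructor
    · exact Ideal.mul_mem_left _ _ (hVI (hw ⟨ts s, hTL (hts s)⟩).1)
    · simp only [SetLike.mem_coe, MvPolynomial.mem_homogeneousSubmodule]
      have h1 : (X (is s) : MvPolynomial (Fin n) ℂ).IsHomogeneous 1 :=
        MvPolynomial.isHomogeneous_X _ _
      have h2 : (w ⟨ts s, hTL (hts s)⟩).IsHomogeneous m :=
        (MvPolynomial.mem_homogeneousSubmodule _ _).1 (hVH (hw ⟨ts s, hTL (hts s)⟩).1)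
      have := h1.mul h2
      rwa [add_comm] at this
  have huLM : ∀ s : S, IsLM (u s) (s : Fin n →₀ ℕ) := by
    intro s
    rw [hseq s]
    exact isLM_X_mul (hw ⟨ts s, hTL (hts s)⟩).2 (is s)
  have huind : LinearIndependent ℂ u :=
    linearIndependent_of_isLM u (fun s => (s : Fin n →₀ ℕ)) huLM Subtype.val_injective
  have hNind : LinearIndependent ℂ (fun s : S => (⟨u s, humem s⟩ : N)) := by
    apply LinearIndependent.of_comp N.subtype
    exact huind
  have hScard : S.card ≤ Module.finrank ℂ N := by
    have := hNind.fintype_card_le_finrank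
    simpa [Fintype.card_coe] using this
  -- step 5 : the combinatorial bound
  have hcomb := shift_card_lower n T (le_of_eq hTcard)
  rw [hTcard] at hcomb
  have hid : n * (2 * n + 1) = n * (n + 1) + n * n := by ring
  have h2 : n * (n + 1) ≤ 2 * S.card := by
    rw [← hg, ← hS] at hcomb
    linarith
  have h3 : n * (n + 1) / 2 ≤ S.card := by
    have h4 : n * (n + 1) / 2 ≤ 2 * S.card / 2 := Nat.div_le_div_right h2
    rwa [Nat.mul_div_cancel_left _ (by norm_num : 0 < 2)] at h4
  exact le_trans h3 hScard
end

section
/- If r(z,z̄) = ‖f(z)‖² for a homogeneous holomorphic polynomial map f with P components (P minimal, i.e., components linearly independent), and d ≥ 1, then the rank ρ of the bihomogeneous polynomial r(z,z̄)·‖z‖^{2d} satisfies: either nP − P(P−1)/2 ≤ ρ ≤ nP for some natural number P' = P < n, or ρ ≥ n(n+1)/2. -/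
open MvPolynomial

namespace RankAux

variable {n : ℕ}

/-- leading monomial w.r.t. lex order -/
noncomputable def lm (p : MvPolynomial (Fin n) ℂ) : Fin n →₀ ℕ :=
  ofLex (p.support.sup toLex)

lemma lm_mem {p : MvPolynomial (Fin n) ℂ} (hp : p ≠ 0) : lm p ∈ p.support := by
  obtain ⟨b, hb, he⟩ := Finset.exists_mem_eq_sup p.support
    (Finset.nonempty_iff_ne_empty.mpr (fun h => hp (support_eq_empty.mp h))) toLex
  rw [lm, he]
  exact hb

lemma le_lm {p : MvPolynomial (Fin n) ℂ} {s : Fin n →₀ ℕ} (hs : s ∈ p.support) :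
    toLex s ≤ toLex (lm p) := by
  rw [lm]
  exact Finset.le_sup hs

lemma coeff_lm_ne {p : MvPolynomial (Fin n) ℂ} (hp : p ≠ 0) : coeff (lm p) p ≠ 0 :=
  mem_support_iff.mp (lm_mem hp)

lemma coeff_eq_zero_of_lm_lt {p : MvPolynomial (Fin n) ℂ} {s : Fin n →₀ ℕ}
    (h : toLex (lm p) < toLex s) : coeff s p = 0 := by
  by_contra hc
  exact absurd (le_lm (mem_support_iff.mpr hc)) (not_le.mpr h)

lemma lm_monomial_mul {p : MvPolynomial (Fin n) ℂ} (hp : p ≠ 0) (β : Fin n →₀ ℕ) :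
    lm (monomial β (1:ℂ) * p) = β + lm p := by
  have hmem : β + lm p ∈ (monomial β (1:ℂ) * p).support := by
    rw [mem_support_iff, coeff_monomial_mul, one_mul]
    exact coeff_lm_ne hp
  have h1 : toLex (β + lm p) ≤ toLex (lm (monomial β (1:ℂ) * p)) := le_lm hmem
  have h2 : toLex (lm (monomial β (1:ℂ) * p)) ≤ toLex (β + lm p) := by
    have hne : monomial β (1:ℂ) * p ≠ 0 := by
      exact mul_ne_zero (by simp [monomial_eq_zero]) hp
    have hs := lm_mem hne
    rw [mem_support_iff, coeff_monomial_mul'] at hs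
    split_ifs at hs with hβ
    · rw [one_mul] at hs
      have : toLex (lm (monomial β (1:ℂ) * p) - β) ≤ toLex (lm p) :=
        le_lm (mem_support_iff.mpr hs)
      have e : β + (lm (monomial β (1:ℂ) * p) - β) = lm (monomial β (1:ℂ) * p) :=
        add_tsub_cancel_of_le hβ
      have e2 : toLex (lm (monomial β (1:ℂ) * p))
          = toLex β + toLex (lm (monomial β (1:ℂ) * p) - β) := by
        conv_lhs => rw [← e]
        exact toLex_add _ _
      rw [e2]
      calc toLex β + toLex (lm (monomial β (1:ℂ) * p) - β)
          ≤ toLex β + toLex (lm p) := add_le_add le_rfl this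
        _ = toLex (β + lm p) := (toLex_add _ _).symm
    · exact absurd rfl hs
  exact toLex.injective (le_antisymm h2 h1)

lemma linearIndependent_of_distinct_lm {ι : Type*} (v : ι → MvPolynomial (Fin n) ℂ)
    (h0 : ∀ i, v i ≠ 0) (hinj : ∀ i j, lm (v i) = lm (v j) → i = j) :
    LinearIndependent ℂ v := by
  classical
  rw [linearIndependent_iff']
  intro s g hsum i hi
  by_contra hgi
  set s' := s.filter (fun j => g j ≠ 0) with hs'
  have hs'ne : s'.Nonempty := ⟨i, Finset.mem_filter.mpr ⟨hi, hgi⟩⟩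
  obtain ⟨j, hjs', hjmax⟩ := Finset.exists_max_image s' (fun j => toLex (lm (v j))) hs'ne
  have hjs : j ∈ s := (Finset.mem_filter.mp hjs').1
  have hgj : g j ≠ 0 := (Finset.mem_filter.mp hjs').2
  have hc := congrArg (coeff (lm (v j))) hsum
  rw [coeff_zero] at hc
  rw [coeff_sum] at hc
  rw [Finset.sum_eq_single j] at hc
  · rw [coeff_smul, smul_eq_mul] at hc
    exact hgj (by
      rcases mul_eq_zero.mp hc with h | h
      · exact h
      · exact absurd h (coeff_lm_ne (h0 j)))
  · intro k hks hkj
    by_cases hgk : g k = 0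
    · simp [hgk]
    · have hks' : k ∈ s' := Finset.mem_filter.mpr ⟨hks, hgk⟩
      have hlt : toLex (lm (v k)) < toLex (lm (v j)) :=
        lt_of_le_of_ne (hjmax k hks') (fun h => hkj (hinj k j (toLex.injective h)))
      rw [coeff_smul, coeff_eq_zero_of_lm_lt hlt, smul_zero]
  · intro h
    exact absurd hjs h

lemma card_le_finrank (W : Submodule ℂ (MvPolynomial (Fin n) ℂ)) [FiniteDimensional ℂ W]
    (T : Finset (Fin n →₀ ℕ))
    (h : ∀ τ ∈ T, ∃ p : MvPolynomial (Fin n) ℂ, p ≠ 0 ∧ p ∈ W ∧ lm p = τ) :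
    T.card ≤ Module.finrank ℂ W := by
  classical
  choose! w h0 hW hlm using h
  have hli : LinearIndependent ℂ (fun τ : T => (⟨w τ, hW τ τ.2⟩ : W)) := by
    apply LinearIndependent.of_comp W.subtype
    exact linearIndependent_of_distinct_lm _ (fun τ => h0 τ τ.2)
      (fun τ τ' hE => Subtype.ext (by
        simp only [Function.comp, Submodule.coe_subtype] at hE
        rw [← hlm τ τ.2, ← hlm τ' τ'.2]; exact hE))
  simpa [Fintype.card_coe] using hli.fintype_card_le_finrank

section Expand

open Finsupp

variable (n) in
noncomputable def expand (M : Finset (Fin n →₀ ℕ)) : Finset (Fin n →₀ ℕ) := by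
  classical
  exact M.biUnion fun μ => Finset.univ.image fun i : Fin n => μ + Finsupp.single i 1

lemma mem_expand {M : Finset (Fin n →₀ ℕ)} {τ : Fin n →₀ ℕ} :
    τ ∈ expand n M ↔ ∃ μ ∈ M, ∃ i : Fin n, τ = μ + Finsupp.single i 1 := by
  classical
  simp [expand, eq_comm]

lemma unique_index {μ ν : Fin n →₀ ℕ} (hne : μ ≠ ν) {i i' j j' : Fin n}
    (h1 : μ + Finsupp.single i 1 = ν + Finsupp.single j 1)
    (h2 : μ + Finsupp.single i' 1 = ν + Finsupp.single j' 1) : i = i' := by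
  have hij : i ≠ j := by
    rintro rfl
    exact hne (add_right_cancel h1)
  have key : Finsupp.single i 1 + Finsupp.single j' 1
      = Finsupp.single i' 1 + Finsupp.single j 1 := by
    have : μ + (Finsupp.single i 1 + Finsupp.single j' 1)
        = μ + (Finsupp.single i' 1 + Finsupp.single j 1) := by
      calc μ + (Finsupp.single i 1 + Finsupp.single j' 1)
          = (μ + Finsupp.single i 1) + Finsupp.single j' 1 := by rw [add_assoc]
        _ = (ν + Finsupp.single j 1) + Finsupp.single j' 1 := by rw [h1]
        _ = (ν + Finsupp.single j' 1) + Finsupp.single j 1 := by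
            rw [add_assoc, add_assoc, add_comm (Finsupp.single j 1)]
        _ = (μ + Finsupp.single i' 1) + Finsupp.single j 1 := by rw [h2]
        _ = μ + (Finsupp.single i' 1 + Finsupp.single j 1) := by rw [add_assoc]
    exact add_left_cancel this
  by_contra hii'
  have hji : ¬ (j = i) := fun h => hij h.symm
  have hi'i : ¬ (i' = i) := fun h => hii' h.symm
  have := DFunLike.congr_fun key i
  simp only [Finsupp.add_apply, Finsupp.single_apply, if_pos rfl, hji, hi'i, if_neg,
    not_false_iff] at this
  split_ifs at this

lemma card_expand_ge (M : Finset (Fin n →₀ ℕ)) :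
    ∑ k ∈ Finset.range (min M.card n), (n - k) ≤ (expand n M).card := by
  classical
  induction M using Finset.induction_on with
  | empty => simp
  | @insert μ M hμM ih =>
    have hsplit : expand n (insert μ M)
        = (Finset.univ.image fun i : Fin n => μ + Finsupp.single i 1) ∪ expand n M := by
      apply Finset.ext
      intro τ
      simp only [mem_expand, Finset.mem_union, Finset.mem_image, Finset.mem_univ, true_and,
        Finset.mem_insert]
      constructor
      · rintro ⟨ν, (rfl | hν), i, rfl⟩
        · exact Or.inl ⟨i, rfl⟩
        · exact Or.inr ⟨ν, hν, i, rfl⟩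
      · rintro (⟨i, rfl⟩ | ⟨ν, hν, i, rfl⟩)
        · exact ⟨μ, Or.inl rfl, i, rfl⟩
        · exact ⟨ν, Or.inr hν, i, rfl⟩
    set A := (Finset.univ.image fun i : Fin n => μ + Finsupp.single i 1) with hA
    set bad := Finset.univ.filter (fun i : Fin n => μ + Finsupp.single i 1 ∈ expand n M) with hbad
    have hinj : Function.Injective (fun i : Fin n => μ + Finsupp.single i 1) := by
      intro i i' h
      exact Finsupp.single_left_injective one_ne_zero (add_left_cancel h)
    have hbadcard : bad.card ≤ M.card := by
      have hex : ∀ i ∈ bad, ∃ ν ∈ M, ∃ j : Fin n, μ + Finsupp.single i 1 = ν + Finsupp.single j 1 := by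
        intro i hi
        exact mem_expand.mp (Finset.mem_filter.mp hi).2
      choose ν hν j hj using hex
      apply Finset.card_le_card_of_injOn (fun i => if h : i ∈ bad then ν i h else μ)
      · intro i hi
        simp only [Finset.mem_coe] at hi
        simp only [dif_pos hi]
        exact hν i hi
      · intro a ha b hb hab
        simp only [Finset.mem_coe] at ha hb
        simp only [dif_pos ha, dif_pos hb] at hab
        have hμa : μ ≠ ν a ha := fun h => hμM (h ▸ hν a ha)
        exact unique_index hμa (hj a ha) (hab ▸ hj b hb)
    have h1 : A.card = n := by
      rw [hA, Finset.card_image_of_injective _ hinj, Finset.card_univ, Fintype.card_fin]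
    have h2 : (A ∩ expand n M).card ≤ bad.card := by
      have hsub : A ∩ expand n M ⊆ bad.image (fun i : Fin n => μ + Finsupp.single i 1) := by
        intro τ hτ
        obtain ⟨hτA, hτE⟩ := Finset.mem_inter.mp hτ
        obtain ⟨i, _, hi⟩ := Finset.mem_image.mp hτA
        refine Finset.mem_image.mpr ⟨i, ?_, hi⟩
        refine Finset.mem_filter.mpr ⟨Finset.mem_univ _, ?_⟩
        rw [hi]
        exact hτE
      exact (Finset.card_le_card hsub).trans Finset.card_image_le
    have h3 := Finset.card_inter_add_card_sdiff A (expand n M)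
    have h4 := Finset.card_sdiff_add_card A (expand n M)
    have hcard : (expand n M).card + (n - M.card) ≤ (expand n (insert μ M)).card := by
      rw [hsplit]
      omega
    have harith : ∑ k ∈ Finset.range (min (insert μ M).card n), (n - k)
        ≤ (∑ k ∈ Finset.range (min M.card n), (n - k)) + (n - M.card) := by
      rw [Finset.card_insert_of_notMem hμM]
      rcases le_or_gt (M.card + 1) n with h | h
      · rw [min_eq_left h, min_eq_left (by omega), Finset.sum_range_succ]
      · rw [min_eq_right (by omega), min_eq_right (by omega)]
        omega
    omega

lemma degree_add' (a b : Fin n →₀ ℕ) :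
    Finsupp.degree (a + b) = Finsupp.degree a + Finsupp.degree b := by
  simp only [Finsupp.degree_eq_weight_one]
  exact map_add _ a b

lemma degree_single' (i : Fin n) (k : ℕ) : Finsupp.degree (Finsupp.single i k) = k := by
  rcases Nat.eq_zero_or_pos k with rfl | hk
  · simp [map_zero]
  · exact Finsupp.degree_single i k

variable (n) in
noncomputable def bset : ℕ → Finset (Fin n →₀ ℕ)
  | 0 => {0}
  | (k+1) => expand n (bset k)

lemma degree_bset {k : ℕ} {τ : Fin n →₀ ℕ} (hτ : τ ∈ bset n k) : Finsupp.degree τ = k := by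
  induction k generalizing τ with
  | zero =>
    simp only [bset, Finset.mem_singleton] at hτ
    subst hτ
    exact map_zero _
  | succ k ih =>
    obtain ⟨μ, hμ, i, rfl⟩ := mem_expand.mp hτ
    rw [degree_add', ih hμ, degree_single']

lemma card_bset_one : (bset n 1).card = n := by
  have : bset n 1 = Finset.univ.image (fun i : Fin n => (0 : Fin n →₀ ℕ) + Finsupp.single i 1) := by
    apply Finset.ext
    intro τ
    simp [bset, mem_expand, eq_comm]
  rw [this, Finset.card_image_of_injective, Finset.card_univ, Fintype.card_fin]
  intro i j h
  exact Finsupp.single_left_injective one_ne_zero (add_left_cancel h)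

set_option maxHeartbeats 2000000 in
lemma card_le_card_expand (hn : 0 < n) (M : Finset (Fin n →₀ ℕ)) :
    M.card ≤ (expand n M).card := by
  classical
  have hsub : M.image (fun μ => μ + Finsupp.single ⟨0, hn⟩ 1) ⊆ expand n M := by
    intro τ hτ
    obtain ⟨μ, hμ, rfl⟩ := Finset.mem_image.mp hτ
    exact mem_expand.mpr ⟨μ, hμ, ⟨0, hn⟩, rfl⟩
  calc M.card = (M.image (fun μ => μ + Finsupp.single ⟨0, hn⟩ 1)).card := by
        rw [Finset.card_image_of_injective _ (add_left_injective _)]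
    _ ≤ (expand n M).card := Finset.card_le_card hsub

lemma card_bset_ge (hn : 0 < n) {k : ℕ} (hk : 2 ≤ k) :
    ∑ j ∈ Finset.range n, (n - j) ≤ (bset n k).card := by
  induction k with
  | zero => omega
  | succ k ih =>
    rcases Nat.lt_or_ge k 2 with h | h
    · -- k = 1, i.e. bset n 2 = expand (bset n 1)
      have hk1 : k = 1 := by omega
      subst hk1
      have := card_expand_ge (n := n) (bset n 1)
      rw [card_bset_one, min_self] at this
      exact this
    · calc ∑ j ∈ Finset.range n, (n - j) ≤ (bset n k).card := ih h
        _ ≤ (expand n (bset n k)).card := card_le_card_expand hn _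
        _ = (bset n (k+1)).card := rfl

end Expand

section Arith

lemma sum_bound_lt {P : ℕ} (hPn : P ≤ n) :
    n * P - P * (P - 1) / 2 ≤ ∑ k ∈ Finset.range P, (n - k) := by
  have e : (∑ k ∈ Finset.range P, (n - k)) + (∑ k ∈ Finset.range P, k) = n * P := by
    rw [← Finset.sum_add_distrib]
    rw [Finset.sum_congr rfl (fun k hk => by
      have := Finset.mem_range.mp hk
      omega : ∀ k ∈ Finset.range P, (n - k) + k = n)]
    simp [Finset.sum_const, mul_comm]
  have h2 : (∑ k ∈ Finset.range P, k) * 2 = P * (P - 1) := by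
    rw [Finset.sum_range_id_mul_two]
  omega

lemma sum_bound_n (hn : 0 < n) :
    n * (n + 1) / 2 ≤ ∑ k ∈ Finset.range n, (n - k) := by
  obtain ⟨m, rfl⟩ : ∃ m, n = m + 1 := ⟨n - 1, by omega⟩
  have e : (∑ k ∈ Finset.range (m+1), ((m+1) - k)) + (∑ k ∈ Finset.range (m+1), k)
      = (m+1) * (m+1) := by
    rw [← Finset.sum_add_distrib]
    rw [Finset.sum_congr rfl (fun k hk => by
      have := Finset.mem_range.mp hk
      omega : ∀ k ∈ Finset.range (m+1), ((m+1) - k) + k = (m+1))]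
    simp [Finset.sum_const, mul_comm]
  have h2 : (∑ k ∈ Finset.range (m+1), k) * 2 = (m+1) * ((m+1) - 1) := by
    rw [Finset.sum_range_id_mul_two]
  have k1 : (m+1) * ((m+1) + 1) = (m+1) * m + 2 * (m+1) := by ring
  have k2 : (m+1) * (m+1) = (m+1) * m + (m+1) := by ring
  have k3 : (m+1) * ((m+1) - 1) = (m+1) * m := by simp
  omega

end Arith

section Algebra

lemma homogeneousComponent_mul_right {k m : ℕ} (a g : MvPolynomial (Fin n) ℂ)
    (hg : g.IsHomogeneous m) :
    homogeneousComponent (k + m) (a * g) = homogeneousComponent k a * g := by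
  induction a using MvPolynomial.induction_on' with
  | add p q hp hq => rw [add_mul, map_add, map_add, hp, hq, add_mul]
  | monomial s c =>
    have hmono : (monomial s c).IsHomogeneous (Finsupp.degree s) :=
      isHomogeneous_monomial c rfl
    have hprod : ((monomial s c) * g).IsHomogeneous (Finsupp.degree s + m) := hmono.mul hg
    rw [homogeneousComponent_of_mem ((mem_homogeneousSubmodule _ _).mpr hprod),
      homogeneousComponent_of_mem ((mem_homogeneousSubmodule _ _).mpr hmono)]
    by_cases hs : k = Finsupp.degree s
    · rw [if_pos (by omega), if_pos hs]
    · rw [if_neg (by omega), if_neg hs, zero_mul]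

lemma single_of_degree_one {s : Fin n →₀ ℕ} (hs : Finsupp.degree s = 1) :
    ∃ i, s = Finsupp.single i 1 := by
  have hs0 : s ≠ 0 := by
    intro h
    rw [h, map_zero] at hs
    omega
  obtain ⟨i, hi⟩ := Finsupp.support_nonempty_iff.mpr hs0
  have hile : s i ≤ 1 := hs ▸ Finsupp.le_degree i s
  have hige : 1 ≤ s i := by
    have := Finsupp.mem_support_iff.mp hi
    omega
  refine ⟨i, Finsupp.ext fun j => ?_⟩
  rcases eq_or_ne j i with rfl | hji
  · simp; omega
  · rw [Finsupp.single_apply, if_neg (Ne.symm hji)]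
    by_contra hj
    have hjmem : j ∈ s.support := Finsupp.mem_support_iff.mpr hj
    have hsub : ({i, j} : Finset (Fin n)) ⊆ s.support := by
      intro x hx
      rcases Finset.mem_insert.mp hx with rfl | hx
      · exact hi
      · rwa [Finset.mem_singleton.mp hx]
    have hsum : s i + s j ≤ Finsupp.degree s := by
      rw [Finsupp.degree]
      calc s i + s j = ∑ x ∈ ({i, j} : Finset (Fin n)), s x :=
            (Finset.sum_pair (Ne.symm hji)).symm
        _ ≤ ∑ x ∈ s.support, s x := Finset.sum_le_sum_of_subset hsub
    omega

lemma mul_mem_span_X_mul {q : MvPolynomial (Fin n) ℂ} (hq : q.IsHomogeneous 1)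
    (g : MvPolynomial (Fin n) ℂ) :
    q * g ∈ Submodule.span ℂ (Set.range fun i : Fin n => X i * g) := by
  rw [q.as_sum, Finset.sum_mul]
  apply Submodule.sum_mem
  intro s hs
  have hdeg : Finsupp.degree s = 1 := by
    rw [Finsupp.degree_eq_weight_one]
    exact hq (mem_support_iff.mp hs)
  obtain ⟨i, rfl⟩ := single_of_degree_one hdeg
  have hX : (X i : MvPolynomial (Fin n) ℂ) = monomial (Finsupp.single i 1) 1 := rfl
  have : monomial (Finsupp.single i 1) (coeff (Finsupp.single i 1) q) * g
      = (coeff (Finsupp.single i 1) q) • (X i * g) := by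
    rw [hX, ← smul_mul_assoc, MvPolynomial.smul_monomial, smul_eq_mul, mul_one]
  rw [this]
  exact Submodule.smul_mem _ _ (Submodule.subset_span ⟨i, rfl⟩)

end Algebra

end RankAux



open RankAux Finsupp

/-- Let `r = ‖f‖²` where `f` has `P` linearly independent homogeneous components of
degree `m` (so `P` is minimal), and let `d ≥ 1`.  The rank `ρ` of the bihomogeneous
polynomial `r(z,z̄)·‖z‖^{2d}` equals the dimension of the degree-`(m+d)` piece of the
ideal generated by the components of `f`.  Then either `P < n` and
`nP − P(P−1)/2 ≤ ρ ≤ nP`, or `ρ ≥ n(n+1)/2`. -/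
theorem rank_of_squared_norm_times_power (n m d P ρ : ℕ) (hd : 1 ≤ d)
    (f : Fin P → MvPolynomial (Fin n) ℂ)
    (hf : ∀ j, (f j).IsHomogeneous m)
    (hind : LinearIndependent ℂ f)
    (hρ : ρ = Module.finrank ℂ
        ((Submodule.restrictScalars ℂ (Ideal.span (Set.range f))) ⊓
          homogeneousSubmodule (Fin n) ℂ (m + d) :
          Submodule ℂ (MvPolynomial (Fin n) ℂ))) :
    (P < n ∧ n * P - P * (P - 1) / 2 ≤ ρ ∧ ρ ≤ n * P) ∨ n * (n + 1) / 2 ≤ ρ := by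
  classical
  set W : Submodule ℂ (MvPolynomial (Fin n) ℂ) :=
    (Submodule.restrictScalars ℂ (Ideal.span (Set.range f))) ⊓
      homogeneousSubmodule (Fin n) ℂ (m + d) with hWdef
  have hWfd : FiniteDimensional ℂ W := by
    apply Submodule.finiteDimensional_of_le (S₂ := restrictTotalDegree (Fin n) ℂ (m + d))
    intro p hp
    rw [mem_restrictTotalDegree]
    exact ((mem_homogeneousSubmodule _ _).mp hp.2).totalDegree_le
  have hmemW : ∀ p : MvPolynomial (Fin n) ℂ,
      p ∈ Ideal.span (Set.range f) → p.IsHomogeneous (m + d) → p ∈ W := fun p h1 h2 =>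
    Submodule.mem_inf.mpr ⟨h1, (mem_homogeneousSubmodule _ _).mpr h2⟩
  rcases Nat.eq_zero_or_pos n with rfl | hn
  · right
    simp [hρ]
  rcases Nat.eq_zero_or_pos P with rfl | hP
  · left
    have hW : W = ⊥ := by
      rw [hWdef, Set.range_eq_empty, Ideal.span_empty]
      simp
    refine ⟨hn, ?_, ?_⟩ <;> simp [hρ, hW, finrank_bot]
  have hf0 : ∀ j, f j ≠ 0 := fun j => hind.ne_zero j
  rcases eq_or_lt_of_le hd with hd1 | hd2
  · -- d = 1
    obtain rfl : d = 1 := hd1.symm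
    set Vsp : Submodule ℂ (MvPolynomial (Fin n) ℂ) := Submodule.span ℂ (Set.range f) with hVsp
    have hVle : Vsp ≤ Submodule.restrictScalars ℂ (Ideal.span (Set.range f)) :=
      Submodule.span_le.mpr fun x hx => Ideal.subset_span hx
    have hVhom : Vsp ≤ homogeneousSubmodule (Fin n) ℂ m :=
      Submodule.span_le.mpr fun x ⟨j, hj⟩ => hj ▸ (mem_homogeneousSubmodule _ _).mpr (hf j)
    set Msup : Finset (Fin n →₀ ℕ) := Finset.univ.biUnion (fun j => (f j).support) with hMsup
    have hsupp : ∀ v ∈ Vsp, ∀ s ∈ v.support, s ∈ Msup := by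
      intro v hv
      induction hv using Submodule.span_induction with
      | mem x hx =>
        obtain ⟨j, rfl⟩ := hx
        intro s hs
        exact Finset.mem_biUnion.mpr ⟨j, Finset.mem_univ _, hs⟩
      | zero => simp
      | add x y hx hy ihx ihy =>
        intro s hs
        rcases Finset.mem_union.mp (MvPolynomial.support_add hs) with h | h
        · exact ihx s h
        · exact ihy s h
      | smul a x hx ihx =>
        intro s hs
        exact ihx s (MvPolynomial.support_smul hs)
    set Mim : Finset (Fin n →₀ ℕ) :=
      Msup.filter (fun μ => ∃ v, v ∈ Vsp ∧ v ≠ 0 ∧ lm v = μ) with hMim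
    have hPM : P ≤ Mim.card := by
      set φ : Vsp →ₗ[ℂ] (↥Mim → ℂ) :=
        LinearMap.pi (fun μ => (MvPolynomial.lcoeff ℂ μ.1).comp Vsp.subtype) with hφ
      have hφinj : Function.Injective φ := by
        rw [← LinearMap.ker_eq_bot, eq_bot_iff]
        rintro ⟨v, hv⟩ hker
        rw [LinearMap.mem_ker] at hker
        rw [Submodule.mem_bot]
        by_contra hne
        have hv0 : v ≠ 0 := fun h => hne (by simp [h])
        have hlmem : lm v ∈ Mim := by
          rw [hMim, Finset.mem_filter]
          exact ⟨hsupp v hv _ (lm_mem hv0), v, hv, hv0, rfl⟩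
        have := congrFun hker ⟨lm v, hlmem⟩
        simp only [hφ, LinearMap.pi_apply, LinearMap.comp_apply, Submodule.coe_subtype,
          MvPolynomial.lcoeff_apply, Pi.zero_apply] at this
        exact coeff_lm_ne hv0 this
      have h1 : Module.finrank ℂ Vsp = P := by
        rw [hVsp, finrank_span_eq_card hind, Fintype.card_fin]
      have h2 : Module.finrank ℂ (↥Mim → ℂ) = Mim.card := by
        rw [Module.finrank_fintype_fun_eq_card, Fintype.card_coe]
      rw [← h1, ← h2]
      exact LinearMap.finrank_le_finrank_of_injective hφinj
    obtain ⟨M, hMsub, hMcard⟩ :=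
      Finset.exists_subset_card_eq (show min P n ≤ Mim.card from le_trans (min_le_left _ _) hPM)
    have hlow : ∑ k ∈ Finset.range (min P n), (n - k) ≤ ρ := by
      have hc := card_expand_ge (n := n) M
      rw [hMcard] at hc
      have hminmin : min (min P n) n = min P n := by omega
      rw [hminmin] at hc
      refine le_trans (le_trans hc ?_) (le_of_eq hρ.symm)
      apply card_le_finrank W (expand n M)
      intro τ hτ
      obtain ⟨μ, hμM, i, rfl⟩ := mem_expand.mp hτ
      obtain ⟨-, v, hvsp, hv0, hlmv⟩ := Finset.mem_filter.mp (hMsub hμM)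
      refine ⟨monomial (Finsupp.single i 1) 1 * v, ?_, hmemW _ ?_ ?_, ?_⟩
      · exact mul_ne_zero (by simp [MvPolynomial.monomial_eq_zero]) hv0
      · exact Ideal.mul_mem_left _ _ (hVle hvsp)
      · have h1 : (monomial (Finsupp.single i 1) (1:ℂ)).IsHomogeneous 1 :=
          isHomogeneous_monomial _ (degree_single' i 1)
        have h2 : v.IsHomogeneous m := (mem_homogeneousSubmodule _ _).mp (hVhom hvsp)
        have := h1.mul h2
        rwa [show 1 + m = m + 1 from by omega] at this
      · rw [lm_monomial_mul hv0, hlmv, add_comm]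
    rcases lt_or_ge P n with hPn | hPn
    · left
      refine ⟨hPn, ?_, ?_⟩
      · have := sum_bound_lt (n := n) (P := P) (le_of_lt hPn)
        rw [min_eq_left (le_of_lt hPn)] at hlow
        omega
      · -- upper bound
        set g : Fin n × Fin P → MvPolynomial (Fin n) ℂ := fun p => X p.1 * f p.2 with hg
        have hWle : W ≤ Submodule.span ℂ (Set.range g) := by
          intro x hx
          obtain ⟨hx1, hx2⟩ := Submodule.mem_inf.mp hx
          rw [Submodule.restrictScalars_mem] at hx1
          obtain ⟨a, ha⟩ := Ideal.mem_span_range_iff_exists_fun.mp hx1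
          have hx2' : x ∈ homogeneousSubmodule (Fin n) ℂ (m + 1) := hx2
          have hx3 : x = ∑ j, homogeneousComponent 1 (a j) * f j := by
            calc x = homogeneousComponent (m + 1) x := by
                  rw [homogeneousComponent_of_mem hx2', if_pos rfl]
              _ = homogeneousComponent (m + 1) (∑ j, a j * f j) := by rw [ha]
              _ = ∑ j, homogeneousComponent (m + 1) (a j * f j) := map_sum _ _ _
              _ = ∑ j, homogeneousComponent 1 (a j) * f j := by
                  refine Finset.sum_congr rfl fun j _ => ?_
                  have := homogeneousComponent_mul_right (k := 1) (a j) (f j) (hf j)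
                  rwa [show 1 + m = m + 1 from by omega] at this
          rw [hx3]
          apply Submodule.sum_mem
          intro j _
          have hmem := mul_mem_span_X_mul (homogeneousComponent_isHomogeneous 1 (a j)) (f j)
          refine Submodule.span_mono ?_ hmem
          rintro _ ⟨i, rfl⟩
          exact ⟨(i, j), rfl⟩
        have hfd : FiniteDimensional ℂ (Submodule.span ℂ (Set.range g)) :=
          FiniteDimensional.span_of_finite ℂ (Set.finite_range g)
        have := Submodule.finrank_mono hWle
        have hcard : Module.finrank ℂ (Submodule.span ℂ (Set.range g)) ≤ n * P := by
          have := finrank_range_le_card (R := ℂ) g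
          rwa [Set.finrank, Fintype.card_prod, Fintype.card_fin, Fintype.card_fin] at this
        omega
    · right
      rw [min_eq_right hPn] at hlow
      have := sum_bound_n (n := n) hn
      omega
  · -- d ≥ 2
    right
    have hd2 : 2 ≤ d := hd2
    set j0 : Fin P := ⟨0, hP⟩ with hj0
    set T : Finset (Fin n →₀ ℕ) := (bset n d).image (fun τ => τ + lm (f j0)) with hT
    have hTle : T.card ≤ Module.finrank ℂ W := by
      apply card_le_finrank W T
      intro τ' hτ'
      obtain ⟨τ, hτ, rfl⟩ := Finset.mem_image.mp hτ'
      refine ⟨monomial τ 1 * f j0, ?_, hmemW _ ?_ ?_, ?_⟩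
      · exact mul_ne_zero (by simp [MvPolynomial.monomial_eq_zero]) (hf0 j0)
      · exact Ideal.mul_mem_left _ _ (Ideal.subset_span ⟨j0, rfl⟩)
      · have h1 : (monomial τ (1:ℂ)).IsHomogeneous d :=
          isHomogeneous_monomial _ (degree_bset hτ)
        have := h1.mul (hf j0)
        rwa [show d + m = m + d from by omega] at this
      · rw [lm_monomial_mul (hf0 j0) τ]
    have hTcard : T.card = (bset n d).card := by
      rw [hT, Finset.card_image_of_injective _ (add_left_injective _)]
    have hbig := card_bset_ge (n := n) hn hd2
    have hsum := sum_bound_n (n := n) hn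
    omega
end

section
/- Let r be a bihomogeneous polynomial of bidegree (m,m) on ℂ^n with signature pair (P, 1) (i.e., N = 1). If r(z,z̄)·‖z‖² is a squared norm of a holomorphic polynomial map, then P² + P ≥ 2n. -/
set_option maxHeartbeats 1000000
set_option synthInstance.maxHeartbeats 200000

open MvPolynomial Complex

local notation "conj'" => starRingEnd ℂ

/-- A complex mv-polynomial vanishing at all real points is zero. -/
lemma zero_of_eval_real_zero : ∀ (k : ℕ) (p : MvPolynomial (Fin k) ℂ),
    (∀ x : Fin k → ℝ, eval (fun i => (x i : ℂ)) p = 0) → p = 0 := by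
  intro k
  induction k with
  | zero =>
    intro p hp
    have h0 := hp (fun i => 0)
    have hC : p = C (eval (fun i => ((0:ℝ):ℂ)) p) := by
      conv_lhs => rw [eq_C_of_isEmpty p]
      congr 1
      rw [eq_C_of_isEmpty p]
      simp
    rw [hC, h0, map_zero]
  | succ k ih =>
    intro p hp
    have hq : finSuccEquiv ℂ k p = 0 := by
      apply Polynomial.ext
      intro i
      simp only [Polynomial.coeff_zero]
      apply ih
      intro s
      have hmap : (finSuccEquiv ℂ k p).map (eval (fun i => (s i : ℂ))) = 0 := by
        apply Polynomial.eq_zero_of_infinite_isRoot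
        apply Set.Infinite.mono (s := Set.range (fun a : ℝ => (a : ℂ)))
        · rintro _ ⟨a, rfl⟩
          simp only [Set.mem_setOf_eq, Polynomial.IsRoot.def]
          rw [← eval_eq_eval_mv_eval']
          have : (Fin.cons (a:ℂ) (fun i => (s i : ℂ)) : Fin (k+1) → ℂ)
              = fun i => ((Fin.cons a s : Fin (k+1) → ℝ) i : ℂ) := by
            funext i
            refine Fin.cases ?_ ?_ i <;> simp
          rw [this]
          exact hp _
        · exact Set.infinite_range_of_injective (fun a b hab => by
            exact_mod_cast hab)
      have := congrArg (fun q => Polynomial.coeff q i) hmap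
      simpa using this
    have := congrArg (finSuccEquiv ℂ k).symm hq
    simpa using this

/-- A polynomial in `z` and `w` vanishing whenever `w = conj z` is zero. -/
lemma zero_of_eval_diag_zero (n : ℕ) (p : MvPolynomial (Fin n ⊕ Fin n) ℂ)
    (hp : ∀ z : Fin n → ℂ, eval (Sum.elim z (fun i => conj' (z i))) p = 0) : p = 0 := by
  classical
  -- change of variables z = s + it, w = s - it
  set u : Fin n ⊕ Fin n → MvPolynomial (Fin n ⊕ Fin n) ℂ := fun j =>
    Sum.elim (fun i => X (Sum.inl i) + C I * X (Sum.inr i))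
      (fun i => X (Sum.inl i) - C I * X (Sum.inr i)) j with hu
  set v : Fin n ⊕ Fin n → MvPolynomial (Fin n ⊕ Fin n) ℂ := fun j =>
    Sum.elim (fun i => C (2⁻¹ : ℂ) * (X (Sum.inl i) + X (Sum.inr i)))
      (fun i => C (-(I/2)) * (X (Sum.inl i) - X (Sum.inr i))) j with hv
  -- the composition aeval v ∘ aeval u is the identity
  have hcomp : ∀ q : MvPolynomial (Fin n ⊕ Fin n) ℂ, aeval v (aeval u q) = q := by
    intro q
    have hC2 : (C (2⁻¹:ℂ) : MvPolynomial (Fin n ⊕ Fin n) ℂ) * 2 = 1 := by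
      rw [show (2 : MvPolynomial (Fin n ⊕ Fin n) ℂ) = C 2 from (map_ofNat _ 2).symm, ← C_mul]
      norm_num
    have hI : (I : ℂ) * -(I/2) = 2⁻¹ := by
      linear_combination (-(2⁻¹:ℂ)) * Complex.I_mul_I
    have : (aeval v).comp (aeval u) = aeval X := by
      apply MvPolynomial.algHom_ext
      intro j
      rcases j with i | i <;>
        simp only [AlgHom.comp_apply, aeval_X, hu, hv, Sum.elim_inl, Sum.elim_inr, map_add,
          map_sub, map_mul, aeval_C, algebraMap_eq]
      · rw [← mul_assoc, ← C_mul, hI, ← mul_add,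
          show (X (Sum.inl i) + X (Sum.inr i) + (X (Sum.inl i) - X (Sum.inr i))
            : MvPolynomial (Fin n ⊕ Fin n) ℂ) = 2 * X (Sum.inl i) by ring,
          ← mul_assoc, hC2, one_mul]
      · rw [← mul_assoc, ← C_mul, hI, ← mul_sub,
          show (X (Sum.inl i) + X (Sum.inr i) - (X (Sum.inl i) - X (Sum.inr i))
            : MvPolynomial (Fin n ⊕ Fin n) ℂ) = 2 * X (Sum.inr i) by ring,
          ← mul_assoc, hC2, one_mul]
    have := congrArg (fun φ => φ q) this
    simpa [aeval_X_left] using this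
  -- (aeval u) p vanishes at all real points
  have hvan : ∀ x : Fin n ⊕ Fin n → ℝ,
      eval (fun j => (x j : ℂ)) (aeval u p) = 0 := by
    intro x
    have heval : eval (fun j => (x j : ℂ)) (aeval u p)
        = eval (fun j => eval (fun j' => (x j' : ℂ)) (u j)) p := by
      rw [aeval_def, eval₂_comp_left (eval fun j => (x j : ℂ))]
      congr 1
      · exact RingHom.ext fun c => by simp
    rw [heval]
    set z : Fin n → ℂ := fun i => (x (Sum.inl i) : ℂ) + I * (x (Sum.inr i) : ℂ) with hz
    have : (fun j => eval (fun j' => (x j' : ℂ)) (u j))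
        = Sum.elim z (fun i => conj' (z i)) := by
      funext j
      rcases j with i | i
      · simp [hu, hz]
      · simp [hu, hz, map_add, map_mul, Complex.conj_ofReal, Complex.conj_I]
        ring
    rw [this]
    exact hp z
  -- transfer to Fin (2n) and conclude aeval u p = 0
  have h2 : aeval u p = 0 := by
    have hren : rename finSumFinEquiv (aeval u p) = 0 := by
      apply zero_of_eval_real_zero
      intro x
      rw [eval_rename]
      exact hvan _
    have := rename_injective (R := ℂ) (σ := Fin n ⊕ Fin n) (⇑finSumFinEquiv) finSumFinEquiv.injective
    apply this
    simpa using hren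
  have := hcomp p
  rw [h2, map_zero] at this
  exact this.symm

/-- If two finite families of polynomials have the same sum of squared norms at every
point, then each member of the second family lies in the span of the first. -/
lemma mem_span_of_sum_sq_eq {n : ℕ} {ι₁ ι₂ : Type} [Fintype ι₁] [Fintype ι₂]
    (p : ι₁ → MvPolynomial (Fin n) ℂ) (q : ι₂ → MvPolynomial (Fin n) ℂ)
    (h : ∀ z : Fin n → ℂ, ∑ a, ‖eval z (p a)‖^2 = ∑ b, ‖eval z (q b)‖^2) :
    ∀ b, q b ∈ Submodule.span ℂ (Set.range p) := by
  classical
  have key : ∀ w : ℂ, w * conj' w = ((‖w‖^2 : ℝ) : ℂ) := fun w => by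
    rw [Complex.mul_conj]
    norm_cast
    rw [← Complex.sq_norm]
  have hC : ∀ z : Fin n → ℂ,
      (∑ a, eval z (p a) * conj' (eval z (p a))) = ∑ b, eval z (q b) * conj' (eval z (q b)) := by
    intro z
    simp only [key]
    push_cast
    exact_mod_cast congrArg (fun r : ℝ => (r : ℂ)) (h z)
  -- conjugate-coefficient polynomial evaluation
  have hconjeval : ∀ (r : MvPolynomial (Fin n) ℂ) (z : Fin n → ℂ),
      eval (fun i => conj' (z i)) (map conj' r) = conj' (eval z r) := by
    intro r z
    rw [eval_map]
    have : conj' (eval z r) = conj' (eval₂ (RingHom.id ℂ) z r) := rfl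
    rw [this, eval₂_comp_left conj' (RingHom.id ℂ) z r]
    rfl
  -- the doubled polynomial
  set Q : MvPolynomial (Fin n ⊕ Fin n) ℂ :=
    (∑ a, rename Sum.inl (p a) * rename Sum.inr (map conj' (p a))) -
    (∑ b, rename Sum.inl (q b) * rename Sum.inr (map conj' (q b))) with hQ
  have hQ0 : Q = 0 := by
    apply zero_of_eval_diag_zero
    intro z
    have he : ∀ r : MvPolynomial (Fin n) ℂ,
        eval (Sum.elim z (fun i => conj' (z i))) (rename Sum.inl r * rename Sum.inr (map conj' r))
        = eval z r * conj' (eval z r) := by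
      intro r
      rw [map_mul, eval_rename, eval_rename]
      congr 1
      exact hconjeval r z
    rw [hQ]
    rw [map_sub, map_sum, map_sum]
    simp only [he]
    rw [sub_eq_zero]
    exact hC z
  -- push through the sum-algebra equivalence and take coefficients
  have hmain : ∀ d : Fin n →₀ ℕ,
      (∑ a, conj' (coeff d (p a)) • p a) = ∑ b, conj' (coeff d (q b)) • q b := by
    intro d
    have hPhi := congrArg (sumAlgEquiv ℂ (Fin n) (Fin n)) hQ0
    rw [map_zero, hQ, map_sub, map_sum, map_sum] at hPhi
    have hterm : ∀ r : MvPolynomial (Fin n) ℂ,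
        (sumAlgEquiv ℂ (Fin n) (Fin n)) (rename Sum.inl r * rename Sum.inr (map conj' r))
        = C (map conj' r) * map C r := by
      intro r
      rw [map_mul, mul_comm]
      congr 1
      · have := congrArg (fun φ => φ (map conj' r)) (sumAlgEquiv_comp_rename_inr ℂ (Fin n) (Fin n))
        simpa using this
      · have := congrArg (fun φ => φ r) (sumAlgEquiv_comp_rename_inl ℂ (Fin n) (Fin n))
        simpa [mapAlgHom_apply, Algebra.ofId] using this
    simp only [hterm] at hPhi
    rw [sub_eq_zero] at hPhi
    have hcoeff := congrArg (coeff d) hPhi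
    rw [coeff_sum, coeff_sum] at hcoeff
    simp only [coeff_C_mul, coeff_map] at hcoeff
    -- apply coefficientwise conjugation
    have hconjconj : ∀ r : MvPolynomial (Fin n) ℂ, map conj' (map conj' r) = r := by
      intro r
      rw [map_map]
      have : (conj' : ℂ →+* ℂ).comp conj' = RingHom.id ℂ := RingHom.ext fun x => by simp
      rw [this, map_id]
    have := congrArg (map conj' : MvPolynomial (Fin n) ℂ →+* _) hcoeff
    rw [map_sum, map_sum] at this
    simp only [map_mul, map_C, hconjconj] at this
    simp only [smul_eq_C_mul]
    simp only [mul_comm] at this ⊢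
    exact this
  -- pass to the quotient by the span
  set N := Submodule.span ℂ (Set.range p) with hN
  intro b0
  have hy : ∀ d : Fin n →₀ ℕ, (∑ b, conj' (coeff d (q b)) • N.mkQ (q b)) = 0 := by
    intro d
    have : N.mkQ (∑ b, conj' (coeff d (q b)) • q b) = 0 := by
      rw [← hmain d]
      rw [Submodule.mkQ_apply, Submodule.Quotient.mk_eq_zero]
      exact Submodule.sum_smul_mem N _ (fun a _ => Submodule.subset_span (Set.mem_range_self a))
    rw [map_sum] at this
    simpa using this
  -- finite-dimensional span of the images
  set y : ι₂ → MvPolynomial (Fin n) ℂ ⧸ N := fun b => N.mkQ (q b) with hydef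
  have : FiniteDimensional ℂ (Submodule.span ℂ (Set.range y)) :=
    FiniteDimensional.span_of_finite ℂ (Set.finite_range y)
  set T := Submodule.span ℂ (Set.range y) with hT
  let B := Module.finBasis ℂ T
  set y' : ι₂ → T := fun b => ⟨y b, Submodule.subset_span (Set.mem_range_self b)⟩ with hy'
  set t : ι₂ → _ → ℂ := fun b r => B.repr (y' b) r with ht
  -- coordinates of the relations
  have hrel : ∀ (d : Fin n →₀ ℕ) (r), ∑ b, conj' (coeff d (q b)) * t b r = 0 := by
    intro d r
    have h1 : (∑ b, conj' (coeff d (q b)) • y' b) = 0 := by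
      apply Subtype.ext
      push_cast
      exact hy d
    have := congrArg (fun v => B.repr v r) h1
    simpa [map_sum, ht] using this
  -- each coordinate vanishes
  have hzero : ∀ b r, t b r = 0 := by
    intro b1 r
    -- the polynomial with conjugated coordinates is zero
    have hw : (∑ b, conj' (t b r) • q b) = 0 := by
      apply MvPolynomial.ext
      intro d
      rw [coeff_sum]
      simp only [coeff_smul, smul_eq_mul, coeff_zero]
      have := hrel d r
      have := congrArg conj' this
      rw [map_sum, map_zero] at this
      simpa [mul_comm] using this
    have h2 : (∑ b, conj' (t b r) • y' b) = 0 := by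
      apply Subtype.ext
      push_cast
      have := congrArg N.mkQ hw
      rw [map_sum, map_zero] at this
      simpa [hy', hydef] using this
    have h3 := congrArg (fun v => B.repr v r) h2
    simp only [map_sum, map_smul, map_zero] at h3
    have h4 : (∑ b, conj' (t b r) * t b r) = 0 := by simpa [ht] using h3
    have h5 : (∑ b, (Complex.normSq (t b r) : ℂ)) = 0 := by
      rw [← h4]
      congr 1
      funext b
      rw [mul_comm, Complex.mul_conj]
    have h6 : (∑ b, Complex.normSq (t b r)) = 0 := by exact_mod_cast h5
    have h7 := (Finset.sum_eq_zero_iff_of_nonneg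
      (fun b _ => Complex.normSq_nonneg (t b r))).1 h6 b1 (Finset.mem_univ _)
    exact Complex.normSq_eq_zero.1 h7
  have hyb : y' b0 = 0 := by
    apply B.repr.injective
    ext r
    simpa [ht] using hzero b0 r
  have : y b0 = 0 := by
    have := congrArg (Subtype.val) hyb
    simpa [hy'] using this
  rw [hydef] at this
  simp only [Submodule.mkQ_apply, Submodule.Quotient.mk_eq_zero] at this
  exact this

open MvPolynomial AddMonoidAlgebra

noncomputable section SyzygyStuff

variable {n : ℕ}

/-- The lexicographic monomial order on `Fin n →₀ ℕ`. -/
def mo (n : ℕ) : MonomialOrder (Fin n) := MonomialOrder.lex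

/-- Degree function into the ordered synonym type. -/
def Df (n : ℕ) : (Fin n →₀ ℕ) → (mo n).syn := ⇑(mo n).toSyn

lemma Df_inj : Function.Injective (Df n) := (mo n).toSyn.injective

lemma Df_add (a b : Fin n →₀ ℕ) : Df n (a + b) = Df n a + Df n b := map_add _ a b

/-- leading degree -/
def deg (p : MvPolynomial (Fin n) ℂ) : (mo n).syn := supDegree (Df n) p

/-- leading coefficient -/
def lc (p : MvPolynomial (Fin n) ℂ) : ℂ := leadingCoeff (Df n) p

/-- leading monomial -/
def dmon (p : MvPolynomial (Fin n) ℂ) : Fin n →₀ ℕ := (mo n).toSyn.symm (deg p)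

lemma invFun_Df (y : (mo n).syn) : Function.invFun (Df n) y = (mo n).toSyn.symm y := by
  apply Df_inj
  rw [show Df n ((mo n).toSyn.symm y) = y from (mo n).toSyn.apply_symm_apply y]
  exact Function.invFun_eq ⟨(mo n).toSyn.symm y, (mo n).toSyn.apply_symm_apply y⟩

lemma Df_dmon {p : MvPolynomial (Fin n) ℂ} : Df n (dmon p) = deg p :=
  (mo n).toSyn.apply_symm_apply _

lemma coeff_dmon (p : MvPolynomial (Fin n) ℂ) : coeff (dmon p) p = lc p := by
  rw [lc, leadingCoeff, invFun_Df]
  rfl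

lemma lc_ne_zero {p : MvPolynomial (Fin n) ℂ} (hp : p ≠ 0) : lc p ≠ 0 :=
  (leadingCoeff_ne_zero Df_inj).2 hp

lemma deg_mul {p q : MvPolynomial (Fin n) ℂ} (hp : p ≠ 0) (hq : q ≠ 0) :
    deg (p * q) = deg p + deg q :=
  supDegree_mul Df_inj Df_add (mul_ne_zero (lc_ne_zero hp) (lc_ne_zero hq)) hp hq

lemma coeff_deg_add_deg (p q : MvPolynomial (Fin n) ℂ) :
    coeff ((mo n).toSyn.symm (deg p + deg q)) (p * q) = lc p * lc q := by
  have := apply_supDegree_add_supDegree (p := p) (q := q) Df_inj Df_add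
  rw [invFun_Df] at this
  exact this

lemma coeff_eq_zero_of_deg_lt {p : MvPolynomial (Fin n) ℂ} {μ : Fin n →₀ ℕ}
    (h : ¬ Df n μ ≤ deg p) : coeff μ p = 0 :=
  apply_eq_zero_of_not_le_supDegree h

end SyzygyStuff

noncomputable section LinForms

variable {n : ℕ}

/-- The linear form with coefficient vector `c`. -/
def Lf (c : Fin n → ℂ) : MvPolynomial (Fin n) ℂ := ∑ a, c a • X a

lemma Lf_coeff (c : Fin n → ℂ) (a : Fin n) :
    coeff (Finsupp.single a 1) (Lf c) = c a := by
  classical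
  rw [Lf, MvPolynomial.coeff_sum]
  rw [Finset.sum_eq_single a]
  · rw [MvPolynomial.coeff_smul, coeff_X]
    simp
  · intro b _ hb
    rw [MvPolynomial.coeff_smul, coeff_X', if_neg, smul_zero]
    rw [Finsupp.single_left_inj one_ne_zero]
    exact hb
  · intro h
    exact absurd (Finset.mem_univ a) h

lemma Lf_zero : Lf (0 : Fin n → ℂ) = 0 := by
  simp [Lf]

lemma Lf_eq_zero_iff {c : Fin n → ℂ} : Lf c = 0 ↔ c = 0 := by
  constructor
  · intro h
    funext a
    have := Lf_coeff c a
    rw [h, MvPolynomial.coeff_zero] at this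
    exact this.symm
  · rintro rfl; exact Lf_zero

lemma Lf_support {c : Fin n → ℂ} {μ : Fin n →₀ ℕ} (h : μ ∈ (Lf c).support) :
    ∃ a, μ = Finsupp.single a 1 ∧ c a ≠ 0 := by
  classical
  have := MvPolynomial.support_sum (s := Finset.univ) (f := fun a => c a • X a) h
  rw [Finset.mem_biUnion] at this
  obtain ⟨a, -, ha⟩ := this
  have h2 := MvPolynomial.support_smul ha
  rw [MvPolynomial.support_X (R := ℂ)] at h2
  rw [Finset.mem_singleton] at h2
  refine ⟨a, h2, ?_⟩
  intro hc0
  simp [hc0] at ha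

lemma Lf_lead {c : Fin n → ℂ} (hc : c ≠ 0) :
    ∃ a, c a ≠ 0 ∧ deg (Lf c) = Df n (Finsupp.single a 1) ∧ lc (Lf c) = c a := by
  have hne : Lf c ≠ 0 := fun h => hc (Lf_eq_zero_iff.1 h)
  obtain ⟨μ, hmem, hdeg⟩ := exists_supDegree_mem_support (Df n) hne
  obtain ⟨a, rfl, hca⟩ := Lf_support hmem
  refine ⟨a, hca, hdeg, ?_⟩
  have : dmon (Lf c) = Finsupp.single a 1 := by
    apply Df_inj
    rw [Df_dmon]
    exact hdeg
  rw [← Lf_coeff c a, ← this, coeff_dmon]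

lemma Lf_sum_smul {ι : Type*} [Fintype ι] (d : ι → ℂ) (c : ι → Fin n → ℂ) :
    Lf (fun a => ∑ i, d i * c i a) = ∑ i, d i • Lf (c i) := by
  unfold Lf
  simp_rw [Finset.sum_smul]
  rw [Finset.sum_comm]
  apply Finset.sum_congr rfl
  intro i _
  rw [Finset.smul_sum]
  apply Finset.sum_congr rfl
  intro a _
  rw [smul_smul]

open Finsupp in
/-- A family of `s` linearly independent linear syzygies of `k` nonzero polynomials with
pairwise distinct leading degrees satisfies `2s ≤ k(k-1)`. -/
lemma syz_card_bound {n k s : ℕ} (G : Fin k → MvPolynomial (Fin n) ℂ)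
    (hG0 : ∀ j, G j ≠ 0)
    (hGd : ∀ j j', deg (G j) = deg (G j') → j = j')
    (τ : Fin s → Fin k → Fin n → ℂ)
    (hτ : ∀ i, ∑ j, Lf (τ i j) * G j = 0)
    (hind : LinearIndependent ℂ τ) :
    2 * s ≤ k * (k - 1) := by
  classical
  set Δ : Finset (Fin k × Fin n) := Finset.univ.filter (fun x =>
    ∃ j' : Fin k, x.1 < j' ∧ ∃ b : Fin n,
      Finsupp.single x.2 1 + dmon (G x.1) = Finsupp.single b 1 + dmon (G j')) with hΔ
  -- ** Core claim: a syzygy vanishing on Δ is zero.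
  have core : ∀ σ : Fin k → Fin n → ℂ, (∑ j, Lf (σ j) * G j = 0) →
      (∀ x ∈ Δ, σ x.1 x.2 = 0) → σ = 0 := by
    intro σ hsyz hvan
    by_contra hσ
    have hex : ∃ j, σ j ≠ 0 := by
      by_contra hcon
      push_neg at hcon
      exact hσ (funext hcon)
    set A : Finset (Fin k) := Finset.univ.filter (fun j => σ j ≠ 0) with hA
    have hAne : A.Nonempty := by
      obtain ⟨j, hj⟩ := hex
      exact ⟨j, by simp [hA, hj]⟩
    set e : Fin k → (mo n).syn := fun j => deg (Lf (σ j) * G j) with he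
    set M := A.sup' hAne e with hM
    set A' := A.filter (fun j => e j = M) with hA'
    have hA'ne : A'.Nonempty := by
      obtain ⟨j, hj, hje⟩ := Finset.exists_mem_eq_sup' hAne e
      exact ⟨j, by simp [hA', hj, hje.symm, hM]⟩
    have hLfne : ∀ j ∈ A, Lf (σ j) ≠ 0 := by
      intro j hj
      rw [Ne, Lf_eq_zero_iff]
      simpa [hA] using hj
    -- the coefficient of the maximal monomial
    set μM : Fin n →₀ ℕ := (mo n).toSyn.symm M with hμM
    have hsum0 : ∑ j ∈ A', lc (Lf (σ j)) * lc (G j) = 0 := by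
      have h0 : coeff μM (∑ j, Lf (σ j) * G j) = 0 := by rw [hsyz, MvPolynomial.coeff_zero]
      rw [MvPolynomial.coeff_sum] at h0
      have hshrink : ∑ x : Fin k, coeff μM (Lf (σ x) * G x)
          = ∑ j ∈ A', coeff μM (Lf (σ j) * G j) := by
        symm
        apply Finset.sum_subset (Finset.subset_univ A')
        intro j _ hjA'
        by_cases hjz : σ j = 0
        · rw [hjz, Lf_zero, zero_mul, MvPolynomial.coeff_zero]
        · have hjA : j ∈ A := by simp [hA, hjz]
          have hle : e j ≤ M := Finset.le_sup' e hjA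
          have hne : e j ≠ M := by
            intro hcon
            exact hjA' (by simp [hA', hjA, hcon])
          apply coeff_eq_zero_of_deg_lt
          rw [show Df n μM = M from (mo n).toSyn.apply_symm_apply M]
          exact not_le_of_gt (lt_of_le_of_ne hle hne)
      rw [hshrink] at h0
      rw [← h0]
      apply Finset.sum_congr rfl
      intro j hj
      · have hjA : j ∈ A := (Finset.mem_filter.1 hj).1
        have hjM : e j = M := (Finset.mem_filter.1 hj).2
        have hdm : deg (Lf (σ j) * G j) = deg (Lf (σ j)) + deg (G j) :=
          deg_mul (hLfne j hjA) (hG0 j)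
        have : μM = (mo n).toSyn.symm (deg (Lf (σ j)) + deg (G j)) := by
          rw [hμM, ← hjM]
          exact congrArg (mo n).toSyn.symm hdm
        rw [this]
        exact (coeff_deg_add_deg _ _).symm
    -- at least two indices attain the maximum
    have hcard2 : 1 < A'.card := by
      rcases Nat.lt_or_ge A'.card 2 with hlt | hge
      · interval_cases h : A'.card
        · exact absurd (Finset.card_eq_zero.1 h) (Finset.nonempty_iff_ne_empty.1 hA'ne)
        · obtain ⟨j, hj⟩ := Finset.card_eq_one.1 h
          rw [hj, Finset.sum_singleton] at hsum0
          have hjA' : j ∈ A' := by rw [hj]; exact Finset.mem_singleton_self j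
          have hjA : j ∈ A := (Finset.mem_filter.1 hjA').1
          exact absurd hsum0 (mul_ne_zero (lc_ne_zero (hLfne j hjA)) (lc_ne_zero (hG0 j)))
      · exact hge
    set j₀ := A'.min' hA'ne with hj₀def
    have hj₀ : j₀ ∈ A' := A'.min'_mem hA'ne
    obtain ⟨j₁, hj₁mem, hj₁ne⟩ := Finset.exists_mem_ne hcard2 j₀
    have hlt : j₀ < j₁ := lt_of_le_of_ne (A'.min'_le _ hj₁mem) (Ne.symm hj₁ne)
    have hσ₀ : σ j₀ ≠ 0 := by
      have := (Finset.mem_filter.1 hj₀).1; simpa [hA] using this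
    have hσ₁ : σ j₁ ≠ 0 := by
      have := (Finset.mem_filter.1 hj₁mem).1; simpa [hA] using this
    obtain ⟨a, ha0, hdega, hlca⟩ := Lf_lead hσ₀
    obtain ⟨b, hb0, hdegb, hlcb⟩ := Lf_lead hσ₁
    -- the leading position (j₀, a) lies in Δ
    have hmemΔ : (j₀, a) ∈ Δ := by
      rw [hΔ, Finset.mem_filter]
      refine ⟨Finset.mem_univ _, j₁, hlt, b, ?_⟩
      apply Df_inj
      rw [Df_add, Df_add, Df_dmon, Df_dmon, ← hdega, ← hdegb]
      have h₀ : e j₀ = M := (Finset.mem_filter.1 hj₀).2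
      have h₁ : e j₁ = M := (Finset.mem_filter.1 hj₁mem).2
      have hA₀ : j₀ ∈ A := (Finset.mem_filter.1 hj₀).1
      have hA₁ : j₁ ∈ A := (Finset.mem_filter.1 hj₁mem).1
      have hm₀ : deg (Lf (σ j₀)) + deg (G j₀) = M := by
        rw [← deg_mul (hLfne j₀ hA₀) (hG0 j₀)]; exact h₀
      have hm₁ : deg (Lf (σ j₁)) + deg (G j₁) = M := by
        rw [← deg_mul (hLfne j₁ hA₁) (hG0 j₁)]; exact h₁
      rw [hm₀, hm₁]
    have := hvan _ hmemΔ
    rw [← hlca] at this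
    exact lc_ne_zero (hLfne j₀ (Finset.mem_filter.1 hj₀).1) this
  -- ** Linear independence of restrictions to Δ
  let Θ : (Fin k → Fin n → ℂ) →ₗ[ℂ] (↥Δ → ℂ) :=
    { toFun := fun σ x => σ x.1.1 x.1.2
      map_add' := fun _ _ => rfl
      map_smul' := fun _ _ => rfl }
  have hlin : LinearIndependent ℂ (fun i => Θ (τ i)) := by
    rw [Fintype.linearIndependent_iff]
    intro d hd
    set σ : Fin k → Fin n → ℂ := fun j a => ∑ i, d i * τ i j a with hσdef
    have hσsyz : ∑ j, Lf (σ j) * G j = 0 := by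
      have hLf : ∀ j, Lf (σ j) = ∑ i, d i • Lf (τ i j) := fun j =>
        Lf_sum_smul d (fun i => τ i j)
      calc ∑ j, Lf (σ j) * G j = ∑ j, ∑ i, (d i • Lf (τ i j)) * G j := by
            apply Finset.sum_congr rfl
            intro j _
            rw [hLf j, Finset.sum_mul]
        _ = ∑ i, d i • ∑ j, Lf (τ i j) * G j := by
            rw [Finset.sum_comm]
            apply Finset.sum_congr rfl
            intro i _
            rw [Finset.smul_sum]
            apply Finset.sum_congr rfl
            intro j _
            rw [smul_mul_assoc]
        _ = 0 := by simp [hτ]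
    have hσvan : ∀ x ∈ Δ, σ x.1 x.2 = 0 := by
      intro x hx
      have := congrFun hd ⟨x, hx⟩
      simpa [Θ, hσdef] using this
    have hσ0 := core σ hσsyz hσvan
    intro i
    have hind' := Fintype.linearIndependent_iff.1 hind
    apply hind' d _ i
    funext j
    funext a
    have := congrFun (congrFun hσ0 j) a
    simpa [hσdef] using this
  -- ** counting
  have hs_le : s ≤ Δ.card := by
    have h1 := hlin.fintype_card_le_finrank
    rwa [Module.finrank_fintype_fun_eq_card, Fintype.card_coe, Fintype.card_fin] at h1
  have hΔcard : Δ.card ≤ ∑ j : Fin k, (k - 1 - (j : ℕ)) := by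
    rw [Finset.card_eq_sum_card_fiberwise (f := Prod.fst) (t := Finset.univ)
      (fun x _ => Finset.mem_univ _)]
    apply Finset.sum_le_sum
    intro j _
    have hcard : (Finset.Ioi j).card = k - 1 - (j : ℕ) := Fin.card_Ioi j
    rw [← hcard]
    set pick : Fin k × Fin n → Fin k := fun x =>
      if h : ∃ j' : Fin k, x.1 < j' ∧ ∃ b : Fin n,
          Finsupp.single x.2 1 + dmon (G x.1) = Finsupp.single b 1 + dmon (G j')
        then Classical.choose h else x.1 with hpick
    apply Finset.card_le_card_of_injOn pick
    · intro x hx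
      rw [Finset.mem_coe, Finset.mem_filter] at hx
      obtain ⟨hxΔ, hxj⟩ := hx
      rw [hΔ, Finset.mem_filter] at hxΔ
      have hex := hxΔ.2
      rw [hpick]
      simp only [dif_pos hex]
      have := (Classical.choose_spec hex).1
      rw [Finset.mem_coe, Finset.mem_Ioi, ← hxj]
      exact this
    · intro x hx y hy hxy
      rw [Finset.mem_coe, Finset.mem_filter] at hx hy
      obtain ⟨hxΔ, hxj⟩ := hx
      obtain ⟨hyΔ, hyj⟩ := hy
      rw [hΔ, Finset.mem_filter] at hxΔ hyΔ
      have hexx := hxΔ.2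
      have hexy := hyΔ.2
      rw [hpick] at hxy
      simp only [dif_pos hexx, dif_pos hexy] at hxy
      obtain ⟨hltx, bx, heqx⟩ := Classical.choose_spec hexx
      obtain ⟨hlty, by', heqy⟩ := Classical.choose_spec hexy
      set j' := Classical.choose hexx with hj'
      rw [← hxy] at heqy hlty
      rw [hxj] at heqx hltx
      rw [hyj] at heqy hlty
      -- distinct degree monomials
      have hdne : dmon (G j) ≠ dmon (G j') := by
        intro hcon
        have : deg (G j) = deg (G j') := by
          have := congrArg (Df n) hcon
          rwa [Df_dmon, Df_dmon] at this
        have := hGd _ _ this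
        rw [this] at hltx
        exact lt_irrefl _ hltx
      -- derive x.2 = y.2
      have hkey : Finsupp.single x.2 1 + Finsupp.single by' 1
          = Finsupp.single bx 1 + Finsupp.single y.2 1 := by
        have h4 : Finsupp.single x.2 1 + Finsupp.single by' 1 + dmon (G j) + dmon (G j')
            = Finsupp.single bx 1 + Finsupp.single y.2 1 + dmon (G j) + dmon (G j') := by
          calc Finsupp.single x.2 1 + Finsupp.single by' 1 + dmon (G j) + dmon (G j')
              = (Finsupp.single x.2 1 + dmon (G j))
                + (Finsupp.single by' 1 + dmon (G j')) := by abel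
            _ = (Finsupp.single bx 1 + dmon (G j'))
                + (Finsupp.single y.2 1 + dmon (G j)) := by rw [heqx, ← heqy]
            _ = Finsupp.single bx 1 + Finsupp.single y.2 1 + dmon (G j) + dmon (G j') := by abel
        exact add_right_cancel (add_right_cancel h4)
      have hx2y2 : x.2 = y.2 := by
        by_contra hne
        by_cases hba : bx = x.2
        · rw [hba] at heqx
          have := add_left_cancel heqx
          exact hdne this
        · have hval := DFunLike.congr_fun hkey x.2
          have hyx : ¬ y.2 = x.2 := fun h => hne h.symm
          simp only [Finsupp.add_apply, Finsupp.single_apply, if_neg hba, if_neg hyx,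
            eq_self_iff_true, if_true] at hval
          split_ifs at hval <;> omega
      apply Prod.ext
      · rw [hxj, hyj]
      · exact hx2y2
  -- ** arithmetic
  have harith : 2 * (∑ j : Fin k, (k - 1 - (j : ℕ))) = k * (k - 1) := by
    rw [Fin.sum_univ_eq_sum_range (fun i => k - 1 - i) k]
    rw [Finset.sum_range_reflect (fun i => i) k]
    rw [mul_comm]
    exact Finset.sum_range_id_mul_two k
  calc 2 * s ≤ 2 * Δ.card := by omega
    _ ≤ 2 * (∑ j : Fin k, (k - 1 - (j : ℕ))) := by
        have := hΔcard; omega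
    _ = k * (k - 1) := harith

open Submodule in
/-- Every finite dimensional subspace of polynomials admits a spanning family with
pairwise distinct leading degrees. -/
lemma exists_distinct_deg {n : ℕ} : ∀ (k : ℕ) (W : Submodule ℂ (MvPolynomial (Fin n) ℂ)),
    FiniteDimensional ℂ W → Module.finrank ℂ W = k →
    ∃ G : Fin k → MvPolynomial (Fin n) ℂ,
      (∀ j, G j ∈ W) ∧ (∀ j, G j ≠ 0) ∧
      (∀ j j', deg (G j) = deg (G j') → j = j') ∧
      W ≤ span ℂ (Set.range G) := by
  intro k
  induction k with
  | zero =>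
    intro W hfd hrk
    refine ⟨Fin.elim0, fun j => j.elim0, fun j => j.elim0, fun j => j.elim0, ?_⟩
    have : W = ⊥ := Submodule.finrank_eq_zero.1 hrk
    rw [this]
    exact bot_le
  | succ k ih =>
    intro W hfd hrk
    have hWne : W ≠ ⊥ := by
      intro hcon
      rw [hcon, finrank_bot] at hrk
      omega
    obtain ⟨w, hwW, hw0⟩ := Submodule.exists_mem_ne_zero_of_ne_bot hWne
    set μ : Fin n →₀ ℕ := dmon w with hμ
    have hcw : coeff μ w ≠ 0 := by
      rw [hμ, coeff_dmon]
      exact lc_ne_zero hw0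
    set φ : MvPolynomial (Fin n) ℂ →ₗ[ℂ] ℂ := MvPolynomial.lcoeff ℂ μ with hφ
    set W' : Submodule ℂ (MvPolynomial (Fin n) ℂ) := W ⊓ LinearMap.ker φ with hW'
    have hW'le : W' ≤ W := inf_le_left
    have hfd' : FiniteDimensional ℂ W' := Submodule.finiteDimensional_of_le hW'le
    have hrk' : Module.finrank ℂ W' = k := by
      set ψ : W →ₗ[ℂ] ℂ := φ.comp W.subtype with hψ
      have hker : W' = Submodule.map W.subtype (LinearMap.ker ψ) := by
        apply le_antisymm
        · intro x hx
          rw [hW', Submodule.mem_inf] at hx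
          exact ⟨⟨x, hx.1⟩, by simpa [hψ] using hx.2, rfl⟩
        · rintro _ ⟨⟨x, hxW⟩, hxk, rfl⟩
          rw [hW', Submodule.mem_inf]
          exact ⟨hxW, by simpa [hψ] using hxk⟩
      have hsurj : LinearMap.range ψ = ⊤ := by
        rw [eq_top_iff]
        intro c _
        refine ⟨(c / coeff μ w) • ⟨w, hwW⟩, ?_⟩
        have hφw : φ w = coeff μ w := rfl
        simp only [hψ, LinearMap.comp_apply, map_smul, Submodule.coe_subtype,
          Submodule.coe_smul, smul_eq_mul]
        rw [hφw]
        field_simp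
      have h1 := LinearMap.finrank_range_add_finrank_ker ψ
      rw [hsurj, finrank_top, hrk, Module.finrank_self] at h1
      rw [hker, Submodule.finrank_map_subtype_eq]
      omega
    obtain ⟨G', hG'W, hG'0, hG'd, hG'span⟩ := ih W' hfd' hrk'
    have hdegne : ∀ i : Fin k, deg (G' i) ≠ deg w := by
      intro i hcon
      obtain ⟨ν, hν, hνdeg⟩ := exists_supDegree_mem_support (Df n) (hG'0 i)
      have hνμ : ν = μ := by
        apply Df_inj
        have h5 : Df n ν = deg (G' i) := hνdeg.symm
        rw [h5, hcon, hμ, Df_dmon]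
      have hmem := hG'W i
      rw [hW', Submodule.mem_inf] at hmem
      have h6 := hmem.2
      rw [LinearMap.mem_ker, hφ] at h6
      have hcoeff : coeff μ (G' i) = 0 := h6
      rw [← hνμ] at hcoeff
      rw [Finsupp.mem_support_iff] at hν
      exact hν hcoeff
    refine ⟨Fin.cons w G', ?_, ?_, ?_, ?_⟩
    · intro j
      refine Fin.cases hwW (fun i => hW'le (hG'W i)) j
    · intro j
      refine Fin.cases hw0 (fun i => hG'0 i) j
    · intro j j'
      induction j using Fin.cases with
      | zero =>
        induction j' using Fin.cases with
        | zero => intro _; rfl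
        | succ i' =>
          intro hdd
          rw [Fin.cons_zero, Fin.cons_succ] at hdd
          exact absurd hdd.symm (hdegne i')
      | succ i =>
        induction j' using Fin.cases with
        | zero =>
          intro hdd
          rw [Fin.cons_zero, Fin.cons_succ] at hdd
          exact absurd hdd (hdegne i)
        | succ i' =>
          intro hdd
          rw [Fin.cons_succ, Fin.cons_succ] at hdd
          rw [hG'd i i' hdd]
    · intro x hxW
      have hx' : x - (coeff μ x / coeff μ w) • w ∈ W' := by
        rw [hW', Submodule.mem_inf]
        constructor
        · exact Submodule.sub_mem W hxW (Submodule.smul_mem W _ hwW)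
        · rw [LinearMap.mem_ker, hφ]
          show coeff μ (x - (coeff μ x / coeff μ w) • w) = 0
          rw [MvPolynomial.coeff_sub, MvPolynomial.coeff_smul, smul_eq_mul]
          field_simp
          ring
      have hx'span := hG'span hx'
      rw [show Set.range (Fin.cons w G' : Fin (k+1) → MvPolynomial (Fin n) ℂ)
          = insert w (Set.range G') from Fin.range_cons w G']
      rw [show x = (x - (coeff μ x / coeff μ w) • w) + (coeff μ x / coeff μ w) • w by abel]
      apply Submodule.add_mem
      · exact span_mono (Set.subset_insert _ _) hx'span
      · exact Submodule.smul_mem _ _ (subset_span (Set.mem_insert _ _))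

open Submodule in
/-- Bound on the number of independent linear syzygies of a linearly independent family. -/
lemma syz_bound {n k s : ℕ} (F : Fin k → MvPolynomial (Fin n) ℂ)
    (hF : LinearIndependent ℂ F)
    (σ : Fin s → Fin k → Fin n → ℂ)
    (hσ : ∀ i, ∑ j, Lf (σ i j) * F j = 0)
    (hs : LinearIndependent ℂ σ) :
    2 * s ≤ k * (k - 1) := by
  classical
  set W : Submodule ℂ (MvPolynomial (Fin n) ℂ) := span ℂ (Set.range F) with hW
  have hfd : FiniteDimensional ℂ W := FiniteDimensional.span_of_finite ℂ (Set.finite_range F)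
  have hrk : Module.finrank ℂ W = k := by
    rw [hW, finrank_span_eq_card hF, Fintype.card_fin]
  obtain ⟨G, hGW, hG0, hGd, hGspan⟩ := exists_distinct_deg k W hfd hrk
  have hFmem : ∀ j, F j ∈ span ℂ (Set.range G) :=
    fun j => hGspan (subset_span (Set.mem_range_self j))
  have hFrep : ∀ j, ∃ u : Fin k → ℂ, ∑ t, u t • G t = F j := by
    intro j
    exact (mem_span_range_iff_exists_fun ℂ).1 (hFmem j)
  choose u hu using hFrep
  -- rows of u are linearly independent
  have hrows : ∀ c : Fin k → ℂ, (∑ j, c j • u j) = 0 → c = 0 := by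
    intro c hc
    have h1 : ∑ j, c j • F j = 0 := by
      calc ∑ j, c j • F j
          = ∑ j, ∑ t, (c j * u j t) • G t := by
            apply Finset.sum_congr rfl
            intro j _
            rw [← hu j, Finset.smul_sum]
            apply Finset.sum_congr rfl
            intro t _
            rw [smul_smul]
        _ = ∑ t, ∑ j, (c j * u j t) • G t := Finset.sum_comm
        _ = ∑ t, (∑ j, c j * u j t) • G t := by
            apply Finset.sum_congr rfl
            intro t _
            rw [Finset.sum_smul]
        _ = 0 := by
            apply Finset.sum_eq_zero
            intro t _
            have hz : (∑ j, c j * u j t) = 0 := by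
              have := congrFun hc t
              simpa [Finset.sum_apply] using this
            rw [hz, zero_smul]
    exact funext (Fintype.linearIndependent_iff.1 hF c h1)
  -- transferred syzygies
  set τ : Fin s → Fin k → Fin n → ℂ := fun i t a => ∑ j, u j t * σ i j a with hτdef
  have hτ : ∀ i, ∑ t, Lf (τ i t) * G t = 0 := by
    intro i
    have hLf : ∀ t, Lf (τ i t) = ∑ j, u j t • Lf (σ i j) := fun t =>
      Lf_sum_smul (fun j => u j t) (fun j => σ i j)
    calc ∑ t, Lf (τ i t) * G t
        = ∑ t, ∑ j, u j t • (Lf (σ i j) * G t) := by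
          apply Finset.sum_congr rfl
          intro t _
          rw [hLf t, Finset.sum_mul]
          apply Finset.sum_congr rfl
          intro j _
          rw [smul_mul_assoc]
      _ = ∑ j, Lf (σ i j) * ∑ t, u j t • G t := by
          rw [Finset.sum_comm]
          apply Finset.sum_congr rfl
          intro j _
          rw [Finset.mul_sum]
          apply Finset.sum_congr rfl
          intro t _
          rw [mul_smul_comm]
      _ = ∑ j, Lf (σ i j) * F j := by
          apply Finset.sum_congr rfl
          intro j _
          rw [hu j]
      _ = 0 := hσ i
  have hτind : LinearIndependent ℂ τ := by
    rw [Fintype.linearIndependent_iff]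
    intro d hd
    have hρ : ∀ j a, (∑ i, d i * σ i j a) = 0 := by
      intro j a
      have hcol : ∀ t, (∑ j', (∑ i, d i * σ i j' a) * u j' t) = 0 := by
        intro t
        have h2 : (∑ i, d i * (∑ j', u j' t * σ i j' a)) = 0 := by
          have := congrFun (congrFun hd t) a
          simpa [Finset.sum_apply, hτdef] using this
        have hswap : ∑ j', (∑ i, d i * σ i j' a) * u j' t
            = ∑ i, d i * (∑ j', u j' t * σ i j' a) := by
          simp only [Finset.sum_mul, Finset.mul_sum]
          rw [Finset.sum_comm]
          apply Finset.sum_congr rfl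
          intro i _
          apply Finset.sum_congr rfl
          intro j' _
          ring
        rw [hswap, h2]
      have hvec := hrows (fun j' => ∑ i, d i * σ i j' a) ?_
      · exact congrFun hvec j
      · funext t
        have := hcol t
        simpa [Finset.sum_apply] using this
    have hzero : ∑ i, d i • σ i = 0 := by
      funext j a
      simpa [Finset.sum_apply] using hρ j a
    exact fun i => Fintype.linearIndependent_iff.1 hs d hzero i
  exact syz_card_bound G hG0 hGd τ hτ hτind


open Submodule in
/-- If `r = ‖f‖² − |g|²` is bihomogeneous of bidegree `(m,m)` on `ℂⁿ` with signature
pair `(P,1)` (the `P` components of `f` and the single polynomial `g` homogeneous of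
degree `m` and together linearly independent), and `r(z,z̄)·‖z‖²` is a squared norm,
then `P² + P ≥ 2n`. -/
theorem signature_P_one (n m P : ℕ)
    (f : Fin P → MvPolynomial (Fin n) ℂ)
    (g : MvPolynomial (Fin n) ℂ)
    (hf : ∀ j, (f j).IsHomogeneous m)
    (hg : g.IsHomogeneous m)
    (hind : LinearIndependent ℂ (Sum.elim f (fun _ : Fin 1 => g)))
    (hsq : ∃ (K : ℕ) (h : Fin K → MvPolynomial (Fin n) ℂ),
      ∀ z : Fin n → ℂ,
        ((∑ j, ‖eval z (f j)‖ ^ 2) - ‖eval z g‖ ^ 2) * (∑ i, ‖z i‖ ^ 2) =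
          ∑ j, ‖eval z (h j)‖ ^ 2) :
    2 * n ≤ P ^ 2 + P := by
  classical
  obtain ⟨K, h, heq⟩ := hsq
  -- pointwise identity between two families of squared norms
  have hpt : ∀ z : Fin n → ℂ,
      (∑ x : Fin P × Fin n, ‖eval z (f x.1 * X x.2)‖^2)
      = ∑ b : Fin K ⊕ Fin n, ‖eval z (Sum.elim h (fun i => g * X i) b)‖^2 := by
    intro z
    have hL : ∑ x : Fin P × Fin n, ‖eval z (f x.1 * X x.2)‖^2
        = (∑ j, ‖eval z (f j)‖^2) * (∑ i, ‖z i‖^2) := by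
      rw [Fintype.sum_prod_type, Finset.sum_mul]
      apply Finset.sum_congr rfl
      intro j _
      rw [Finset.mul_sum]
      apply Finset.sum_congr rfl
      intro i _
      rw [map_mul, eval_X, norm_mul, mul_pow]
    have hR : ∑ b : Fin K ⊕ Fin n, ‖eval z (Sum.elim h (fun i => g * X i) b)‖^2
        = (∑ l, ‖eval z (h l)‖^2) + (‖eval z g‖^2) * (∑ i, ‖z i‖^2) := by
      rw [Fintype.sum_sum_type]
      congr 1
      rw [Finset.mul_sum]
      apply Finset.sum_congr rfl
      intro i _
      rw [Sum.elim_inr, map_mul, eval_X, norm_mul, mul_pow]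
    rw [hL, hR]
    linear_combination heq z
  -- each g·Xᵢ lies in the span of the fⱼ·Xₐ
  have hspan := mem_span_of_sum_sq_eq
    (fun x : Fin P × Fin n => f x.1 * X x.2)
    (Sum.elim h (fun i => g * X i)) hpt
  have hgmem : ∀ i : Fin n, g * X i ∈
      span ℂ (Set.range (fun x : Fin P × Fin n => f x.1 * X x.2)) := by
    intro i
    simpa using hspan (Sum.inr i)
  have hrep : ∀ i : Fin n, ∃ c : Fin P × Fin n → ℂ,
      ∑ x : Fin P × Fin n, c x • (f x.1 * X x.2) = g * X i := by
    intro i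
    exact (mem_span_range_iff_exists_fun ℂ).1 (hgmem i)
  choose c hc using hrep
  -- the combined family
  set F : Fin (P+1) → MvPolynomial (Fin n) ℂ :=
    fun j => Sum.elim f (fun _ : Fin 1 => g) (finSumFinEquiv.symm j) with hF
  have hFind : LinearIndependent ℂ F :=
    hind.comp _ finSumFinEquiv.symm.injective
  -- the syzygies
  set σ : Fin n → Fin (P+1) → Fin n → ℂ := fun i j =>
    Sum.elim (fun j' : Fin P => fun a => - c i (j', a))
      (fun _ : Fin 1 => fun a => if a = i then (1:ℂ) else 0)
      (finSumFinEquiv.symm j) with hσ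
  have hsyz : ∀ i, ∑ j, Lf (σ i j) * F j = 0 := by
    intro i
    rw [← Equiv.sum_comp finSumFinEquiv (fun j => Lf (σ i j) * F j), Fintype.sum_sum_type]
    have hterm1 : ∀ j' : Fin P,
        Lf (σ i (finSumFinEquiv (Sum.inl j'))) * F (finSumFinEquiv (Sum.inl j'))
        = -(∑ a, c i (j', a) • (f j' * X a)) := by
      intro j'
      have h1 : σ i (finSumFinEquiv (Sum.inl j')) = fun a => - c i (j', a) := by
        rw [hσ]
        simp
      have h2 : F (finSumFinEquiv (Sum.inl j')) = f j' := by
        rw [hF]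
        simp
      rw [h1, h2]
      rw [show Lf (fun a => - c i (j', a)) = - Lf (fun a => c i (j', a)) by
        rw [Lf, Lf, ← Finset.sum_neg_distrib]
        apply Finset.sum_congr rfl
        intro a _
        rw [neg_smul]]
      rw [neg_mul, Lf, Finset.sum_mul]
      congr 1
      apply Finset.sum_congr rfl
      intro a _
      rw [smul_mul_assoc, mul_comm]
    have hterm2 : ∀ x : Fin 1,
        Lf (σ i (finSumFinEquiv (Sum.inr x))) * F (finSumFinEquiv (Sum.inr x))
        = X i * g := by
      intro x
      have h1 : σ i (finSumFinEquiv (Sum.inr x)) = fun a => if a = i then (1:ℂ) else 0 := by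
        rw [hσ]
        simp
      have h2 : F (finSumFinEquiv (Sum.inr x)) = g := by
        rw [hF]
        simp
      rw [h1, h2]
      congr 1
      rw [Lf]
      rw [Finset.sum_eq_single i]
      · simp
      · intro b _ hb
        rw [if_neg hb, zero_smul]
      · intro habs
        exact absurd (Finset.mem_univ i) habs
    rw [Finset.sum_congr rfl (fun j' _ => hterm1 j'),
        Finset.sum_congr rfl (fun x _ => hterm2 x)]
    have hsum1 : ∑ j' : Fin P, ∑ a, c i (j', a) • (f j' * X a) = g * X i := by
      have hx := hc i
      rw [Fintype.sum_prod_type] at hx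
      exact hx
    rw [Finset.sum_neg_distrib, hsum1]
    simp [mul_comm]
  -- linear independence of the syzygies
  have hσind : LinearIndependent ℂ σ := by
    rw [Fintype.linearIndependent_iff]
    intro d hd i₀
    have := congrFun (congrFun hd (finSumFinEquiv (Sum.inr 0))) i₀
    have hsimp : ∀ i, σ i (finSumFinEquiv (Sum.inr 0)) i₀ = if i₀ = i then (1:ℂ) else 0 := by
      intro i
      rw [hσ]
      simp
    rw [Finset.sum_apply, Finset.sum_apply] at this
    simp only [Pi.smul_apply, smul_eq_mul, hsimp, Pi.zero_apply] at this
    simp only [mul_ite, mul_one, mul_zero, Finset.sum_ite_eq, Finset.mem_univ,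
      if_true] at this
    exact this
  have hbound := syz_bound F hFind σ hsyz hσind
  have : (P+1) * ((P+1) - 1) = P^2 + P := by
    simp only [Nat.add_sub_cancel]
    ring
  omega
end LinForms
end
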